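/- arXiv:2309.07785 — 6 statements merged into one kernel-verified Lean document; each statement's English description precedes it below -/
import Mathlib

section
/- For any integer partition π, the BG-rank of π, defined as (number of odd-indexed odd parts) minus (number of even-indexed odd parts), equals r₀ − r₁, where r₀ (resp. r₁) is the number of cells (i,j) in the Young diagram of π with i+j even (resp. i+j odd) (using 0-indexed rows and columns, i.e., the 2-residue Ferrers diagram filling with 0 in position (i,j) when i+j is even). -/
open Finset PowerSeries

/-- A partition represented as a non-increasing list of positive integers. -/
def IsPartitionList (L : List ℕ) : Prop :=
  L.Pairwise (· ≥ ·) ∧ ∀ x ∈ L, 0 < x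

/-- A partition into distinct parts (strict partition). -/
def IsStrictPartitionList (L : List ℕ) : Prop :=
  L.Pairwise (· > ·) ∧ ∀ x ∈ L, 0 < x

/-- BG-rank: (# odd parts in odd (1-based) positions) − (# odd parts in even positions). -/
def bgRank (L : List ℕ) : ℤ :=
  (((L.zipIdx.map Prod.swap).filter (fun p => p.2 % 2 == 1 && p.1 % 2 == 0)).length : ℤ) -
  (((L.zipIdx.map Prod.swap).filter (fun p => p.2 % 2 == 1 && p.1 % 2 == 1)).length : ℤ)

/-- Length of the `j`-th (1-based) column of the shifted Young diagram of `L`: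
row `i` (1-based) occupies columns `i, …, i + λ_i - 1`. -/
def shiftedCol (L : List ℕ) (j : ℕ) : ℕ :=
  ((Finset.range L.length).filter (fun i => i + 1 ≤ j ∧ j ≤ i + L.getD i 0)).card

/-- Alternating sum `∑_{i=1}^{m} (-1)^i c_i` of shifted column lengths. -/
def altColSum (L : List ℕ) (m : ℕ) : ℤ :=
  ∑ i ∈ Finset.range m, (-1 : ℤ) ^ (i + 1) * (shiftedCol L (i + 1) : ℤ)

/-- An (a,b)-sequence: `d_i = a + i` for `1 ≤ i ≤ b`, non-increasing from index `b`,
positive entries, and alternating sum zero. (0-based indexing via `getD`.) -/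
def IsABSeq (a b : ℕ) (d : List ℕ) : Prop :=
  1 ≤ b ∧ b ≤ d.length ∧ (∀ x ∈ d, 0 < x) ∧
  (∀ i < b, d.getD i 0 = a + i + 1) ∧
  (∀ i j, b - 1 ≤ i → i ≤ j → j < d.length → d.getD j 0 ≤ d.getD i 0) ∧
  (∑ i ∈ Finset.range d.length, (-1 : ℤ) ^ (i + 1) * (d.getD i 0 : ℤ)) = 0

/-- The quantities `b_i`: `b_1 = d_1`, `b_i = d_i - b_{i-1}` (0-based: `bAux d (i-1) = b_i`). -/
def bAux (d : List ℕ) : ℕ → ℤ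
  | 0 => (d.getD 0 0 : ℤ)
  | n + 1 => (d.getD (n + 1) 0 : ℤ) - bAux d n

/-- The q-Pochhammer symbol `(q²; q²)_n` as a power series in `q`. -/
noncomputable def qq2Poch (n : ℕ) : PowerSeries ℚ :=
  ∏ i ∈ Finset.range n, (1 - (PowerSeries.X : PowerSeries ℚ) ^ (2 * (i + 1)))

/-- The Gaussian binomial coefficient `[m choose n]_{q²}` as a power series in `q`,
zero unless `0 ≤ n ≤ m`. -/
noncomputable def gaussBinom2 (m : ℕ) (n : ℤ) : PowerSeries ℚ :=
  if 0 ≤ n ∧ n ≤ (m : ℤ) then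
    qq2Poch m * (qq2Poch n.toNat * qq2Poch (m - n.toNat))⁻¹
  else 0

lemma rowA (i n : ℕ) :
    (((Finset.range n).filter (fun j => (i + j) % 2 = 0)).card : ℤ) -
    (((Finset.range n).filter (fun j => (i + j) % 2 = 1)).card : ℤ)
    = (-1 : ℤ) ^ i * (n % 2) := by
  rw [Finset.card_filter, Finset.card_filter]
  push_cast
  rw [← Finset.sum_sub_distrib]
  have h : ∀ j ∈ Finset.range n,
      ((if (i + j) % 2 = 0 then (1:ℤ) else 0) - (if (i + j) % 2 = 1 then (1:ℤ) else 0))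
      = (-1:ℤ)^i * (-1:ℤ)^j := by
    intro j _
    rw [← pow_add]
    rcases Nat.even_or_odd (i + j) with hp | hp
    · rw [hp.neg_one_pow]
      simp [Nat.even_iff.mp hp]
    · rw [hp.neg_one_pow]
      simp [Nat.odd_iff.mp hp]
  rw [Finset.sum_congr rfl h, ← Finset.mul_sum, neg_one_geom_sum]
  congr 1
  rcases Nat.even_or_odd n with hn | hn
  · have h2 := Nat.even_iff.mp hn
    simp only [if_pos hn]
    omega
  · have h2 := Nat.odd_iff.mp hn
    simp only [if_neg (Nat.not_even_iff_odd.mpr hn)]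
    omega

lemma enumFromLem : ∀ (k : ℕ) (L : List ℕ),
    (((((L.zipIdx k).map Prod.swap).filter (fun p => p.2 % 2 == 1 && p.1 % 2 == 0)).length : ℤ) -
     ((((L.zipIdx k).map Prod.swap).filter (fun p => p.2 % 2 == 1 && p.1 % 2 == 1)).length : ℤ))
    = ∑ i ∈ Finset.range L.length, (-1:ℤ)^(k+i) * (L.getD i 0 % 2)
  | k, [] => by simp
  | k, a :: L => by
    rw [List.zipIdx_cons, List.map_cons]
    simp only [List.length_cons]
    rw [Finset.sum_range_succ']
    simp only [List.getD_cons_succ, List.getD_cons_zero, Nat.add_zero]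
    have IH := enumFromLem (k+1) L
    have hsum : ∑ i ∈ Finset.range L.length, (-1:ℤ)^(k+(i+1)) * (L.getD i 0 % 2)
        = ∑ i ∈ Finset.range L.length, (-1:ℤ)^(k+1+i) * (L.getD i 0 % 2) := by
      apply Finset.sum_congr rfl
      intro i _
      ring_nf
    rw [hsum, ← IH]
    simp only [List.filter_cons]
    rcases Nat.even_or_odd a with ha | ha <;> rcases Nat.even_or_odd k with hk | hk
    · have ha' := Nat.even_iff.mp ha
      simp [ha']
      omega
    · have ha' := Nat.even_iff.mp ha
      simp [ha']
      omega
    · have ha' := Nat.odd_iff.mp ha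
      have hk' := Nat.even_iff.mp hk
      have h1 : (-1:ℤ)^k = 1 := hk.neg_one_pow
      simp [ha', hk', h1]
      omega
    · have ha' := Nat.odd_iff.mp ha
      have hk' := Nat.odd_iff.mp hk
      have h1 : (-1:ℤ)^k = -1 := hk.neg_one_pow
      simp [ha', hk', h1]
      omega

/-- BG-rank equals r₀ − r₁, the difference of counts of cells (i,j)
(0-indexed) of the Young diagram with i+j even resp. odd. -/
theorem bgRank_eq_residue_difference (L : List ℕ) (hL : IsPartitionList L) :
    bgRank L =
      ((∑ i ∈ Finset.range L.length,
          ((Finset.range (L.getD i 0)).filter (fun j => (i + j) % 2 = 0)).card : ℕ) : ℤ) -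
      ((∑ i ∈ Finset.range L.length,
          ((Finset.range (L.getD i 0)).filter (fun j => (i + j) % 2 = 1)).card : ℕ) : ℤ) := by
  have h1 := enumFromLem 0 L
  simp only [zero_add] at h1
  unfold bgRank
  rw [show L.zipIdx.map Prod.swap = (L.zipIdx 0).map Prod.swap from rfl, h1]
  push_cast
  rw [← Finset.sum_sub_distrib]
  apply Finset.sum_congr rfl
  intro i _
  exact (rowA i (L.getD i 0)).symm
end

section
/- For any nonnegative integer N, integer k, and ν ∈ {0,1}, the generating function B_{2N+ν}(k,q) for partitions into distinct parts, each part at most 2N+ν, with BG-rank equal to k, satisfies B_{2N+ν}(k,q) = q^{2k²−k} · [2N+ν choose N+k]_{q²}, where [m choose n]_q denotes the Gaussian binomial coefficient. -/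
open Finset PowerSeries

/-- Generating function for partitions into distinct parts, each at most `M`,
with BG-rank equal to `k`. -/
noncomputable def strictBGgf (M : ℕ) (k : ℤ) : PowerSeries ℚ :=
  PowerSeries.mk fun n =>
    (Set.ncard {L : List ℕ | IsStrictPartitionList L ∧ (∀ x ∈ L, x ≤ M) ∧
        L.sum = n ∧ bgRank L = k} : ℚ)

theorem bgRank_cons (a : ℕ) (T : List ℕ) :
    bgRank (a :: T) = ((a : ℤ) % 2) - bgRank T := by
  have hmap : (a :: T).zipIdx.map Prod.swap = (0, a) :: (T.zipIdx.map Prod.swap).map (Prod.map (· + 1) id) := by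
    simp only [List.zipIdx_cons', List.map_cons, List.map_map]; rfl
  have key : ∀ r s : ℕ, (r = 0 ∧ s = 1) ∨ (r = 1 ∧ s = 0) → (((T.zipIdx.map Prod.swap).map (Prod.map (· + 1) id)).filter
      (fun p => p.2 % 2 == 1 && p.1 % 2 == r)).length =
      (((T.zipIdx.map Prod.swap).filter (fun p => p.2 % 2 == 1 && p.1 % 2 == s)).length) := by
    intro r s hrs
    rw [List.filter_map, List.length_map]
    congr 1
    apply List.filter_congr
    intro p _
    show (p.2 % 2 == 1 && (p.1 + 1) % 2 == r) = (p.2 % 2 == 1 && p.1 % 2 == s)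
    rcases Nat.mod_two_eq_zero_or_one p.1 with h | h <;>
      rcases hrs with ⟨h1, h2⟩ | ⟨h1, h2⟩ <;>
      simp [Nat.add_mod, h, h1, h2]
  unfold bgRank
  rw [hmap]
  generalize List.map Prod.swap T.zipIdx = E at key ⊢
  rcases Nat.mod_two_eq_zero_or_one a with h | h <;>
    simp only [List.filter_cons, h] <;> norm_num <;>
    rw [key 0 1 (by omega), key 1 0 (by omega)] <;>
    push_cast [h] <;> omega

instance : IsAntisymm ℕ (· > ·) := ⟨fun _ _ h1 h2 => absurd h2 (lt_asymm h1)⟩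

theorem finS (s : Set (List ℕ)) (n : ℕ) (hs : ∀ L ∈ s, IsStrictPartitionList L ∧ L.sum = n) :
    s.Finite := by
  apply Set.Finite.of_finite_image (f := List.toFinset)
  · apply Set.Finite.subset (Finset.finite_toSet ((Finset.range (n+1)).powerset))
    rintro t ⟨L, hL, rfl⟩
    simp only [Finset.coe_powerset, Set.mem_preimage, Finset.coe_range]
    intro x hx
    simp only [Finset.mem_coe, List.mem_toFinset] at hx
    have := (hs L hL).2
    have hle : x ≤ L.sum := List.single_le_sum (fun y _ => Nat.zero_le y) x hx
    simp only [Set.mem_Iio]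
    omega
  · intro L1 h1 L2 h2 he
    have s1 := (hs L1 h1).1.1
    have s2 := (hs L2 h2).1.1
    exact List.Perm.eq_of_pairwise' s1 s2
      (List.perm_of_nodup_nodup_toFinset_eq s1.nodup s2.nodup he)

def S (M : ℕ) (k : ℤ) (n : ℕ) : Set (List ℕ) :=
  {L | IsStrictPartitionList L ∧ (∀ x ∈ L, x ≤ M) ∧ L.sum = n ∧ bgRank L = k}

theorem finS' (M : ℕ) (k : ℤ) (n : ℕ) : (S M k n).Finite :=
  finS _ n (fun L hL => ⟨hL.1, hL.2.2.1⟩)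

theorem S_split (M : ℕ) (k : ℤ) (n : ℕ) (hn : M + 1 ≤ n) :
    S (M+1) k n = S M k n ∪ (List.cons (M+1)) ''
      S M ((((M+1) % 2 : ℕ) : ℤ) - k) (n - (M+1)) := by
  ext L
  constructor
  · rintro ⟨⟨hsort, hpos⟩, hle, hsum, hbg⟩
    by_cases hm : (M+1) ∈ L
    · right
      obtain ⟨h, T, rfl⟩ : ∃ h T, L = h :: T := by
        cases L with
        | nil => simp at hm
        | cons h T => exact ⟨h, T, rfl⟩
      have hhT := List.pairwise_cons.mp hsort
      have hh : h = M + 1 := by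
        rcases List.mem_cons.mp hm with h1 | h1
        · omega
        · have := hhT.1 _ h1
          have := hle h (List.mem_cons_self)
          omega
      subst hh
      refine ⟨T, ⟨⟨hhT.2, fun x hx => hpos x (List.mem_cons_of_mem _ hx)⟩,
        fun x hx => by have := hhT.1 x hx; omega, ?_, ?_⟩, rfl⟩
      · simp only [List.sum_cons] at hsum; omega
      · rw [bgRank_cons] at hbg
        push_cast at hbg ⊢
        omega
    · left
      exact ⟨⟨hsort, hpos⟩, fun x hx => by
        have := hle x hx
        rcases Nat.lt_or_ge x (M+1) with h1 | h1
        · omega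
        · have hxeq : x = M + 1 := by omega
          exact absurd (hxeq ▸ hx) hm,
        hsum, hbg⟩
  · rintro (⟨⟨hsort, hpos⟩, hle, hsum, hbg⟩ | ⟨T, ⟨⟨hsort, hpos⟩, hle, hsum, hbg⟩, rfl⟩)
    · exact ⟨⟨hsort, hpos⟩, fun x hx => le_trans (hle x hx) (by omega), hsum, hbg⟩
    · refine ⟨⟨List.pairwise_cons.mpr ⟨fun x hx => by have := hle x hx; omega, hsort⟩,
        fun x hx => ?_⟩, fun x hx => ?_, ?_, ?_⟩
      · rcases List.mem_cons.mp hx with h1 | h1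
        · omega
        · exact hpos x h1
      · rcases List.mem_cons.mp hx with h1 | h1
        · omega
        · have := hle x h1; omega
      · simp only [List.sum_cons]; omega
      · rw [bgRank_cons]
        push_cast at hbg ⊢
        omega

theorem S_split' (M : ℕ) (k : ℤ) (n : ℕ) (hn : n < M + 1) :
    S (M+1) k n = S M k n := by
  ext L
  constructor
  · rintro ⟨⟨hsort, hpos⟩, hle, hsum, hbg⟩
    refine ⟨⟨hsort, hpos⟩, fun x hx => ?_, hsum, hbg⟩
    have h1 := hle x hx
    have h2 : x ≤ L.sum := List.single_le_sum (fun y _ => Nat.zero_le y) x hx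
    omega
  · rintro ⟨⟨hsort, hpos⟩, hle, hsum, hbg⟩
    exact ⟨⟨hsort, hpos⟩, fun x hx => le_trans (hle x hx) (by omega), hsum, hbg⟩

theorem ncard_step (M : ℕ) (k : ℤ) (n : ℕ) :
    (S (M+1) k n).ncard = (S M k n).ncard +
      if M + 1 ≤ n then (S M ((((M+1) % 2 : ℕ) : ℤ) - k) (n - (M+1))).ncard else 0 := by
  split_ifs with hn
  · have hd : Disjoint (S M k n) (List.cons (M+1) '' S M ((((M+1) % 2 : ℕ) : ℤ) - k) (n - (M+1))) := by
      rw [Set.disjoint_left]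
      rintro L ⟨_, hle, _, _⟩ ⟨T, _, rfl⟩
      have := hle (M+1) (List.mem_cons_self)
      omega
    rw [S_split M k n hn,
      Set.ncard_union_eq hd (finS' M k n) (Set.Finite.image _ (finS' _ _ _)),
      Set.ncard_image_of_injective _ List.cons_injective]
  · rw [S_split' M k n (by omega)]; omega

theorem coeff_strictBGgf (M : ℕ) (k : ℤ) (n : ℕ) :
    (PowerSeries.coeff n) (strictBGgf M k) = ((S M k n).ncard : ℚ) := by
  rw [strictBGgf, coeff_mk]; rfl

theorem gf_step (M : ℕ) (k : ℤ) :
    strictBGgf (M+1) k = strictBGgf M k +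
      X ^ (M+1) * strictBGgf M ((((M+1) % 2 : ℕ) : ℤ) - k) := by
  ext n
  rw [map_add, coeff_strictBGgf, coeff_strictBGgf, coeff_X_pow_mul']
  rw [ncard_step]
  split_ifs with h
  · rw [coeff_strictBGgf]; push_cast; ring
  · push_cast; ring

theorem gf_zero (M : ℕ) (k : ℤ) (hM : M = 0) :
    strictBGgf M k = if k = 0 then 1 else 0 := by
  subst hM
  have hset : ∀ n : ℕ, S 0 k n = if n = 0 ∧ k = 0 then {([] : List ℕ)} else ∅ := by
    intro n
    split_ifs with h
    · ext L
      constructor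
      · rintro ⟨⟨_, hpos⟩, hle, hsum, hbg⟩
        rcases L with _ | ⟨a, T⟩
        · rfl
        · have := hpos a (List.mem_cons_self)
          have := hle a (List.mem_cons_self)
          omega
      · rintro rfl
        exact ⟨⟨List.Pairwise.nil, by simp⟩, by simp, by simp [h.1], by simp [bgRank, h.2]⟩
    · ext L
      simp only [Set.mem_empty_iff_false, iff_false]
      rintro ⟨⟨_, hpos⟩, hle, hsum, hbg⟩
      have hLnil : L = [] := by
        rcases L with _ | ⟨a, T⟩
        · rfl
        · have := hpos a (List.mem_cons_self)
          have := hle a (List.mem_cons_self)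
          omega
      subst hLnil
      simp only [List.sum_nil] at hsum
      have : bgRank [] = 0 := by simp [bgRank]
      rw [this] at hbg
      exact h ⟨hsum.symm, hbg.symm⟩
  ext n
  rw [coeff_strictBGgf, hset]
  split_ifs with h1 h2 h2
  · simp [h1.1, h2]
  · exact absurd h1.2 h2
  · rcases Nat.eq_zero_or_pos n with rfl | hn
    · exact absurd ⟨rfl, h2⟩ h1
    · simp [PowerSeries.coeff_one, hn.ne']
  · simp

theorem cc_qq2Poch (n : ℕ) : constantCoeff (qq2Poch n) = 1 := by
  rw [qq2Poch, map_prod]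
  apply Finset.prod_eq_one
  intro i _
  rw [map_sub, map_one, map_pow, constantCoeff_X, zero_pow (by omega), sub_zero]

theorem qq2Poch_ne (n : ℕ) : (qq2Poch n : PowerSeries ℚ) ≠ 0 := by
  intro h
  have := cc_qq2Poch n
  rw [h, map_zero] at this
  exact one_ne_zero this.symm

theorem qq2Poch_zero : qq2Poch 0 = 1 := Finset.prod_range_zero _

theorem qq2Poch_succ (n : ℕ) :
    qq2Poch (n + 1) = qq2Poch n * (1 - (PowerSeries.X : PowerSeries ℚ) ^ (2 * (n + 1))) :=
  Finset.prod_range_succ _ _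

theorem gaussBinom2_mul (m : ℕ) (n : ℤ) (h0 : 0 ≤ n) (h1 : n ≤ (m : ℤ)) :
    gaussBinom2 m n * (qq2Poch n.toNat * qq2Poch (m - n.toNat)) = qq2Poch m := by
  rw [gaussBinom2, if_pos ⟨h0, h1⟩, mul_assoc,
    PowerSeries.inv_mul_cancel _ (by rw [map_mul, cc_qq2Poch, cc_qq2Poch, mul_one]; exact one_ne_zero),
    mul_one]

theorem gaussBinom2_of_not (m : ℕ) (n : ℤ) (h : ¬(0 ≤ n ∧ n ≤ (m : ℤ))) :
    gaussBinom2 m n = 0 := if_neg h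

theorem gaussBinom2_zero_right (m : ℕ) : gaussBinom2 m 0 = 1 := by
  rw [gaussBinom2, if_pos ⟨le_refl _, Int.ofNat_nonneg m⟩]
  simp only [Int.toNat_zero, qq2Poch_zero, Nat.sub_zero, one_mul]
  exact PowerSeries.mul_inv_cancel _ (by rw [cc_qq2Poch]; exact one_ne_zero)

theorem gaussBinom2_self (m : ℕ) : gaussBinom2 m m = 1 := by
  rw [gaussBinom2, if_pos ⟨Int.ofNat_nonneg m, le_refl _⟩]
  simp only [Int.toNat_natCast, Nat.sub_self, qq2Poch_zero, mul_one]
  exact PowerSeries.mul_inv_cancel _ (by rw [cc_qq2Poch]; exact one_ne_zero)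

theorem gaussBinom2_symm (m : ℕ) (n : ℤ) : gaussBinom2 m n = gaussBinom2 m ((m : ℤ) - n) := by
  by_cases h : 0 ≤ n ∧ n ≤ (m : ℤ)
  · rw [gaussBinom2, gaussBinom2, if_pos h, if_pos ⟨by omega, by omega⟩]
    have h1 : ((m : ℤ) - n).toNat = m - n.toNat := by omega
    have h2 : m - (m - n.toNat) = n.toNat := by omega
    rw [h1, h2, mul_comm (qq2Poch (m - n.toNat))]
  · rw [gaussBinom2_of_not _ _ h, gaussBinom2_of_not _ _ (by omega)]

-- cancellation
theorem ps_cancel {f g u : PowerSeries ℚ} (hu : u ≠ 0) (h : f * u = g * u) : f = g :=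
  mul_right_cancel₀ hu h

theorem gaussBinom2_pascal1 (m : ℕ) (n : ℤ) :
    gaussBinom2 (m + 1) n = gaussBinom2 m n +
      PowerSeries.X ^ (2 * ((m : ℤ) + 1 - n)).toNat * gaussBinom2 m (n - 1) := by
  rcases lt_trichotomy n 0 with hn | hn | hn
  · rw [gaussBinom2_of_not _ _ (by omega), gaussBinom2_of_not _ _ (by omega),
      gaussBinom2_of_not _ _ (by omega)]
    ring
  · subst hn
    rw [gaussBinom2_zero_right, gaussBinom2_zero_right, gaussBinom2_of_not _ _ (by omega)]
    ring
  · by_cases hm : n ≤ m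
    · -- interior: 1 ≤ n ≤ m
      set a := n.toNat with ha
      have ha1 : 1 ≤ a := by omega
      have ham : a ≤ m := by omega
      have hb : (m + 1) - a = (m - a) + 1 := by omega
      have hexp : (2 * ((m : ℤ) + 1 - n)).toNat = 2 * ((m - a) + 1) := by omega
      have hna : (n-1).toNat = a - 1 := by omega
      have hma : m - (a - 1) = (m - a) + 1 := by omega
      have e1 : gaussBinom2 (m+1) n * (qq2Poch a * qq2Poch ((m-a)+1)) = qq2Poch (m+1) := by
        have := gaussBinom2_mul (m+1) n (by omega) (by push_cast; omega)
        rwa [← ha, hb] at this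
      have e2 : gaussBinom2 m n * (qq2Poch a * qq2Poch (m-a)) = qq2Poch m :=
        gaussBinom2_mul m n (by omega) (by push_cast; omega)
      have e3 : gaussBinom2 m (n-1) * (qq2Poch (a-1) * qq2Poch ((m-a)+1)) = qq2Poch m := by
        have := gaussBinom2_mul m (n-1) (by omega) (by push_cast; omega)
        rwa [hna, hma] at this
      have ha' : qq2Poch a = qq2Poch (a-1) * (1 - (PowerSeries.X : PowerSeries ℚ) ^ (2 * a)) := by
        have := qq2Poch_succ (a - 1)
        rwa [Nat.sub_add_cancel ha1] at this
      have qs : qq2Poch ((m-a)+1) = qq2Poch (m-a) * (1 - (PowerSeries.X : PowerSeries ℚ) ^ (2 * ((m-a)+1))) :=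
        qq2Poch_succ (m-a)
      have qm : qq2Poch (m+1) = qq2Poch m * (1 - (PowerSeries.X : PowerSeries ℚ) ^ (2 * (m+1))) :=
        qq2Poch_succ m
      have hX : (PowerSeries.X : PowerSeries ℚ) ^ (2*(m+1)) = X ^ (2*((m-a)+1)) * X ^ (2*a) := by
        rw [← pow_add]
        congr 1
        omega
      rw [hexp]
      apply ps_cancel (u := qq2Poch a * qq2Poch ((m - a) + 1))
        (by intro h
            rcases mul_eq_zero.mp h with h | h
            exacts [qq2Poch_ne _ h, qq2Poch_ne _ h])
      linear_combination e1 + qm - (qq2Poch m) * hX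
        - (gaussBinom2 m n * qq2Poch a) * qs
        - (1 - (PowerSeries.X : PowerSeries ℚ) ^ (2*((m-a)+1))) * e2
        - ((PowerSeries.X : PowerSeries ℚ) ^ (2*((m-a)+1)) * gaussBinom2 m (n-1) * qq2Poch ((m-a)+1)) * ha'
        - ((PowerSeries.X : PowerSeries ℚ) ^ (2*((m-a)+1)) * (1 - (PowerSeries.X : PowerSeries ℚ) ^ (2*a))) * e3
    · rw [gaussBinom2_of_not m n (by omega)]
      by_cases hm1 : n = m + 1
      · subst hm1
        have g1 : gaussBinom2 (m+1) ((m:ℤ)+1) = 1 := by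
          have := gaussBinom2_self (m+1)
          push_cast at this
          exact this
        have g2 : gaussBinom2 m (((m:ℤ)+1) - 1) = 1 := by
          rw [show ((m:ℤ)+1) - 1 = (m:ℤ) by ring, gaussBinom2_self]
        rw [g1, g2, show (2 * ((m:ℤ) + 1 - ((m:ℤ)+1))).toNat = 0 by omega, pow_zero]
        ring
      · rw [gaussBinom2_of_not _ _ (by omega), gaussBinom2_of_not _ _ (by omega)]
        ring

theorem gaussBinom2_pascal2 (m : ℕ) (n : ℤ) :
    gaussBinom2 (m + 1) n = gaussBinom2 m (n - 1) +
      (PowerSeries.X : PowerSeries ℚ) ^ (2 * n).toNat * gaussBinom2 m n := by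
  have h1 := gaussBinom2_symm (m+1) n
  have h2 := gaussBinom2_pascal1 m ((m : ℤ) + 1 - n)
  push_cast at h1
  rw [h1, h2]
  congr 1
  · rw [gaussBinom2_symm m (n-1), show (m:ℤ) - (n-1) = (m:ℤ)+1-n by ring]
  · congr 1
    · congr 1
      omega
    · rw [gaussBinom2_symm m n, show (m:ℤ) - n = (m:ℤ)+1-n-1 by ring]


theorem tk (k : ℤ) : 0 ≤ 2 * k ^ 2 - k := by nlinarith [sq_nonneg k, sq_nonneg (k-1)]

theorem main_aux (M : ℕ) : ∀ k : ℤ, strictBGgf M k =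
    (PowerSeries.X : PowerSeries ℚ) ^ (2 * k ^ 2 - k).toNat *
      gaussBinom2 M (((M / 2 : ℕ) : ℤ) + k) := by
  induction M with
  | zero =>
    intro k
    rw [gf_zero 0 k rfl]
    by_cases hk : k = 0
    · subst hk
      simp only [if_pos rfl]
      norm_num [gaussBinom2_zero_right]
    · rw [if_neg hk, gaussBinom2_of_not 0 _ (by simp; omega)]
      ring
  | succ M IH =>
    intro k
    rw [gf_step M k]
    rcases Nat.even_or_odd M with ⟨N, hN⟩ | ⟨N, hN⟩
    · -- M = 2N even, M+1 odd
      have hM : M = 2 * N := by omega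
      subst hM
      have hmod : (((2*N+1) % 2 : ℕ) : ℤ) = 1 := by omega
      have hdiv1 : ((2*N+1) / 2 : ℕ) = N := by omega
      have hdiv0 : ((2*N) / 2 : ℕ) = N := by omega
      rw [hmod, IH k, IH (1 - k), hdiv1, hdiv0]
      have hp := gaussBinom2_pascal1 (2*N) ((N : ℤ) + k)
      rw [hp]
      have hsymm : gaussBinom2 (2*N) ((N:ℤ) + (1 - k)) = gaussBinom2 (2*N) ((N:ℤ) + k - 1) := by
        rw [gaussBinom2_symm (2*N) ((N:ℤ) + (1-k))]
        congr 1
        push_cast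
        ring
      rw [hsymm]
      by_cases hr : 0 ≤ (N:ℤ) + 1 - k
      · have hee : (2 * ((2*N : ℕ) + 1 - ((N:ℤ) + k))).toNat = (2 * ((N:ℤ) + 1 - k)).toNat := by
          push_cast; omega
        rw [hee]
        have hs : 2*(1-k)^2 - (1-k) = 2*k^2 - k + 1 - 2*k := by ring
        rw [hs]
        obtain ⟨t, ht0, hteq⟩ : ∃ t : ℤ, 0 ≤ t ∧ 2*k^2 - k = t := ⟨2*k^2-k, tk k, rfl⟩
        rw [hteq]
        have hw : 0 ≤ t + 1 - 2*k := by
          rw [← hteq]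
          have := tk (1 - k)
          nlinarith
        have hexp : t.toNat + (2 * ((N:ℤ) + 1 - k)).toNat =
            2*N + 1 + (t + 1 - 2*k).toNat := by clear hteq; omega
        rw [mul_add]
        congr 1
        rw [← mul_assoc, ← pow_add, ← mul_assoc, ← pow_add, hexp]
      · have hz1 : gaussBinom2 (2*N) ((N:ℤ) + k - 1) = 0 :=
          gaussBinom2_of_not _ _ (by push_cast; omega)
        have hz2 : gaussBinom2 (2*N) ((N:ℤ) + k - 1) = 0 := hz1
        rw [hz1]
        ring
    · -- M = 2N+1 odd, M+1 even
      have hM : M = 2 * N + 1 := by omega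
      subst hM
      have hmod : (((2*N+1+1) % 2 : ℕ) : ℤ) = 0 := by omega
      have hdiv1 : ((2*N+1+1) / 2 : ℕ) = N + 1 := by omega
      have hdiv0 : ((2*N+1) / 2 : ℕ) = N := by omega
      rw [hmod, IH k, IH (0 - k), hdiv1, hdiv0]
      have hp := gaussBinom2_pascal2 (2*N+1) (((N:ℕ) : ℤ) + 1 + k)
      have hgoal : ((N + 1 : ℕ) : ℤ) + k = ((N:ℕ) : ℤ) + 1 + k := by push_cast; ring
      rw [hgoal, hp]
      have hn1 : ((N:ℕ) : ℤ) + 1 + k - 1 = (N : ℤ) + k := by ring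
      rw [hn1]
      have hsymm : gaussBinom2 (2*N+1) ((N:ℤ) + (0 - k)) = gaussBinom2 (2*N+1) ((N:ℤ) + 1 + k) := by
        rw [gaussBinom2_symm (2*N+1) ((N:ℤ) + (0-k))]
        congr 1
        push_cast
        ring
      rw [hsymm]
      by_cases hr : 0 ≤ (N:ℤ) + 1 + k
      · have hs : 2*(0-k)^2 - (0-k) = 2*k^2 - k + 2*k := by ring
        rw [hs]
        obtain ⟨t, ht0, hteq⟩ : ∃ t : ℤ, 0 ≤ t ∧ 2*k^2 - k = t := ⟨2*k^2-k, tk k, rfl⟩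
        rw [hteq]
        have hw : 0 ≤ t + 2*k := by
          rw [← hteq]
          have := tk (-k)
          nlinarith
        have hexp : t.toNat + (2 * ((N:ℤ) + 1 + k)).toNat =
            2*N + 1 + 1 + (t + 2*k).toNat := by clear hteq; omega
        rw [mul_add]
        congr 1
        rw [← mul_assoc, ← pow_add, ← mul_assoc, ← pow_add, hexp]
      · have hz1 : gaussBinom2 (2*N+1) ((N:ℤ) + 1 + k) = 0 :=
          gaussBinom2_of_not _ _ (by push_cast; omega)
        rw [hz1]
        ring


/-- Berkovich–Uncu: B_{2N+ν}(k,q) = q^{2k²−k} [2N+ν choose N+k]_{q²}. -/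
theorem berkovich_uncu (N : ℕ) (k : ℤ) (ν : ℕ) (hν : ν = 0 ∨ ν = 1) :
    strictBGgf (2 * N + ν) k =
      (PowerSeries.X : PowerSeries ℚ) ^ (2 * k ^ 2 - k).toNat *
        gaussBinom2 (2 * N + ν) ((N : ℤ) + k) := by
  have hdiv : ((2 * N + ν) / 2 : ℕ) = N := by omega
  rw [main_aux (2 * N + ν) k, hdiv]
end

section
/- For any integer k, the number of partitions of n into distinct parts with BG-rank equal to k is equal to the number of partitions of (n − 2k² + k)/2 into parts of unrestricted size, counted with all parts doubled; equivalently, Σ_n p_k^d(n) qⁿ = q^{2k²−k} / (q²;q²)_∞, where p_k^d(n) is the number of partitions of n into distinct parts with BG-rank k. -/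
open Finset PowerSeries

namespace BGaux

lemma getD_anti {L : List ℕ} (h : L.Pairwise (· ≥ ·)) {i j : ℕ} (hij : i ≤ j) :
    L.getD j 0 ≤ L.getD i 0 := by
  rcases lt_or_ge j L.length with hj | hj
  · have hi : i < L.length := lt_of_le_of_lt hij hj
    rcases eq_or_lt_of_le hij with rfl | hlt
    · exact le_refl _
    · have := (List.pairwise_iff_getElem.mp h) i j hi hj hlt
      rwa [L.getD_eq_getElem 0 hi, L.getD_eq_getElem 0 hj]
  · rw [List.getD_eq_default _ _ hj]
    exact Nat.zero_le _

lemma mem_le_head {L : List ℕ} (h : L.Pairwise (· ≥ ·)) {x : ℕ} (hx : x ∈ L) :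
    x ≤ L.getD 0 0 := by
  obtain ⟨i, hi, rfl⟩ := List.mem_iff_getElem.mp hx
  rw [← L.getD_eq_getElem 0 hi]
  exact getD_anti h (Nat.zero_le i)

lemma getD_le_of_forall {L : List ℕ} {a : ℕ} (h : ∀ x ∈ L, x ≤ a) (i : ℕ) :
    L.getD i 0 ≤ a := by
  rcases lt_or_ge i L.length with hi | hi
  · rw [L.getD_eq_getElem 0 hi]; exact h _ (L.getElem_mem hi)
  · rw [List.getD_eq_default _ _ hi]; exact Nat.zero_le _

/-- Galois: `i < countP (m ≤ ·) L ↔ m ≤ L[i]` for sorted desc `L`, `m ≥ 1`. -/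
lemma lt_countP_iff {L : List ℕ} (h : L.Pairwise (· ≥ ·)) {m : ℕ} (hm : 1 ≤ m) (i : ℕ) :
    i < L.countP (fun x => decide (m ≤ x)) ↔ m ≤ L.getD i 0 := by
  induction L generalizing i with
  | nil => simp; omega
  | cons a t ih =>
    have ht : t.Pairwise (· ≥ ·) := h.of_cons
    have hta : ∀ x ∈ t, x ≤ a := fun x hx => List.rel_of_pairwise_cons h hx
    cases i with
    | zero =>
      rw [List.getD_cons_zero]
      constructor
      · intro hlt
        by_contra hma
        have hz : t.countP (fun x => decide (m ≤ x)) = 0 :=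
          List.countP_eq_zero.mpr (fun x hx => by
            simp only [decide_eq_true_eq]; have := hta x hx; omega)
        rw [List.countP_cons, hz] at hlt
        simp only [decide_eq_true_eq] at hlt
        rw [if_neg hma] at hlt
        omega
      · intro hma
        have : 0 < (a :: t).countP (fun x => decide (m ≤ x)) :=
          List.countP_pos_iff.mpr ⟨a, List.mem_cons_self, by simpa using hma⟩
        omega
    | succ i =>
      rw [List.getD_cons_succ, List.countP_cons, ← ih ht i]
      simp only [decide_eq_true_eq]
      by_cases hma : m ≤ a
      · rw [if_pos hma]; omega
      · have hz : t.countP (fun x => decide (m ≤ x)) = 0 :=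
          List.countP_eq_zero.mpr (fun x hx => by
            simp only [decide_eq_true_eq]; have := hta x hx; omega)
        rw [if_neg hma, hz]; omega

/-- conjugate partition -/
def conj (L : List ℕ) : List ℕ :=
  (List.range (L.getD 0 0)).map (fun j => L.countP (fun x => decide (j + 1 ≤ x)))

lemma length_conj (L : List ℕ) : (conj L).length = L.getD 0 0 := by
  simp [conj]

lemma getD_range_map (f : ℕ → ℕ) (n j : ℕ) :
    ((List.range n).map f).getD j 0 = if j < n then f j else 0 := by
  rcases lt_or_ge j n with hj | hj
  · rw [List.getD_eq_getElem _ _ (by simpa using hj)]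
    simp [hj]
  · rw [List.getD_eq_default _ _ (by simpa using hj), if_neg (by omega)]

lemma getD_conj {L : List ℕ} (h : L.Pairwise (· ≥ ·)) (j : ℕ) :
    (conj L).getD j 0 = L.countP (fun x => decide (j + 1 ≤ x)) := by
  rw [conj, getD_range_map]
  split
  · rfl
  · next hj =>
    symm
    rw [List.countP_eq_zero]
    intro x hx
    have := mem_le_head h hx
    simp only [decide_eq_true_eq]
    omega

lemma conj_galois {L : List ℕ} (h : L.Pairwise (· ≥ ·)) (i j : ℕ) :
    i < (conj L).getD j 0 ↔ j < L.getD i 0 := by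
  rw [getD_conj h, lt_countP_iff h (by omega)]
  omega

lemma conj_sorted (L : List ℕ) : (conj L).Pairwise (· ≥ ·) := by
  rw [conj, List.pairwise_map]
  exact List.pairwise_lt_range.imp
    (fun {a b} hab => List.countP_mono_left (fun x _ hpx => by
      simp only [decide_eq_true_eq] at hpx ⊢; omega))

lemma conj_pos (L : List ℕ) : ∀ x ∈ conj L, 0 < x := by
  intro x hx
  rw [conj, List.mem_map] at hx
  obtain ⟨j, hj, rfl⟩ := hx
  rw [List.mem_range] at hj
  rw [List.countP_pos_iff]
  cases L with
  | nil => simp at hj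
  | cons a t =>
    exact ⟨a, List.mem_cons_self, by simp only [decide_eq_true_eq]; exact hj⟩

lemma getD_conj_conj {L : List ℕ} (h : L.Pairwise (· ≥ ·)) (i : ℕ) :
    (conj (conj L)).getD i 0 = L.getD i 0 := by
  have key : ∀ j, j < (conj (conj L)).getD i 0 ↔ j < L.getD i 0 := by
    intro j
    rw [conj_galois (conj_sorted L), conj_galois h]
  have h1 := key (L.getD i 0)
  have h2 := key ((conj (conj L)).getD i 0)
  omega

lemma eq_of_getD : ∀ {L M : List ℕ}, (∀ x ∈ L, 0 < x) → (∀ x ∈ M, 0 < x) →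
    (∀ i, L.getD i 0 = M.getD i 0) → L = M
  | [], [], _, _, _ => rfl
  | [], b :: M, _, hM, h => by
    have h0 := h 0
    simp at h0
    exact absurd (hM b (List.mem_cons_self)) (by omega)
  | a :: L, [], hL, _, h => by
    have h0 := h 0
    simp at h0
    exact absurd (hL a (List.mem_cons_self)) (by omega)
  | a :: L, b :: M, hL, hM, h => by
    have h0 := h 0
    simp at h0
    have : L = M := eq_of_getD (fun x hx => hL x (List.mem_cons_of_mem a hx))
      (fun x hx => hM x (List.mem_cons_of_mem b hx)) (fun i => h (i+1))
    rw [h0, this]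

lemma conj_conj {L : List ℕ} (h : L.Pairwise (· ≥ ·)) (hp : ∀ x ∈ L, 0 < x) :
    conj (conj L) = L :=
  eq_of_getD (conj_pos (conj L)) hp (getD_conj_conj h)

end BGaux

namespace BGaux

/-! ### sums -/

lemma list_sum_range (g : ℕ → ℕ) (n : ℕ) :
    ((List.range n).map g).sum = ∑ j ∈ Finset.range n, g j := rfl

lemma sum_countP_range : ∀ (L : List ℕ) (H : ℕ), (∀ x ∈ L, x ≤ H) →
    ((List.range H).map (fun j => L.countP (fun x => decide (j + 1 ≤ x)))).sum = L.sum := by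
  intro L
  induction L with
  | nil => intro H _; simp
  | cons a t ih =>
    intro H hH
    have ha : a ≤ H := hH a (List.mem_cons_self)
    have h1 : ∀ j, (a :: t).countP (fun x => decide (j + 1 ≤ x))
        = t.countP (fun x => decide (j + 1 ≤ x)) + (if j + 1 ≤ a then 1 else 0) := by
      intro j; rw [List.countP_cons]; simp
    simp only [h1]
    rw [List.sum_map_add, ih H (fun x hx => hH x (List.mem_cons_of_mem a hx))]
    have h2 : ((List.range H).map (fun j => if j + 1 ≤ a then 1 else 0)).sum = a := by
      rw [list_sum_range]
      rw [← Finset.card_filter]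
      have : (Finset.range H).filter (fun j => j + 1 ≤ a) = Finset.range a := by
        ext x; simp; omega
      rw [this, Finset.card_range]
    rw [h2, List.sum_cons]
    omega

lemma conj_sum {L : List ℕ} (h : L.Pairwise (· ≥ ·)) : (conj L).sum = L.sum :=
  sum_countP_range L _ (fun x hx => mem_le_head h hx)

lemma self_eq_range_map (L : List ℕ) : L = (List.range L.length).map (fun i => L.getD i 0) := by
  apply List.ext_getElem (by simp)
  intro n h1 h2
  simp only [List.getElem_map, List.getElem_range]
  rw [List.getD_eq_getElem _ _ h1]

lemma sum_eq_sum_getD (L : List ℕ) : L.sum = ∑ i ∈ Finset.range L.length, L.getD i 0 := by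
  conv_lhs => rw [self_eq_range_map L]
  rw [list_sum_range]

/-! ### sorting -/

def dsort (l : List ℕ) : List ℕ := l.mergeSort (fun a b => decide (a ≥ b))

lemma dsort_perm (l : List ℕ) : List.Perm (dsort l) l := List.mergeSort_perm l _

lemma dsort_sorted (l : List ℕ) : (dsort l).Pairwise (· ≥ ·) := by
  have := List.pairwise_mergeSort (le := fun a b : ℕ => decide (a ≥ b))
    (fun a b c hab hbc => by simp only [decide_eq_true_eq] at *; omega)
    (fun a b => by simp only [Bool.or_eq_true, decide_eq_true_eq]; omega) l
  exact this.imp (fun h => by simp only [decide_eq_true_eq] at h; exact h)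

lemma dsort_eq {l : List ℕ} (h : l.Pairwise (· ≥ ·)) : dsort l = l :=
  List.Perm.eq_of_pairwise (fun a b _ _ h1 h2 => Nat.le_antisymm h2 h1) (dsort_sorted l) h (dsort_perm l)

/-! ### odd/even split -/

def oddsOf (f : List ℕ) : List ℕ := f.filter (fun x => decide (x % 2 = 1))
def evensOf (f : List ℕ) : List ℕ := f.filter (fun x => decide (x % 2 = 0))

lemma odds_append_evens_perm (f : List ℕ) : List.Perm (oddsOf f ++ evensOf f) f := by
  have h := List.filter_append_perm (fun x => decide (x % 2 = 1)) f
  have h2 : f.filter (fun x => !decide (x % 2 = 1)) = evensOf f := by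
    apply List.filter_congr
    intro x _
    by_cases hx : x % 2 = 1 <;> simp [hx] <;> omega
  rwa [h2] at h

lemma odds_mem (f : List ℕ) : ∀ x ∈ oddsOf f, x % 2 = 1 := by
  intro x hx; have := List.of_mem_filter hx; simpa using this

lemma evens_mem (f : List ℕ) : ∀ x ∈ evensOf f, x % 2 = 0 := by
  intro x hx; have := List.of_mem_filter hx; simpa using this

lemma odds_sorted {f : List ℕ} (h : f.Pairwise (· ≥ ·)) : (oddsOf f).Pairwise (· ≥ ·) :=
  h.filter _

lemma evens_sorted {f : List ℕ} (h : f.Pairwise (· ≥ ·)) : (evensOf f).Pairwise (· ≥ ·) :=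
  h.filter _

lemma odds_evens_length (f : List ℕ) : (oddsOf f).length + (evensOf f).length = f.length := by
  have := (odds_append_evens_perm f).length_eq
  simpa using this

lemma odds_evens_sum (f : List ℕ) : (oddsOf f).sum + (evensOf f).sum = f.sum := by
  have := (odds_append_evens_perm f).sum_eq
  simpa using this

lemma oddsOf_dsort_append {o e : List ℕ} (ho : ∀ x ∈ o, x % 2 = 1) (he : ∀ x ∈ e, x % 2 = 0)
    (hos : o.Pairwise (· ≥ ·)) : oddsOf (dsort (o ++ e)) = o := by
  apply List.Perm.eq_of_pairwise (l₂ := o) (fun a b _ _ h1 h2 => Nat.le_antisymm h2 h1) ((dsort_sorted _).filter _) hos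
  have h1 : List.Perm (oddsOf (dsort (o ++ e))) (oddsOf (o ++ e)) := (dsort_perm _).filter _
  have h2 : oddsOf (o ++ e) = o := by
    rw [oddsOf, List.filter_append,
      List.filter_eq_self.mpr (fun a ha => by simp only [decide_eq_true_eq]; exact ho a ha),
      List.filter_eq_nil_iff.mpr
        (fun a ha => by simp only [decide_eq_true_eq]; have := he a ha; omega),
      List.append_nil]
  rw [h2] at h1; exact h1

lemma evensOf_dsort_append {o e : List ℕ} (ho : ∀ x ∈ o, x % 2 = 1) (he : ∀ x ∈ e, x % 2 = 0)
    (hes : e.Pairwise (· ≥ ·)) : evensOf (dsort (o ++ e)) = e := by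
  apply List.Perm.eq_of_pairwise (l₂ := e) (fun a b _ _ h1 h2 => Nat.le_antisymm h2 h1) ((dsort_sorted _).filter _) hes
  have h1 : List.Perm (evensOf (dsort (o ++ e))) (evensOf (o ++ e)) := (dsort_perm _).filter _
  have h2 : evensOf (o ++ e) = e := by
    rw [evensOf, List.filter_append,
      List.filter_eq_nil_iff.mpr
        (fun a ha => by simp only [decide_eq_true_eq]; have := ho a ha; omega),
      List.filter_eq_self.mpr (fun a ha => by simp only [decide_eq_true_eq]; exact he a ha),
      List.nil_append]
  rw [h2] at h1; exact h1

end BGaux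

namespace BGaux

/-! ### staircase -/

def addStair (f : List ℕ) : List ℕ :=
  (List.range f.length).map (fun i => f.getD i 0 + (f.length - i))

def stairSub (L : List ℕ) : List ℕ :=
  (List.range L.length).map (fun i => L.getD i 0 - (L.length - i))

lemma length_addStair (f : List ℕ) : (addStair f).length = f.length := by simp [addStair]

lemma length_stairSub (L : List ℕ) : (stairSub L).length = L.length := by simp [stairSub]

lemma getD_addStair (f : List ℕ) {i : ℕ} (hi : i < f.length) :
    (addStair f).getD i 0 = f.getD i 0 + (f.length - i) := by
  rw [addStair, getD_range_map, if_pos hi]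

lemma getD_stairSub (L : List ℕ) {i : ℕ} (hi : i < L.length) :
    (stairSub L).getD i 0 = L.getD i 0 - (L.length - i) := by
  rw [stairSub, getD_range_map, if_pos hi]

lemma addStair_sorted {f : List ℕ} (hf : f.Pairwise (· ≥ ·)) :
    (addStair f).Pairwise (· > ·) := by
  rw [List.pairwise_iff_getElem]
  intro i j hi hj hij
  rw [length_addStair] at hi hj
  rw [← List.getD_eq_getElem _ 0 (by rwa [length_addStair]),
      ← List.getD_eq_getElem _ 0 (by rwa [length_addStair]),
      getD_addStair f hi, getD_addStair f hj]
  have h1 : f.getD j 0 ≤ f.getD i 0 := getD_anti hf (le_of_lt hij)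
  omega

lemma addStair_pos (f : List ℕ) : ∀ x ∈ addStair f, 0 < x := by
  intro x hx
  rw [addStair, List.mem_map] at hx
  obtain ⟨i, hi, rfl⟩ := hx
  rw [List.mem_range] at hi
  omega

lemma strict_getD_succ {L : List ℕ} (h : L.Pairwise (· > ·)) {i : ℕ} (hi : i + 1 < L.length) :
    L.getD (i+1) 0 < L.getD i 0 := by
  have := (List.pairwise_iff_getElem.mp h) i (i+1) (by omega) hi (by omega)
  rwa [← List.getD_eq_getElem _ 0 (by omega), ← List.getD_eq_getElem _ 0 hi] at this

lemma strict_getD_ge {L : List ℕ} (h : L.Pairwise (· > ·)) :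
    ∀ d i, i + d < L.length → L.getD (i+d) 0 + d ≤ L.getD i 0 := by
  intro d
  induction d with
  | zero => intro i _; simp
  | succ d ih =>
    intro i hid
    have h1 := ih (i+1) (by omega)
    have h2 := strict_getD_succ h (by omega : i + 1 < L.length)
    have : i + 1 + d = i + (d+1) := by omega
    rw [this] at h1
    omega

lemma strict_ge_stair {L : List ℕ} (h : L.Pairwise (· > ·)) (hp : ∀ x ∈ L, 0 < x) :
    ∀ i, i < L.length → L.length - i ≤ L.getD i 0 := by
  intro i hi
  have hlast : 0 < L.getD (L.length - 1) 0 := by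
    rw [List.getD_eq_getElem _ 0 (by omega)]
    exact hp _ (L.getElem_mem _)
  have := strict_getD_ge h (L.length - 1 - i) i (by omega)
  have heq : i + (L.length - 1 - i) = L.length - 1 := by omega
  rw [heq] at this
  omega

lemma stairSub_sorted {L : List ℕ} (h : L.Pairwise (· > ·)) (hp : ∀ x ∈ L, 0 < x) :
    (stairSub L).Pairwise (· ≥ ·) := by
  rw [List.pairwise_iff_getElem]
  intro i j hi hj hij
  rw [length_stairSub] at hi hj
  rw [← List.getD_eq_getElem _ 0 (by rwa [length_stairSub]),
      ← List.getD_eq_getElem _ 0 (by rwa [length_stairSub]),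
      getD_stairSub L hi, getD_stairSub L hj]
  have h1 := strict_getD_ge h (j - i) i (by omega)
  have h2 := strict_ge_stair h hp j hj
  have : i + (j - i) = j := by omega
  rw [this] at h1
  omega

lemma stairSub_addStair {f : List ℕ} : stairSub (addStair f) = f := by
  apply List.ext_getElem (by simp [length_stairSub, length_addStair])
  intro n h1 h2
  rw [length_stairSub, length_addStair] at h1
  rw [← List.getD_eq_getElem _ 0, ← List.getD_eq_getElem _ 0 h2,
    getD_stairSub _ (by rwa [length_addStair]), getD_addStair f h1, length_addStair]
  omega

lemma addStair_stairSub {L : List ℕ} (h : L.Pairwise (· > ·)) (hp : ∀ x ∈ L, 0 < x) :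
    addStair (stairSub L) = L := by
  apply List.ext_getElem (by simp [length_stairSub, length_addStair])
  intro n h1 h2
  rw [length_addStair, length_stairSub] at h1
  rw [← List.getD_eq_getElem _ 0, ← List.getD_eq_getElem _ 0 h2,
    getD_addStair _ (by rwa [length_stairSub]), getD_stairSub L h1, length_stairSub]
  have := strict_ge_stair h hp n h1
  omega

lemma sum_addStair (f : List ℕ) :
    2 * (addStair f).sum = 2 * f.sum + f.length * (f.length + 1) := by
  have h1 : (addStair f).sum = ∑ i ∈ Finset.range f.length, (f.getD i 0 + (f.length - i)) := by
    rw [addStair, list_sum_range]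
  rw [h1, Finset.sum_add_distrib, ← sum_eq_sum_getD]
  have h2 : ∑ i ∈ Finset.range f.length, (f.length - i) = ∑ i ∈ Finset.range f.length, (i+1) := by
    conv_rhs => rw [← Finset.sum_range_reflect]
    apply Finset.sum_congr rfl
    intro x hx
    rw [Finset.mem_range] at hx
    omega
  rw [h2]
  have h3 : ∑ i ∈ Finset.range f.length, (i+1) = ∑ i ∈ Finset.range (f.length + 1), i := by
    rw [Finset.sum_range_succ' (fun i => i) f.length]
    simp
  have h4 : (∑ i ∈ Finset.range (f.length + 1), i) * 2 = f.length * (f.length + 1) := by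
    rw [Finset.sum_range_id_mul_two (f.length + 1)]
    rw [Nat.add_sub_cancel]; ring
  rw [h3]
  omega

end BGaux

namespace BGaux

/-! ### bgRank as a signed sum -/

noncomputable def bg' (L : List ℕ) : ℤ :=
  ∑ i ∈ Finset.range L.length, (-1:ℤ)^i * ((L.getD i 0 % 2 : ℕ) : ℤ)

lemma countP_enumFrom (p : ℕ × ℕ → Bool) :
    ∀ (L : List ℕ) (m : ℕ), ((L.zipIdx m).map Prod.swap).countP p =
      ∑ i ∈ Finset.range L.length, if p (m + i, L.getD i 0) then 1 else 0 := by
  intro L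
  induction L with
  | nil => intro m; simp
  | cons a t ih =>
    intro m
    rw [List.zipIdx_cons, List.map_cons, List.countP_cons, ih (m+1), List.length_cons,
      Finset.sum_range_succ' _ t.length]
    have e1 : ∀ i : ℕ, m + 1 + i = m + (i + 1) := fun i => by omega
    simp only [List.getD_cons_succ, List.getD_cons_zero, e1, Nat.add_zero, Prod.swap_prod_mk]

lemma length_filter_enum (p : ℕ × ℕ → Bool) (L : List ℕ) :
    ((L.zipIdx.map Prod.swap).filter p).length = ∑ i ∈ Finset.range L.length, if p (i, L.getD i 0) then 1 else 0 := by
  rw [← List.countP_eq_length_filter, countP_enumFrom]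
  simp

lemma bgRank_eq_bg' (L : List ℕ) : bgRank L = bg' L := by
  rw [bgRank, length_filter_enum, length_filter_enum, bg']
  push_cast
  rw [← Finset.sum_sub_distrib]
  apply Finset.sum_congr rfl
  intro i _
  simp only [Bool.and_eq_true, beq_iff_eq]
  rcases Nat.even_or_odd i with hi | hi
  · rw [hi.neg_one_pow, one_mul]
    have h0 : i % 2 = 0 := Nat.even_iff.mp hi
    split_ifs <;> omega
  · rw [hi.neg_one_pow, neg_one_mul]
    have h1 : i % 2 = 1 := Nat.odd_iff.mp hi
    split_ifs <;> omega

/-! ### staircase alternating sum -/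

noncomputable def stairAlt (r : ℕ) : ℤ :=
  ∑ i ∈ Finset.range r, (-1:ℤ)^i * (((r - i) % 2 : ℕ) : ℤ)

lemma stairAlt_closed : ∀ r : ℕ, stairAlt r =
    if r % 2 = 0 then -((r/2 : ℕ) : ℤ) else (((r+1)/2 : ℕ) : ℤ) := by
  intro r
  induction r with
  | zero => simp [stairAlt]
  | succ r ih =>
    rw [stairAlt, Finset.sum_range_succ]
    have hstep : ∀ i ∈ Finset.range r, (-1:ℤ)^i * (((r + 1 - i) % 2 : ℕ) : ℤ)
        = (-1:ℤ)^i - (-1:ℤ)^i * (((r - i) % 2 : ℕ) : ℤ) := by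
      intro i hi
      rw [Finset.mem_range] at hi
      have h1 : r + 1 - i = (r - i) + 1 := by omega
      rw [h1]
      rcases Nat.mod_two_eq_zero_or_one (r - i) with h | h
      · have h2 : (r - i + 1) % 2 = 1 := by omega
        rw [h2, h]; push_cast; ring
      · have h2 : (r - i + 1) % 2 = 0 := by omega
        rw [h2, h]; push_cast; ring
    rw [Finset.sum_congr rfl hstep, Finset.sum_sub_distrib,
      show (∑ i ∈ Finset.range r, ((-1:ℤ))^i * (((r - i) % 2 : ℕ) : ℤ)) = stairAlt r from rfl,
      ih, neg_one_geom_sum,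
      show r + 1 - r = 1 from by omega]
    rcases Nat.even_or_odd r with he | he
    · have h0 : r % 2 = 0 := Nat.even_iff.mp he
      rw [if_pos he, he.neg_one_pow, if_pos h0, if_neg (by omega : ¬ (r+1) % 2 = 0)]
      have h3 : (r + 1 + 1) / 2 = r / 2 + 1 := by omega
      rw [h3]
      push_cast
      ring
    · have h1 : r % 2 = 1 := Nat.odd_iff.mp he
      rw [if_neg (by simpa [Nat.even_iff] using h1), he.neg_one_pow,
        if_neg (by omega : ¬ r % 2 = 0), if_pos (by omega : (r+1) % 2 = 0)]
      have h6 : (r + 1) / 2 + (r + 1) / 2 = r + 1 := by omega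
      have h7 : (((r+1)/2 : ℕ) : ℤ) + (((r+1)/2 : ℕ) : ℤ) = (r : ℤ) + 1 := by
        exact_mod_cast congrArg (fun x : ℕ => (x : ℤ)) h6
      push_cast
      push_cast at h7
      linarith [h7]

/-! ### countP as sum over positions -/

lemma countP_eq_sum_getD (p : ℕ → Bool) (L : List ℕ) :
    L.countP p = ∑ i ∈ Finset.range L.length, if p (L.getD i 0) then 1 else 0 := by
  induction L with
  | nil => simp
  | cons a t ih =>
    rw [List.countP_cons, ih, List.length_cons, Finset.sum_range_succ' _ t.length]
    simp only [List.getD_cons_succ, List.getD_cons_zero]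

lemma length_oddsOf_eq (f : List ℕ) :
    (oddsOf f).length = ∑ i ∈ Finset.range f.length, (f.getD i 0 % 2) := by
  rw [oddsOf, ← List.countP_eq_length_filter, countP_eq_sum_getD]
  apply Finset.sum_congr rfl
  intro i _
  rcases Nat.mod_two_eq_zero_or_one (f.getD i 0) with h | h <;>
    simp only [List.getD_eq_getElem?_getD] at h ⊢ <;> rw [h] <;> simp

lemma bg'_addStair (f : List ℕ) :
    bg' (addStair f) = stairAlt f.length + (-1:ℤ)^f.length * ((oddsOf f).length : ℤ) := by
  rw [bg', length_addStair]
  have hterm : ∀ i ∈ Finset.range f.length,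
      (-1:ℤ)^i * (((addStair f).getD i 0 % 2 : ℕ) : ℤ)
      = (-1:ℤ)^i * (((f.length - i) % 2 : ℕ) : ℤ) + (-1:ℤ)^f.length * ((f.getD i 0 % 2 : ℕ) : ℤ) := by
    intro i hi
    rw [Finset.mem_range] at hi
    rw [getD_addStair f hi]
    have hpow : (-1:ℤ)^f.length = (-1:ℤ)^i * (-1:ℤ)^(f.length - i) := by
      rw [← pow_add]
      congr 1
      omega
    set x := f.getD i 0 with hx
    set d := f.length - i with hd
    have key : (((x + d) % 2 : ℕ) : ℤ) = ((d % 2 : ℕ) : ℤ) + (-1:ℤ)^d * ((x % 2 : ℕ) : ℤ) := by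
      rcases Nat.even_or_odd d with hde | hde
      · rw [hde.neg_one_pow]
        have hd0 := Nat.even_iff.mp hde
        have h2 : (x + d) % 2 = x % 2 := by omega
        rw [h2, hd0]; push_cast; try ring
      · rw [hde.neg_one_pow]
        have hd1 := Nat.odd_iff.mp hde
        rcases Nat.mod_two_eq_zero_or_one x with hxx | hxx
        · have h2 : (x + d) % 2 = 1 := by omega
          rw [h2, hd1, hxx]; push_cast; try ring
        · have h2 : (x + d) % 2 = 0 := by omega
          rw [h2, hd1, hxx]; push_cast; try ring
    rw [key, hpow]
    ring
  rw [Finset.sum_congr rfl hterm, Finset.sum_add_distrib, ← Finset.mul_sum,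
    show (∑ i ∈ Finset.range f.length, ((-1:ℤ))^i * (((f.length - i) % 2 : ℕ) : ℤ)) = stairAlt f.length from rfl]
  congr 1
  rw [length_oddsOf_eq]
  push_cast
  rfl

end BGaux

namespace BGaux

/-! ### more list helpers -/

lemma getD_map (g : ℕ → ℕ) {l : List ℕ} {i : ℕ} (hi : i < l.length) :
    (l.map g).getD i 0 = g (l.getD i 0) := by
  rw [List.getD_eq_getElem _ _ (by simpa using hi), List.getD_eq_getElem _ _ hi]
  simp

lemma sorted_map_of_mono {l : List ℕ} (h : l.Pairwise (· ≥ ·)) {g : ℕ → ℕ}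
    (hg : ∀ a b, b ≤ a → g b ≤ g a) : (l.map g).Pairwise (· ≥ ·) := by
  rw [List.pairwise_map]
  exact h.imp (fun hab => hg _ _ hab)

lemma sum_map_two_mul (l : List ℕ) : (l.map (fun x => 2 * x)).sum = 2 * l.sum := by
  induction l with
  | nil => simp
  | cons a t ih => simp [ih]; ring

lemma sum_map_two_mul_add_one (l : List ℕ) :
    (l.map (fun x => 2 * x + 1)).sum = 2 * l.sum + l.length := by
  induction l with
  | nil => simp
  | cons a t ih => simp [ih]; ring

lemma sum_map_add_const (l : List ℕ) (c : ℕ) :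
    (l.map (fun x => x + c)).sum = l.sum + l.length * c := by
  induction l with
  | nil => simp
  | cons a t ih => simp [ih]; ring

lemma sum_getD_of_le {M : List ℕ} {u : ℕ} (h : M.length ≤ u) :
    ∑ j ∈ Finset.range u, M.getD j 0 = M.sum := by
  rw [sum_eq_sum_getD]
  rw [← Finset.sum_range_add_sum_Ico _ h]
  have h2 : ∑ j ∈ Finset.Ico M.length u, M.getD j 0 = 0 := by
    apply Finset.sum_eq_zero
    intro j hj
    rw [Finset.mem_Ico] at hj
    exact List.getD_eq_default _ _ hj.1
  omega

lemma take_eq_range_map {l : List ℕ} {s : ℕ} (h : s ≤ l.length) :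
    l.take s = (List.range s).map (fun i => l.getD i 0) := by
  apply List.ext_getElem (by rw [List.length_take, List.length_map, List.length_range]; omega)
  intro n h1 h2
  rw [List.length_take] at h1
  simp only [List.getElem_map, List.getElem_range, List.getElem_take]
  rw [List.getD_eq_getElem _ _ (by omega)]

lemma range_map_getD_eq_append {M : List ℕ} {u : ℕ} (h : M.length ≤ u) :
    (List.range u).map (fun j => M.getD j 0) = M ++ List.replicate (u - M.length) 0 := by
  apply List.ext_getElem (by simp; omega)
  intro n h1 h2
  simp only [List.getElem_map, List.getElem_range]
  rcases lt_or_ge n M.length with hn | hn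
  · rw [List.getD_eq_getElem _ _ hn, List.getElem_append_left hn]
  · rw [List.getD_eq_default _ _ hn, List.getElem_append_right hn]
    simp

lemma conj_append_zeros (M : List ℕ) (t : ℕ) :
    conj (M ++ List.replicate t 0) = conj M := by
  have h1 : (M ++ List.replicate t 0).getD 0 0 = M.getD 0 0 := by
    cases M with
    | nil =>
      simp only [List.nil_append]
      cases t with
      | zero => rfl
      | succ t => simp [List.replicate_succ]
    | cons a s => rfl
  have h2 : ∀ j, (M ++ List.replicate t 0).countP (fun x => decide (j + 1 ≤ x))
      = M.countP (fun x => decide (j + 1 ≤ x)) := by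
    intro j
    rw [List.countP_append]
    have : (List.replicate t 0).countP (fun x => decide (j + 1 ≤ x)) = 0 := by
      rw [List.countP_eq_zero]
      intro a ha
      rw [List.eq_of_mem_replicate ha]
      simp
    omega
  rw [conj, conj, h1]
  apply List.map_congr_left
  intro j _
  exact h2 j

lemma getD_filter_pos : ∀ {l : List ℕ}, l.Pairwise (· ≥ ·) →
    ∀ i, (l.filter (fun x => decide (0 < x))).getD i 0 = l.getD i 0 := by
  intro l
  induction l with
  | nil => intro _ i; simp
  | cons a t ih =>
    intro h i
    have ht : t.Pairwise (· ≥ ·) := h.of_cons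
    by_cases ha : 0 < a
    · rw [List.filter_cons_of_pos (by simpa using ha)]
      cases i with
      | zero => rfl
      | succ i => rw [List.getD_cons_succ, List.getD_cons_succ]; exact ih ht i
    · have ha0 : a = 0 := by omega
      have htz : ∀ x ∈ t, x = 0 := by
        intro x hx
        have := List.rel_of_pairwise_cons h hx
        omega
      have hfil : (a :: t).filter (fun x => decide (0 < x)) = [] := by
        rw [List.filter_eq_nil_iff]
        intro x hx
        rcases List.mem_cons.mp hx with rfl | hx
        · simp [ha0]
        · simp [htz x hx]
      rw [hfil]
      have : (a :: t).getD i 0 = 0 := by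
        have hall : ∀ x ∈ a :: t, x ≤ 0 := by
          intro x hx
          rcases List.mem_cons.mp hx with rfl | hx
          · omega
          · rw [htz x hx]
        have := getD_le_of_forall hall i
        omega
      rw [this]
      simp

lemma sum_filter_pos (l : List ℕ) : (l.filter (fun x => decide (0 < x))).sum = l.sum := by
  induction l with
  | nil => rfl
  | cons a t ih =>
    by_cases ha : 0 < a
    · rw [List.filter_cons_of_pos (by simpa using ha)]
      simp [ih]
    · have ha0 : a = 0 := by omega
      rw [List.filter_cons_of_neg (by simpa using ha)]
      simp [ih, ha0]

lemma drop_sorted {l : List ℕ} (h : l.Pairwise (· ≥ ·)) (s : ℕ) :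
    (l.drop s).Pairwise (· ≥ ·) := h.sublist (List.drop_sublist s l)

lemma getD_drop (l : List ℕ) (s j : ℕ) : (l.drop s).getD j 0 = l.getD (s + j) 0 := by
  rcases lt_or_ge (s + j) l.length with hn | hn
  · rw [List.getD_eq_getElem _ _ (by simp; omega), List.getD_eq_getElem _ _ hn]
    rw [List.getElem_drop]
  · rw [List.getD_eq_default _ _ (by simp; omega), List.getD_eq_default _ _ hn]

lemma conj_entry_le (L : List ℕ) : ∀ x ∈ conj L, x ≤ L.length := by
  intro x hx
  rw [conj, List.mem_map] at hx
  obtain ⟨j, _, rfl⟩ := hx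
  exact List.countP_le_length

lemma length_filter_le (p : ℕ → Bool) (l : List ℕ) : (l.filter p).length ≤ l.length :=
  List.length_filter_le _ _

/-! ### the maps -/

def alphaOf (f : List ℕ) : List ℕ := (oddsOf f).map (· / 2)
def betaOf (f : List ℕ) : List ℕ := (evensOf f).map (· / 2)
def TOf (f : List ℕ) : ℕ := (oddsOf f).length

lemma length_alphaOf (f : List ℕ) : (alphaOf f).length = TOf f := by simp [alphaOf, TOf]
lemma length_betaOf (f : List ℕ) : (betaOf f).length = f.length - TOf f := by
  have h : TOf f + (evensOf f).length = f.length := odds_evens_length f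
  simp only [betaOf, List.length_map]
  omega

lemma alphaOf_sorted {f : List ℕ} (h : f.Pairwise (· ≥ ·)) : (alphaOf f).Pairwise (· ≥ ·) :=
  sorted_map_of_mono (odds_sorted h) (fun a b hab => Nat.div_le_div_right hab)

lemma betaOf_sorted {f : List ℕ} (h : f.Pairwise (· ≥ ·)) : (betaOf f).Pairwise (· ≥ ·) :=
  sorted_map_of_mono (evens_sorted h) (fun a b hab => Nat.div_le_div_right hab)

lemma alphaOf_reconstruct (f : List ℕ) : (alphaOf f).map (fun x => 2 * x + 1) = oddsOf f := by
  rw [alphaOf, List.map_map]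
  have h2 : ∀ x ∈ oddsOf f, ((fun x => 2 * x + 1) ∘ (· / 2)) x = id x := by
    intro x hx
    have := odds_mem f x hx
    simp only [Function.comp_apply, id_eq]
    omega
  rw [List.map_congr_left h2, List.map_id]

lemma betaOf_reconstruct (f : List ℕ) : (betaOf f).map (fun x => 2 * x) = evensOf f := by
  rw [betaOf, List.map_map]
  have h2 : ∀ x ∈ evensOf f, ((fun x => 2 * x) ∘ (· / 2)) x = id x := by
    intro x hx
    have := evens_mem f x hx
    simp only [Function.comp_apply, id_eq]
    omega
  rw [List.map_congr_left h2, List.map_id]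

lemma sum_oddsOf (f : List ℕ) : (oddsOf f).sum = 2 * (alphaOf f).sum + TOf f := by
  rw [← alphaOf_reconstruct f, sum_map_two_mul_add_one, length_alphaOf]

lemma sum_evensOf (f : List ℕ) : (evensOf f).sum = 2 * (betaOf f).sum := by
  rw [← betaOf_reconstruct f, sum_map_two_mul]

/-- forward assembly from `f` -/
def phiF (f : List ℕ) : List ℕ :=
  if f.length % 2 = 0 then
    (alphaOf f).map (· + (f.length - TOf f + 1)) ++ conj (betaOf f)
  else
    (((betaOf f ++ [0]).map (· + TOf f)) ++ conj (alphaOf f)).filter (fun x => decide (0 < x))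

def phi (L : List ℕ) : List ℕ := phiF (stairSub L)

lemma hskip_ex (k : ℤ) (nu : List ℕ) :
    ∃ i : ℕ, (nu.getD i 0 : ℤ) - (i + 1) ≤ -(2*k) := by
  refine ⟨nu.length + (2*k).toNat, ?_⟩
  rw [List.getD_eq_default _ _ (by omega)]
  have := Int.toNat_eq_max (2*k)
  push_cast
  omega

def hskip (k : ℤ) (nu : List ℕ) : ℕ := Nat.find (hskip_ex k nu)

lemma hskip_le (k : ℤ) (nu : List ℕ) :
    (nu.getD (hskip k nu) 0 : ℤ) - (hskip k nu + 1) ≤ -(2*k) := Nat.find_spec (hskip_ex k nu)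

lemma hskip_gt (k : ℤ) (nu : List ℕ) {i : ℕ} (hi : i < hskip k nu) :
    (nu.getD i 0 : ℤ) - (i + 1) > -(2*k) := by
  have := Nat.find_min (hskip_ex k nu) hi
  omega

lemma hskip_eq (k : ℤ) (nu : List ℕ) {s : ℕ}
    (h1 : ∀ i < s, (nu.getD i 0 : ℤ) - (i + 1) > -(2*k))
    (h2 : (nu.getD s 0 : ℤ) - (s + 1) ≤ -(2*k)) : hskip k nu = s := by
  rw [hskip, Nat.find_eq_iff]
  exact ⟨h2, fun n hn => by have := h1 n hn; omega⟩

/-- inverse: reconstruct `f` from `nu` -/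
def psiF (k : ℤ) (nu : List ℕ) : List ℕ :=
  let s := hskip k nu
  if (nu.getD s 0 : ℤ) - (s + 1) = -(2*k) then
    let T := nu.getD s 0
    dsort (((List.range T).map (fun j => 2 * (conj (nu.drop (s+1))).getD j 0 + 1)) ++
      ((List.range s).map (fun i => 2 * (nu.getD i 0 - T))))
  else
    let u := ((s : ℤ) - 2*k).toNat
    dsort (((List.range s).map (fun i => 2 * (nu.getD i 0 - (u+1)) + 1)) ++
      ((List.range u).map (fun j => 2 * (conj (nu.drop s)).getD j 0)))

def psi (k : ℤ) (nu : List ℕ) : List ℕ := addStair (psiF k nu)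

end BGaux

namespace BGaux

/-! ### structure of the assembled partitions -/

def nuA (f : List ℕ) : List ℕ :=
  (alphaOf f).map (· + (f.length - TOf f + 1)) ++ conj (betaOf f)

def nuB' (f : List ℕ) : List ℕ :=
  ((betaOf f ++ [0]).map (· + TOf f)) ++ conj (alphaOf f)

lemma phiF_even {f : List ℕ} (h : f.length % 2 = 0) : phiF f = nuA f := by
  rw [phiF, if_pos h]; rfl

lemma phiF_odd {f : List ℕ} (h : ¬ f.length % 2 = 0) :
    phiF f = (nuB' f).filter (fun x => decide (0 < x)) := by
  rw [phiF, if_neg h]; rfl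

lemma TOf_le (f : List ℕ) : TOf f ≤ f.length := by
  have := odds_evens_length f
  rw [TOf]; omega

section CaseA

variable {f : List ℕ} (hf : f.Pairwise (· ≥ ·))

lemma rowsA_mem (x : ℕ) (hx : x ∈ (alphaOf f).map (· + (f.length - TOf f + 1))) :
    f.length - TOf f + 1 ≤ x := by
  rw [List.mem_map] at hx
  obtain ⟨a, _, rfl⟩ := hx
  omega

lemma conj_betaOf_mem (x : ℕ) (hx : x ∈ conj (betaOf f)) : 0 < x ∧ x ≤ f.length - TOf f := by
  refine ⟨conj_pos _ x hx, ?_⟩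
  have := conj_entry_le (betaOf f) x hx
  rwa [length_betaOf] at this

include hf in
lemma nuA_sorted : (nuA f).Pairwise (· ≥ ·) := by
  rw [nuA, List.pairwise_append]
  refine ⟨sorted_map_of_mono (alphaOf_sorted hf) (fun a b hab => by omega), conj_sorted _, ?_⟩
  intro a ha b hb
  have h1 := rowsA_mem a ha
  have h2 := (conj_betaOf_mem b hb).2
  omega

lemma nuA_pos : ∀ x ∈ nuA f, 0 < x := by
  intro x hx
  rw [nuA, List.mem_append] at hx
  rcases hx with hx | hx
  · have := rowsA_mem x hx; omega
  · exact (conj_betaOf_mem x hx).1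

include hf in
lemma nuA_sum : (nuA f).sum = (alphaOf f).sum + TOf f * (f.length - TOf f + 1) + (betaOf f).sum := by
  rw [nuA, List.sum_append, sum_map_add_const, length_alphaOf, conj_sum (betaOf_sorted hf)]

lemma nuA_getD_low {i : ℕ} (hi : i < TOf f) :
    (nuA f).getD i 0 = (alphaOf f).getD i 0 + (f.length - TOf f + 1) := by
  rw [nuA, List.getD_append _ _ _ _ (by rw [List.length_map, length_alphaOf]; omega),
    getD_map _ (by rw [length_alphaOf]; omega)]

lemma nuA_getD_high {i : ℕ} (hi : TOf f ≤ i) :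
    (nuA f).getD i 0 = (conj (betaOf f)).getD (i - TOf f) 0 := by
  rw [nuA, List.getD_append_right _ _ _ _ (by rw [List.length_map, length_alphaOf]; omega),
    List.length_map, length_alphaOf]

lemma nuA_getD_high_le {i : ℕ} (hi : TOf f ≤ i) :
    (nuA f).getD i 0 ≤ f.length - TOf f := by
  rw [nuA_getD_high hi]
  rcases lt_or_ge (i - TOf f) (conj (betaOf f)).length with hj | hj
  · have hmem : (conj (betaOf f)).getD (i - TOf f) 0 ∈ conj (betaOf f) := by
      rw [List.getD_eq_getElem _ _ hj]
      exact List.getElem_mem _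
    exact (conj_betaOf_mem _ hmem).2
  · rw [List.getD_eq_default _ _ hj]; omega

lemma nuA_drop : (nuA f).drop (TOf f) = conj (betaOf f) := by
  rw [nuA]
  exact List.drop_left' (by rw [List.length_map, length_alphaOf])

lemma nuA_length : (nuA f).length = TOf f + (conj (betaOf f)).length := by
  rw [nuA, List.length_append, List.length_map, length_alphaOf]

end CaseA

section CaseB

variable {f : List ℕ} (hf : f.Pairwise (· ≥ ·))

lemma rowsB_mem (x : ℕ) (hx : x ∈ (betaOf f ++ [0]).map (· + TOf f)) : TOf f ≤ x := by
  rw [List.mem_map] at hx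
  obtain ⟨a, _, rfl⟩ := hx
  omega

lemma conj_alphaOf_mem (x : ℕ) (hx : x ∈ conj (alphaOf f)) : 0 < x ∧ x ≤ TOf f := by
  refine ⟨conj_pos _ x hx, ?_⟩
  have := conj_entry_le (alphaOf f) x hx
  rwa [length_alphaOf] at this

include hf in
lemma rowsB_sorted : ((betaOf f ++ [0]).map (· + TOf f)).Pairwise (· ≥ ·) := by
  apply sorted_map_of_mono _ (fun a b hab => by omega)
  rw [List.pairwise_append]
  exact ⟨betaOf_sorted hf, by simp, by simp⟩

include hf in
lemma nuB'_sorted : (nuB' f).Pairwise (· ≥ ·) := by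
  rw [nuB', List.pairwise_append]
  refine ⟨rowsB_sorted hf, conj_sorted _, ?_⟩
  intro a ha b hb
  have h1 := rowsB_mem a ha
  have h2 := (conj_alphaOf_mem b hb).2
  omega

include hf in
lemma nuB'_sum : (nuB' f).sum
    = (betaOf f).sum + (f.length - TOf f + 1) * TOf f + (alphaOf f).sum := by
  rw [nuB', List.sum_append, sum_map_add_const, conj_sum (alphaOf_sorted hf),
    List.sum_append, List.length_append, length_betaOf]
  simp

lemma rowsB_length : ((betaOf f ++ [0]).map (· + TOf f)).length = (f.length - TOf f) + 1 := by
  rw [List.length_map, List.length_append, length_betaOf]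
  rfl

lemma nuB'_getD_low {i : ℕ} (hi : i < f.length - TOf f) :
    (nuB' f).getD i 0 = (betaOf f).getD i 0 + TOf f := by
  rw [nuB', List.getD_append _ _ _ _ (by rw [rowsB_length]; omega),
    getD_map _ (by rw [List.length_append, length_betaOf]; simp; omega),
    List.getD_append _ _ _ _ (by rw [length_betaOf]; omega)]

lemma nuB'_getD_mid : (nuB' f).getD (f.length - TOf f) 0 = TOf f := by
  rw [nuB', List.getD_append _ _ _ _ (by rw [rowsB_length]; omega),
    getD_map _ (by rw [List.length_append, length_betaOf]; simp),
    List.getD_append_right _ _ _ _ (by rw [length_betaOf]), length_betaOf]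
  simp

lemma nuB'_getD_high {i : ℕ} (hi : f.length - TOf f + 1 ≤ i) :
    (nuB' f).getD i 0 = (conj (alphaOf f)).getD (i - (f.length - TOf f + 1)) 0 := by
  rw [nuB', List.getD_append_right _ _ _ _ (by rw [rowsB_length]; omega), rowsB_length]

lemma nuB'_getD_high_le {i : ℕ} (hi : f.length - TOf f + 1 ≤ i) :
    (nuB' f).getD i 0 ≤ TOf f := by
  rw [nuB'_getD_high hi]
  rcases lt_or_ge (i - (f.length - TOf f + 1)) (conj (alphaOf f)).length with hj | hj
  · have hmem : (conj (alphaOf f)).getD (i - (f.length - TOf f + 1)) 0 ∈ conj (alphaOf f) := by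
      rw [List.getD_eq_getElem _ _ hj]
      exact List.getElem_mem _
    exact (conj_alphaOf_mem _ hmem).2
  · rw [List.getD_eq_default _ _ hj]; omega

lemma nuB'_drop : (nuB' f).drop (f.length - TOf f + 1) = conj (alphaOf f) := by
  rw [nuB']
  exact List.drop_left' rowsB_length

end CaseB

end BGaux

namespace BGaux

/-! ### forward membership -/

lemma phiF_partition {f : List ℕ} (hf : f.Pairwise (· ≥ ·)) : IsPartitionList (phiF f) := by
  by_cases h : f.length % 2 = 0
  · rw [phiF_even h]; exact ⟨nuA_sorted hf, nuA_pos⟩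
  · rw [phiF_odd h]
    refine ⟨(nuB'_sorted hf).filter _, fun x hx => ?_⟩
    have := List.of_mem_filter hx
    simpa using this

lemma phiF_sum {f : List ℕ} (hf : f.Pairwise (· ≥ ·)) (k : ℤ)
    (hk : stairAlt f.length + (-1:ℤ)^f.length * (TOf f : ℤ) = k) :
    2 * ((phiF f).sum : ℤ) = ((addStair f).sum : ℤ) - (2*k^2 - k) := by
  have hT := TOf_le f
  have hsums : f.sum = 2 * (alphaOf f).sum + TOf f + 2 * (betaOf f).sum := by
    have h1 := odds_evens_sum f
    have h2 := sum_oddsOf f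
    have h3 := sum_evensOf f
    omega
  have hstair := sum_addStair f
  by_cases h : f.length % 2 = 0
  · set c := f.length / 2 with hc
    have hr : f.length = 2 * c := by omega
    have hkc : k = (TOf f : ℤ) - c := by
      rw [stairAlt_closed, if_pos h, (Nat.even_iff.mpr h).neg_one_pow, one_mul] at hk
      omega
    have hsum_nu : (phiF f).sum
        = (alphaOf f).sum + TOf f * (f.length - TOf f + 1) + (betaOf f).sum := by
      rw [phiF_even h]; exact nuA_sum hf
    have hm : f.length * (f.length + 1) = 2 * (c * (2*c + 1)) := by rw [hr]; ring
    have hL : (addStair f).sum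
        = 2*(alphaOf f).sum + TOf f + 2*(betaOf f).sum + c * (2*c+1) := by omega
    have hw : ((f.length - TOf f : ℕ) : ℤ) = 2*(c:ℤ) - (TOf f : ℤ) := by omega
    have e1 : ((phiF f).sum : ℤ) = ((alphaOf f).sum : ℤ)
        + (TOf f : ℤ) * (2*(c:ℤ) - (TOf f:ℤ) + 1) + ((betaOf f).sum : ℤ) := by
      rw [hsum_nu]
      push_cast [hw]
      ring
    have e2 : ((addStair f).sum : ℤ) = 2*((alphaOf f).sum:ℤ) + (TOf f:ℤ)
        + 2*((betaOf f).sum:ℤ) + (c:ℤ)*(2*(c:ℤ)+1) := by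
      rw [hL]; push_cast; ring
    rw [hkc, e1, e2]; ring
  · set c := f.length / 2 with hc
    have hr : f.length = 2 * c + 1 := by omega
    have hkc : k = (c:ℤ) + 1 - (TOf f : ℤ) := by
      rw [stairAlt_closed, if_neg h, (Nat.odd_iff.mpr (by omega)).neg_one_pow, neg_one_mul] at hk
      have : (f.length + 1) / 2 = c + 1 := by omega
      rw [this] at hk
      omega
    have hsum_nu : (phiF f).sum
        = (betaOf f).sum + (f.length - TOf f + 1) * TOf f + (alphaOf f).sum := by
      rw [phiF_odd h, sum_filter_pos]; exact nuB'_sum hf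
    have hm : f.length * (f.length + 1) = 2 * ((2*c+1) * (c + 1)) := by rw [hr]; ring
    have hL : (addStair f).sum
        = 2*(alphaOf f).sum + TOf f + 2*(betaOf f).sum + (2*c+1) * (c+1) := by omega
    have hw : ((f.length - TOf f : ℕ) : ℤ) = 2*(c:ℤ) + 1 - (TOf f : ℤ) := by omega
    have e1 : ((phiF f).sum : ℤ) = ((betaOf f).sum : ℤ)
        + (2*(c:ℤ) + 1 - (TOf f:ℤ) + 1) * (TOf f : ℤ) + ((alphaOf f).sum : ℤ) := by
      rw [hsum_nu]
      push_cast [hw]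
      ring
    have e2 : ((addStair f).sum : ℤ) = 2*((alphaOf f).sum:ℤ) + (TOf f:ℤ)
        + 2*((betaOf f).sum:ℤ) + (2*(c:ℤ)+1)*((c:ℤ)+1) := by
      rw [hL]; push_cast; ring
    rw [hkc, e1, e2]; ring

lemma phi_mem {L : List ℕ} (k : ℤ) (hL : IsStrictPartitionList L) (hbg : bgRank L = k) :
    IsPartitionList (phi L) ∧ 2 * ((phi L).sum : ℤ) = (L.sum : ℤ) - (2*k^2 - k) := by
  have hf : (stairSub L).Pairwise (· ≥ ·) := stairSub_sorted hL.1 hL.2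
  have hback : addStair (stairSub L) = L := addStair_stairSub hL.1 hL.2
  have hk : stairAlt (stairSub L).length + (-1:ℤ)^(stairSub L).length * (TOf (stairSub L) : ℤ)
      = k := by
    have h1 := bg'_addStair (stairSub L)
    rw [hback, ← bgRank_eq_bg', hbg] at h1
    exact h1.symm
  refine ⟨phiF_partition hf, ?_⟩
  rw [phi]
  have := phiF_sum hf k hk
  rwa [hback] at this

end BGaux

namespace BGaux

/-! ### psi ∘ phi = id -/

lemma psi_phi {L : List ℕ} (k : ℤ) (hL : IsStrictPartitionList L) (hbg : bgRank L = k) :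
    psi k (phi L) = L := by
  have hf : (stairSub L).Pairwise (· ≥ ·) := stairSub_sorted hL.1 hL.2
  have hback : addStair (stairSub L) = L := addStair_stairSub hL.1 hL.2
  have hk : stairAlt (stairSub L).length
      + (-1:ℤ)^(stairSub L).length * (TOf (stairSub L) : ℤ) = k := by
    have h1 := bg'_addStair (stairSub L)
    rw [hback, ← bgRank_eq_bg', hbg] at h1
    exact h1.symm
  set f := stairSub L with hfdef
  have hT := TOf_le f
  suffices hsuff : psiF k (phiF f) = f by
    rw [psi, phi, ← hfdef, hsuff, hback]
  by_cases h : f.length % 2 = 0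
  · -- case A: even length
    rw [phiF_even h]
    have hk2 : ((f.length - TOf f : ℕ) : ℤ) = (TOf f : ℤ) - 2*k := by
      rw [stairAlt_closed, if_pos h, (Nat.even_iff.mpr h).neg_one_pow, one_mul] at hk
      omega
    have hlow : ∀ i < TOf f, ((nuA f).getD i 0 : ℤ) - (i+1) > -(2*k) := by
      intro i hi
      rw [nuA_getD_low hi]
      push_cast
      omega
    have hhighle : ((nuA f).getD (TOf f) 0 : ℤ) ≤ ((f.length - TOf f : ℕ) : ℤ) :=
      Int.ofNat_le.mpr (nuA_getD_high_le (le_refl (TOf f)))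
    have hs : hskip k (nuA f) = TOf f := hskip_eq k _ hlow (by omega)
    simp only [psiF]
    rw [hs]
    split_ifs with hc
    · exfalso
      omega
    · have hu : ((TOf f : ℤ) - 2*k).toNat = f.length - TOf f := by omega
      rw [hu, nuA_drop]
      have ho : (List.range (TOf f)).map
          (fun i => 2 * ((nuA f).getD i 0 - (f.length - TOf f + 1)) + 1) = oddsOf f := by
        rw [← alphaOf_reconstruct f]
        conv_rhs => rw [self_eq_range_map (alphaOf f)]
        rw [List.map_map, length_alphaOf]
        apply List.map_congr_left
        intro i hi
        rw [List.mem_range] at hi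
        simp only [Function.comp_apply]
        rw [nuA_getD_low hi]
        omega
      have he : (List.range (f.length - TOf f)).map
          (fun j => 2 * (conj (conj (betaOf f))).getD j 0) = evensOf f := by
        rw [← betaOf_reconstruct f]
        conv_rhs => rw [self_eq_range_map (betaOf f)]
        rw [List.map_map, length_betaOf]
        apply List.map_congr_left
        intro j _
        simp only [Function.comp_apply]
        rw [getD_conj_conj (betaOf_sorted hf)]
      rw [ho, he]
      exact List.Perm.eq_of_pairwise (fun a b _ _ h1 h2 => Nat.le_antisymm h2 h1)
        (dsort_sorted _) hf ((dsort_perm _).trans (odds_append_evens_perm f))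
  · -- case B: odd length
    rw [phiF_odd h]
    set nb := (nuB' f).filter (fun x => decide (0 < x)) with hnb
    have hg : ∀ i, nb.getD i 0 = (nuB' f).getD i 0 := getD_filter_pos (nuB'_sorted hf)
    have hk2 : 2*(TOf f : ℤ) - f.length - 1 = -(2*k) := by
      rw [stairAlt_closed, if_neg h, (Nat.odd_iff.mpr (by omega)).neg_one_pow, neg_one_mul] at hk
      omega
    have hrT : ((f.length - TOf f : ℕ) : ℤ) = (f.length : ℤ) - TOf f := by omega
    have hlow : ∀ i < f.length - TOf f, (nb.getD i 0 : ℤ) - (i+1) > -(2*k) := by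
      intro i hi
      rw [hg i, nuB'_getD_low hi]
      push_cast
      omega
    have hmidv : nb.getD (f.length - TOf f) 0 = TOf f := by
      rw [hg]; exact nuB'_getD_mid
    have hmid : (nb.getD (f.length - TOf f) 0 : ℤ) - ((f.length - TOf f : ℕ) + 1) = -(2*k) := by
      rw [hmidv]
      omega
    have hs : hskip k nb = f.length - TOf f := hskip_eq k _ hlow (le_of_eq hmid)
    simp only [psiF]
    rw [hs]
    split_ifs with hc
    · rw [hmidv]
      have he : (List.range (f.length - TOf f)).map
          (fun i => 2 * (nb.getD i 0 - TOf f)) = evensOf f := by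
        rw [← betaOf_reconstruct f]
        conv_rhs => rw [self_eq_range_map (betaOf f)]
        rw [List.map_map, length_betaOf]
        apply List.map_congr_left
        intro i hi
        rw [List.mem_range] at hi
        simp only [Function.comp_apply]
        rw [hg i, nuB'_getD_low hi]
        omega
      have ho : (List.range (TOf f)).map
          (fun j => 2 * (conj (nb.drop (f.length - TOf f + 1))).getD j 0 + 1) = oddsOf f := by
        by_cases hT0 : TOf f = 0
        · rw [hT0]
          simp only [List.range_zero, List.map_nil]
          have : (oddsOf f).length = 0 := hT0
          exact (List.length_eq_zero_iff.mp this).symm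
        · have hall : nb = nuB' f := by
            rw [hnb]
            apply List.filter_eq_self.mpr
            intro a ha
            rw [nuB', List.mem_append] at ha
            simp only [decide_eq_true_eq]
            rcases ha with ha | ha
            · have := rowsB_mem a ha; omega
            · exact conj_pos _ a ha
          rw [hall, nuB'_drop, ← alphaOf_reconstruct f]
          conv_rhs => rw [self_eq_range_map (alphaOf f)]
          rw [List.map_map, length_alphaOf]
          apply List.map_congr_left
          intro j _
          simp only [Function.comp_apply]
          rw [getD_conj_conj (alphaOf_sorted hf)]
      rw [ho, he]
      exact List.Perm.eq_of_pairwise (fun a b _ _ h1 h2 => Nat.le_antisymm h2 h1)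
        (dsort_sorted _) hf ((dsort_perm _).trans (odds_append_evens_perm f))

end BGaux

namespace BGaux

lemma range_map_sorted {g : ℕ → ℕ} (hg : ∀ i j : ℕ, i ≤ j → g j ≤ g i) (n : ℕ) :
    ((List.range n).map g).Pairwise (· ≥ ·) := by
  rw [List.pairwise_map]
  exact List.pairwise_lt_range.imp (fun {a b} hab => hg a b (le_of_lt hab))

lemma take_getD_drop {l : List ℕ} {s : ℕ} (h : s < l.length) :
    l.take s ++ l.getD s 0 :: l.drop (s+1) = l := by
  have h1 : l.take (s+1) = l.take s ++ [l.getD s 0] := by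
    rw [List.take_succ, List.getElem?_eq_getElem h, List.getD_eq_getElem _ _ h]
    rfl
  have := List.take_append_drop (s+1) l
  rw [h1] at this
  simpa using this

lemma psiF_hit {nu : List ℕ} {k : ℤ}
    (hc : (nu.getD (hskip k nu) 0 : ℤ) - (hskip k nu + 1) = -(2*k)) :
    psiF k nu = dsort (((List.range (nu.getD (hskip k nu) 0)).map
      (fun j => 2 * (conj (nu.drop (hskip k nu + 1))).getD j 0 + 1)) ++
      ((List.range (hskip k nu)).map
        (fun i => 2 * (nu.getD i 0 - nu.getD (hskip k nu) 0)))) := by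
  simp only [psiF]
  rw [if_pos hc]

lemma psiF_skip {nu : List ℕ} {k : ℤ}
    (hc : ¬ ((nu.getD (hskip k nu) 0 : ℤ) - (hskip k nu + 1) = -(2*k))) :
    psiF k nu = dsort (((List.range (hskip k nu)).map
      (fun i => 2 * (nu.getD i 0 - ((((hskip k nu) : ℤ) - 2*k).toNat + 1)) + 1)) ++
      ((List.range ((((hskip k nu) : ℤ) - 2*k).toNat)).map
        (fun j => 2 * (conj (nu.drop (hskip k nu))).getD j 0))) := by
  simp only [psiF]
  rw [if_neg hc]

lemma psiF_sorted (k : ℤ) (nu : List ℕ) : (psiF k nu).Pairwise (· ≥ ·) := by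
  by_cases hc : (nu.getD (hskip k nu) 0 : ℤ) - (hskip k nu + 1) = -(2*k)
  · rw [psiF_hit hc]; exact dsort_sorted _
  · rw [psiF_skip hc]; exact dsort_sorted _

lemma psi_strict (k : ℤ) (nu : List ℕ) : IsStrictPartitionList (psi k nu) :=
  ⟨addStair_sorted (psiF_sorted k nu), addStair_pos _⟩

/-- main inverse lemma -/
lemma psi_main {nu : List ℕ} (k : ℤ) (hnu : IsPartitionList nu) :
    bgRank (psi k nu) = k ∧ phi (psi k nu) = nu := by
  obtain ⟨hsort, hpos⟩ := hnu
  have hanti : ∀ {i j : ℕ}, i ≤ j → nu.getD j 0 ≤ nu.getD i 0 := fun {i j} hij => getD_anti hsort hij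
  have hqs := hskip_le k nu
  by_cases hc : (nu.getD (hskip k nu) 0 : ℤ) - (hskip k nu + 1) = -(2*k)
  · -- hit case
    rw [psi, psiF_hit hc]
    set s := hskip k nu with hsdef
    set T := nu.getD s 0 with hTdef
    have hTk : (T : ℤ) = (s : ℤ) + 1 - 2*k := by omega
    set M := conj (nu.drop (s+1)) with hMdef
    set o := (List.range T).map (fun j => 2 * M.getD j 0 + 1) with hodef
    set e := (List.range s).map (fun i => 2 * (nu.getD i 0 - T)) with hedef
    have hMsorted : M.Pairwise (· ≥ ·) := conj_sorted _
    have hosorted : o.Pairwise (· ≥ ·) :=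
      range_map_sorted (fun i j hij => by have := getD_anti hMsorted hij; omega) T
    have hesorted : e.Pairwise (· ≥ ·) :=
      range_map_sorted (fun i j hij => by have := hanti hij; omega) s
    have hoodd : ∀ x ∈ o, x % 2 = 1 := by
      intro x hx
      rw [hodef, List.mem_map] at hx
      obtain ⟨j, _, rfl⟩ := hx
      omega
    have heeven : ∀ x ∈ e, x % 2 = 0 := by
      intro x hx
      rw [hedef, List.mem_map] at hx
      obtain ⟨i, _, rfl⟩ := hx
      omega
    have holen : o.length = T := by rw [hodef]; simp
    have helen : e.length = s := by rw [hedef]; simp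
    have hfsorted : (dsort (o ++ e)).Pairwise (· ≥ ·) := dsort_sorted _
    have hflen : (dsort (o ++ e)).length = T + s := by
      rw [(dsort_perm (o ++ e)).length_eq, List.length_append, holen, helen]
    have hodds : oddsOf (dsort (o ++ e)) = o := oddsOf_dsort_append hoodd heeven hosorted
    have hevens : evensOf (dsort (o ++ e)) = e := evensOf_dsort_append hoodd heeven hesorted
    have hTOf : TOf (dsort (o ++ e)) = T := by rw [TOf, hodds, holen]
    have hback : stairSub (addStair (dsort (o ++ e))) = dsort (o ++ e) := stairSub_addStair
    have hrodd : (dsort (o ++ e)).length % 2 = 1 := by rw [hflen]; omega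
    constructor
    · -- bgRank = k
      rw [bgRank_eq_bg', bg'_addStair, ← TOf, hTOf, hflen, stairAlt_closed,
        if_neg (by omega : ¬ (T + s) % 2 = 0),
        (Nat.odd_iff.mpr (by omega : (T + s) % 2 = 1)).neg_one_pow]
      omega
    · -- phi (psi k nu) = nu
      rw [phi, hback, phiF_odd (by omega), nuB', hTOf]
      have halpha : alphaOf (dsort (o ++ e)) = (List.range T).map (fun j => M.getD j 0) := by
        rw [alphaOf, hodds, hodef, List.map_map]
        apply List.map_congr_left
        intro j _
        simp only [Function.comp_apply]
        omega
      have hbeta : betaOf (dsort (o ++ e)) = (List.range s).map (fun i => nu.getD i 0 - T) := by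
        rw [betaOf, hevens, hedef, List.map_map]
        apply List.map_congr_left
        intro i _
        simp only [Function.comp_apply]
        omega
      have hMlen : M.length = nu.getD (s+1) 0 := by
        rw [hMdef, length_conj, getD_drop]
      have hMle : M.length ≤ T := by rw [hMlen, hTdef]; exact hanti (by omega)
      have hconjalpha : conj (alphaOf (dsort (o ++ e))) = nu.drop (s+1) := by
        rw [halpha, range_map_getD_eq_append hMle, conj_append_zeros, hMdef,
          conj_conj (drop_sorted hsort _) (fun x hx => hpos x (List.mem_of_mem_drop hx))]
      have hT_le : ∀ i, i < s → T ≤ nu.getD i 0 := by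
        intro i hi
        rw [hTdef]
        exact hanti (le_of_lt hi)
      have hrows : (betaOf (dsort (o ++ e)) ++ [0]).map (· + T)
          = (List.range s).map (fun i => nu.getD i 0) ++ [T] := by
        rw [hbeta, List.map_append, List.map_map]
        congr 1
        · apply List.map_congr_left
          intro i hi
          rw [List.mem_range] at hi
          simp only [Function.comp_apply]
          have := hT_le i hi
          omega
        · simp
      rw [hrows, hconjalpha]
      by_cases hT0 : 0 < T
      · have hslen : s < nu.length := by
          by_contra hle
          rw [hTdef, List.getD_eq_default _ _ (by omega)] at hT0
          omega
        have htake : (List.range s).map (fun i => nu.getD i 0) = nu.take s :=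
          (take_eq_range_map (le_of_lt hslen)).symm
        rw [htake, List.append_assoc, List.singleton_append]
        rw [List.filter_eq_self.mpr]
        · exact take_getD_drop hslen
        · intro a ha
          simp only [decide_eq_true_eq]
          rw [List.mem_append] at ha
          rcases ha with ha | ha
          · exact hpos a (List.mem_of_mem_take ha)
          · rcases List.mem_cons.mp ha with rfl | ha
            · exact hT0
            · exact hpos a (List.mem_of_mem_drop ha)
      · have hT00 : T = 0 := by omega
        have hlen_le : nu.length ≤ s := by
          by_contra hlt
          have : 0 < T := by
            rw [hTdef, List.getD_eq_getElem _ _ (by omega)]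
            exact hpos _ (List.getElem_mem _)
          omega
        have hdrop : nu.drop (s+1) = [] := List.drop_eq_nil_of_le (by omega)
        have hpad : (List.range s).map (fun i => nu.getD i 0)
            = nu ++ List.replicate (s - nu.length) 0 := range_map_getD_eq_append hlen_le
        rw [hdrop, hpad, hT00, List.append_nil, List.append_assoc,
          ← List.replicate_succ' (n := s - nu.length) (a := 0)]
        rw [List.filter_append, List.filter_eq_self.mpr (fun a ha => by
          simp only [decide_eq_true_eq]; exact hpos a ha)]
        rw [List.filter_eq_nil_iff.mpr (fun a ha => by
          rw [List.eq_of_mem_replicate ha]; simp), List.append_nil]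
  · -- skip case
    rw [psi, psiF_skip hc]
    set s := hskip k nu with hsdef
    have hsk : (nu.getD s 0 : ℤ) ≤ (s : ℤ) - 2*k := by omega
    have hk2 : 0 ≤ (s:ℤ) - 2*k := by
      have : (0:ℤ) ≤ (nu.getD s 0 : ℤ) := Int.ofNat_nonneg _
      omega
    set u := ((s:ℤ) - 2*k).toNat with hudef
    have hu : (u : ℤ) = (s:ℤ) - 2*k := by rw [hudef]; omega
    have hslen : s ≤ nu.length := by
      by_contra hlt
      have hs1 : 1 ≤ s := by omega
      have hz : nu.getD (s-1) 0 = 0 := List.getD_eq_default _ _ (by omega)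
      have := hskip_gt k nu (show s - 1 < s by omega)
      rw [hz] at this
      have hz2 : nu.getD s 0 = 0 := List.getD_eq_default _ _ (by omega)
      rw [hz2] at hsk
      push_cast at this
      omega
    have h1 : ∀ i, i < s → u + 1 ≤ nu.getD i 0 := by
      intro i hi
      have h2 := hskip_gt k nu (show s - 1 < s by omega)
      have h3 : nu.getD (s-1) 0 ≤ nu.getD i 0 := hanti (by omega)
      have h4 : ((s : ℕ) - 1 : ℕ) + 1 = s := by omega
      rw [show ((s-1 : ℕ) : ℤ) = (s:ℤ) - 1 by omega] at h2
      omega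
    set M := conj (nu.drop s) with hMdef
    set o := (List.range s).map (fun i => 2 * (nu.getD i 0 - (u+1)) + 1) with hodef
    set e := (List.range u).map (fun j => 2 * M.getD j 0) with hedef
    have hMsorted : M.Pairwise (· ≥ ·) := conj_sorted _
    have hosorted : o.Pairwise (· ≥ ·) :=
      range_map_sorted (fun i j hij => by have := hanti hij; omega) s
    have hesorted : e.Pairwise (· ≥ ·) :=
      range_map_sorted (fun i j hij => by have := getD_anti hMsorted hij; omega) u
    have hoodd : ∀ x ∈ o, x % 2 = 1 := by
      intro x hx
      rw [hodef, List.mem_map] at hx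
      obtain ⟨j, _, rfl⟩ := hx
      omega
    have heeven : ∀ x ∈ e, x % 2 = 0 := by
      intro x hx
      rw [hedef, List.mem_map] at hx
      obtain ⟨i, _, rfl⟩ := hx
      omega
    have holen : o.length = s := by rw [hodef]; simp
    have helen : e.length = u := by rw [hedef]; simp
    have hflen : (dsort (o ++ e)).length = s + u := by
      rw [(dsort_perm (o ++ e)).length_eq, List.length_append, holen, helen]
    have hodds : oddsOf (dsort (o ++ e)) = o := oddsOf_dsort_append hoodd heeven hosorted
    have hevens : evensOf (dsort (o ++ e)) = e := evensOf_dsort_append hoodd heeven hesorted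
    have hTOf : TOf (dsort (o ++ e)) = s := by rw [TOf, hodds, holen]
    have hback : stairSub (addStair (dsort (o ++ e))) = dsort (o ++ e) := stairSub_addStair
    have hreven : (dsort (o ++ e)).length % 2 = 0 := by rw [hflen]; omega
    constructor
    · rw [bgRank_eq_bg', bg'_addStair, ← TOf, hTOf, hflen, stairAlt_closed,
        if_pos (by omega), (Nat.even_iff.mpr (by rw [hflen] at hreven; exact hreven)).neg_one_pow,
        one_mul]
      omega
    · rw [phi, hback, phiF_even hreven, nuA, hTOf, hflen]
      have halpha : alphaOf (dsort (o ++ e))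
          = (List.range s).map (fun i => nu.getD i 0 - (u+1)) := by
        rw [alphaOf, hodds, hodef, List.map_map]
        apply List.map_congr_left
        intro i _
        simp only [Function.comp_apply]
        omega
      have hbeta : betaOf (dsort (o ++ e)) = (List.range u).map (fun j => M.getD j 0) := by
        rw [betaOf, hevens, hedef, List.map_map]
        apply List.map_congr_left
        intro j _
        simp only [Function.comp_apply]
        omega
      have hMlen : M.length = nu.getD s 0 := by
        rw [hMdef, length_conj, getD_drop, Nat.add_zero]
      have hMle : M.length ≤ u := by
        rw [hMlen]
        omega
      have hconjbeta : conj (betaOf (dsort (o ++ e))) = nu.drop s := by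
        rw [hbeta, range_map_getD_eq_append hMle, conj_append_zeros, hMdef,
          conj_conj (drop_sorted hsort _) (fun x hx => hpos x (List.mem_of_mem_drop hx))]
      have hrows : (alphaOf (dsort (o ++ e))).map (· + (s + u - s + 1))
          = (List.range s).map (fun i => nu.getD i 0) := by
        rw [halpha, List.map_map]
        apply List.map_congr_left
        intro i hi
        rw [List.mem_range] at hi
        simp only [Function.comp_apply]
        have := h1 i hi
        have hsu : s + u - s = u := by omega
        rw [hsu]
        omega
      rw [hrows, hconjbeta, ← take_eq_range_map hslen, List.take_append_drop]

end BGaux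

/-- the number of strict partitions of `n` with BG-rank `k` equals the number of
partitions of `(n − 2k² + k)/2` (with unrestricted parts), i.e. partitions `P` with
`2|P| = n − 2k² + k`. -/
theorem strictBG_eq_unrestricted (k : ℤ) (n : ℕ) :
    Set.ncard {L : List ℕ | IsStrictPartitionList L ∧ L.sum = n ∧ bgRank L = k} =
    Set.ncard {P : List ℕ | IsPartitionList P ∧
        2 * (P.sum : ℤ) = (n : ℤ) - (2 * k ^ 2 - k)} := by
  rw [← Nat.card_coe_set_eq, ← Nat.card_coe_set_eq]
  apply Nat.card_congr
  refine
    { toFun := fun L => ⟨BGaux.phi L.1, ?_⟩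
      invFun := fun P => ⟨BGaux.psi k P.1, ?_⟩
      left_inv := ?_
      right_inv := ?_ }
  · obtain ⟨hs, hsum, hbg⟩ := L.2
    obtain ⟨h1, h2⟩ := BGaux.phi_mem k hs hbg
    refine ⟨h1, ?_⟩
    rw [h2, hsum]
  · obtain ⟨hp, hsum⟩ := P.2
    obtain ⟨hbg, hphi⟩ := BGaux.psi_main k hp
    refine ⟨BGaux.psi_strict k P.1, ?_, hbg⟩
    obtain ⟨_, h2⟩ := BGaux.phi_mem k (BGaux.psi_strict k P.1) hbg
    rw [hphi] at h2
    have hcast : ((BGaux.psi k P.1).sum : ℤ) = (n : ℤ) := by linarith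
    exact_mod_cast hcast
  · intro L
    apply Subtype.ext
    exact BGaux.psi_phi k L.2.1 L.2.2.2
  · intro P
    apply Subtype.ext
    exact (BGaux.psi_main k P.2.1).2
end

section
/- Let λ = (λ₁ > λ₂ > … > λ_r) be a partition into distinct parts, and let c₁, c₂, …, c_{λ₁} be the column lengths (from left to right) of the shifted Young diagram of λ (row i is indented i−1 boxes). Then there exists a unique integer m with 0 ≤ m ≤ r such that Σ_{i=1}^{m} (−1)^i c_i = Σ_{i=1}^{λ₁} (−1)^i c_i. -/
open Finset PowerSeries

-- parts are large: L[i] ≥ len - i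
lemma getD_ge (L : List ℕ) (hL : IsStrictPartitionList L) :
    ∀ k i, i + k = L.length → k ≤ L.getD i 0 := by
  intro k
  induction k with
  | zero => intro i _; exact Nat.zero_le _
  | succ k ih =>
    intro i hi
    have hilt : i < L.length := by omega
    have hmem : L.getD i 0 ∈ L := by
      rw [List.getD_eq_getElem L 0 hilt]; exact List.getElem_mem _
    have hpos : 0 < L.getD i 0 := hL.2 _ hmem
    rcases Nat.eq_zero_or_pos k with hk | hk
    · omega
    · have hjlt : i + 1 < L.length := by omega
      have h2 := ih (i + 1) (by omega)
      have hlt : L.getD (i+1) 0 < L.getD i 0 := by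
        rw [List.getD_eq_getElem L 0 hilt, List.getD_eq_getElem L 0 hjlt]
        exact hL.1.rel_get_of_lt (a := ⟨i, hilt⟩) (b := ⟨i+1, hjlt⟩)
          (Fin.mk_lt_mk.mpr (Nat.lt_succ_self i))
      omega

lemma shiftedCol_eq (L : List ℕ) (hL : IsStrictPartitionList L) (j : ℕ)
    (hj : j ≤ L.length) : shiftedCol L j = j := by
  unfold shiftedCol
  have : (Finset.range L.length).filter (fun i => i + 1 ≤ j ∧ j ≤ i + L.getD i 0)
      = Finset.range j := by
    ext i
    simp only [Finset.mem_filter, Finset.mem_range]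
    constructor
    · rintro ⟨_, h1, _⟩; omega
    · intro hij
      have hilt : i < L.length := by omega
      have := getD_ge L hL (L.length - i) i (by omega)
      exact ⟨hilt, by omega, by omega⟩
  rw [this, Finset.card_range]

lemma shiftedCol_le (L : List ℕ) (j : ℕ) : shiftedCol L j ≤ L.length := by
  unfold shiftedCol
  exact le_trans (Finset.card_filter_le _ _) (by rw [Finset.card_range])

lemma shiftedCol_anti (L : List ℕ) {j j' : ℕ} (hj : L.length + 1 ≤ j) (hjj : j ≤ j') :
    shiftedCol L j' ≤ shiftedCol L j := by
  unfold shiftedCol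
  apply Finset.card_le_card
  intro i hi
  simp only [Finset.mem_filter, Finset.mem_range] at hi ⊢
  exact ⟨hi.1, by omega, by omega⟩

-- closed form for initial alternating sums
lemma altColSum_eq (L : List ℕ) (hL : IsStrictPartitionList L) :
    ∀ m, m ≤ L.length → altColSum L m = (-1 : ℤ) ^ m * (((m + 1) / 2 : ℕ) : ℤ) := by
  intro m
  induction m with
  | zero => intro _; simp [altColSum]
  | succ m ih =>
    intro hm
    have h1 := ih (by omega)
    have hcol : shiftedCol L (m + 1) = m + 1 := shiftedCol_eq L hL (m+1) hm
    have : altColSum L (m+1) = altColSum L m + (-1:ℤ)^(m+1) * ((m+1 : ℕ) : ℤ) := by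
      unfold altColSum
      rw [Finset.sum_range_succ, hcol]
    rw [this, h1]
    have hd : ((m + 2) / 2 : ℕ) = (m + 1) - (m + 1) / 2 := by omega
    have hd2 : (m+1)/2 ≤ m + 1 := by omega
    rw [pow_succ]
    push_cast [hd, hd2]
    ring

-- the inverse map showing injectivity of m ↦ (-1)^m * ((m+1)/2)
lemma inv_g (m : ℕ) :
    (if 0 ≤ (-1 : ℤ) ^ m * (((m + 1) / 2 : ℕ) : ℤ)
      then (2 * ((-1 : ℤ) ^ m * (((m + 1) / 2 : ℕ) : ℤ))).toNat
      else (-2 * ((-1 : ℤ) ^ m * (((m + 1) / 2 : ℕ) : ℤ)) - 1).toNat) = m := by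
  rcases Nat.even_or_odd m with he | ho
  · rw [he.neg_one_pow]
    rw [if_pos (by positivity)]
    obtain ⟨t, rfl⟩ := he
    omega
  · rw [ho.neg_one_pow]
    obtain ⟨t, rfl⟩ := ho
    rw [if_neg (by push_cast; omega)]
    omega

-- alternating sums of antitone nonneg sequences
lemma alt_sum_bound (a : ℕ → ℤ) (h0 : ∀ j, 0 ≤ a j) (hm : ∀ j, a (j + 1) ≤ a j) :
    ∀ t, 0 ≤ ∑ j ∈ Finset.range t, (-1 : ℤ) ^ j * a j ∧
      ∑ j ∈ Finset.range t, (-1 : ℤ) ^ j * a j ≤ a 0 := by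
  have even_case : ∀ m, 0 ≤ ∑ j ∈ Finset.range (2*m), (-1 : ℤ) ^ j * a j ∧
      ∑ j ∈ Finset.range (2*m), (-1 : ℤ) ^ j * a j ≤ a 0 - a (2*m) := by
    intro m
    induction m with
    | zero => simp
    | succ m ih =>
      have hrw : 2 * (m+1) = (2*m + 1) + 1 := by ring
      rw [hrw, Finset.sum_range_succ, Finset.sum_range_succ]
      have hp1 : ((-1 : ℤ)) ^ (2*m) = 1 := (even_two_mul m).neg_one_pow
      have hp2 : ((-1 : ℤ)) ^ (2*m+1) = -1 := (Even.add_one (even_two_mul m)).neg_one_pow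
      rw [hp1, hp2]
      have h1 := hm (2*m)
      have h2 := hm (2*m+1)
      have h3 : 2*m + 1 + 1 = 2*(m+1) := by ring
      rw [h3]
      rw [h3] at h2
      constructor
      · nlinarith [ih.1]
      · nlinarith [ih.2]
  intro t
  rcases Nat.even_or_odd t with ⟨m, rfl⟩ | ⟨m, rfl⟩
  · constructor
    · have h := (even_case m).1; rw [two_mul] at h; exact h
    · have h := (even_case m).2; rw [two_mul] at h
      have h0' := h0 (m + m)
      linarith
  · have h := even_case m
    have hrw : 2 * m + 1 = (2*m) + 1 := rfl
    rw [hrw, Finset.sum_range_succ]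
    have hp1 : ((-1 : ℤ)) ^ (2*m) = 1 := (even_two_mul m).neg_one_pow
    rw [hp1]
    have h0' := h0 (2*m)
    constructor
    · linarith [h.1]
    · linarith [h.2]

lemma key_bound (L : List ℕ) (hL : IsStrictPartitionList L) :
    -(L.length + 1 : ℤ) ≤ 2 * altColSum L L.headI ∧
      2 * altColSum L L.headI ≤ (L.length : ℤ) := by
  rcases L.eq_nil_or_concat with rfl | h
  · simp [altColSum]
  · -- L nonempty
    have hne : L ≠ [] := by rcases h with ⟨a, b, rfl⟩; simp
    set r := L.length with hr
    have hrpos : 0 < r := List.length_pos_iff.mpr hne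
    have hhead : L.headI = L.getD 0 0 := by
      cases L with
      | nil => simp at hne
      | cons a l => simp
    have hbig : r ≤ L.headI := by
      rw [hhead]
      exact getD_ge L hL r 0 (by omega)
    obtain ⟨t, ht⟩ : ∃ t, L.headI = r + t := ⟨L.headI - r, by omega⟩
    -- split the sum
    have hsplit : altColSum L L.headI = altColSum L r +
        (-1:ℤ)^(r+1) * ∑ j ∈ Finset.range t, (-1:ℤ)^j * (shiftedCol L (r + 1 + j) : ℤ) := by
      rw [ht]
      unfold altColSum
      rw [Finset.sum_range_add, Finset.mul_sum]
      congr 1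
      apply Finset.sum_congr rfl
      intro j _
      have hidx : r + j + 1 = r + 1 + j := by ring
      rw [hidx, pow_add]
      ring
    set a : ℕ → ℤ := fun j => (shiftedCol L (r + 1 + j) : ℤ) with ha
    have hbnd := alt_sum_bound a (fun j => by positivity)
      (fun j => by
        exact_mod_cast Nat.cast_le.mpr (shiftedCol_anti L (j := r+1+j) (j' := r+1+(j+1)) (by omega) (by omega))) t
    have ha0 : a 0 ≤ (r : ℤ) := by
      simp only [ha]
      exact_mod_cast shiftedCol_le L (r + 1 + 0)
    have hAr : altColSum L r = (-1:ℤ)^r * (((r+1)/2 : ℕ) : ℤ) := altColSum_eq L hL r le_rfl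
    set U := ∑ j ∈ Finset.range t, (-1:ℤ)^j * a j with hU
    rcases Nat.even_or_odd r with he | ho
    · have hp : ((-1:ℤ))^r = 1 := he.neg_one_pow
      have hp1 : ((-1:ℤ))^(r+1) = -1 := (Even.add_one he).neg_one_pow
      have hmod := Nat.even_iff.mp he
      have hval : 2 * (((r+1)/2 : ℕ) : ℤ) = (r : ℤ) := by omega
      rw [hsplit, hAr, hp, hp1]
      constructor <;> nlinarith [hbnd.1, hbnd.2, ha0]
    · have hp : ((-1:ℤ))^r = -1 := ho.neg_one_pow
      have hp1 : ((-1:ℤ))^(r+1) = 1 := by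
        rw [pow_succ, hp]; ring
      have hmod := Nat.odd_iff.mp ho
      have hval : 2 * (((r+1)/2 : ℕ) : ℤ) = (r : ℤ) + 1 := by omega
      rw [hsplit, hAr, hp, hp1]
      constructor <;> nlinarith [hbnd.1, hbnd.2, ha0]

/-- there is a unique `m` with `0 ≤ m ≤ r` such that the alternating sum of the
first `m` shifted column lengths equals the full alternating sum. -/
theorem exists_unique_split (L : List ℕ) (hL : IsStrictPartitionList L) :
    ∃! m : ℕ, m ≤ L.length ∧ altColSum L m = altColSum L L.headI := by
  set v := altColSum L L.headI with hv
  obtain ⟨hlo, hhi⟩ := key_bound L hL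
  set m₀ : ℕ := if 0 ≤ v then (2 * v).toNat else (-2 * v - 1).toNat with hm₀
  have hm₀le : m₀ ≤ L.length := by
    rw [hm₀]; split <;> omega
  have hgm₀ : (-1 : ℤ) ^ m₀ * (((m₀ + 1) / 2 : ℕ) : ℤ) = v := by
    rw [hm₀]
    by_cases h : 0 ≤ v
    · rw [if_pos h]
      obtain ⟨s, hs⟩ : ∃ s : ℕ, (2 * v).toNat = 2 * s := ⟨v.toNat, by omega⟩
      rw [hs, (even_two_mul s).neg_one_pow]
      have : (2 * s + 1) / 2 = s := by omega
      rw [this]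
      omega
    · rw [if_neg h]
      obtain ⟨s, hs⟩ : ∃ s : ℕ, (-2 * v - 1).toNat = 2 * s + 1 := ⟨(-v).toNat - 1, by omega⟩
      rw [hs, (Even.add_one (even_two_mul s)).neg_one_pow]
      have : (2 * s + 1 + 1) / 2 = s + 1 := by omega
      rw [this]
      push_cast
      omega
  refine ⟨m₀, ⟨hm₀le, by rw [altColSum_eq L hL m₀ hm₀le, hgm₀]⟩, ?_⟩
  rintro y ⟨hyle, hy⟩
  have hgy : (-1 : ℤ) ^ y * (((y + 1) / 2 : ℕ) : ℤ) = v := by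
    rw [← altColSum_eq L hL y hyle, hy]
  have h1 := inv_g y
  have h2 := inv_g m₀
  rw [hgy] at h1
  rw [hgm₀] at h2
  rw [← h1, ← h2]
end

section
/- Let λ be a partition into distinct parts with column-length sequence c₁, …, c_{λ₁} of its shifted Young diagram, and let a be the unique integer with 0 ≤ a ≤ #(λ) such that Σ_{i=1}^{a} (−1)^i c_i = Σ_{i=1}^{λ₁} (−1)^i c_i. If the BG-rank of λ is k, then a = −2k if k ≤ 0, and a = 2k − 1 if k > 0. -/
open Finset PowerSeries

section SplitIndexAux

private lemma enumFrom_filter_len' (P : ℕ × ℕ → Bool) :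
    ∀ (L : List ℕ) (s : ℕ),
      (((L.zipIdx s).map Prod.swap).filter P).length
        = ∑ i ∈ Finset.range L.length, if P (s + i, L.getD i 0) then 1 else 0 := by
  intro L
  induction L with
  | nil => simp
  | cons x L ih =>
    intro s
    rw [List.zipIdx_cons, List.map_cons, List.filter_cons, List.length_cons, Finset.sum_range_succ']
    simp only [List.getD_cons_zero, List.getD_cons_succ, add_zero]
    have h1 : ∑ i ∈ Finset.range L.length, (if P (s + (i + 1), L.getD i 0) then 1 else 0)
        = (((L.zipIdx (s + 1)).map Prod.swap).filter P).length := by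
      rw [ih (s + 1)]
      apply Finset.sum_congr rfl
      intro i _
      have : s + (i + 1) = s + 1 + i := by omega
      rw [this]
    rw [h1]
    by_cases hP : P (s, x) <;> simp [hP]

private lemma bgRank_eq_sum' (L : List ℕ) :
    bgRank L = ∑ i ∈ Finset.range L.length,
      (if L.getD i 0 % 2 = 1 then (-1 : ℤ) ^ i else 0) := by
  unfold bgRank
  show ((((L.zipIdx 0).map Prod.swap).filter _).length : ℤ) - ((((L.zipIdx 0).map Prod.swap).filter _).length : ℤ) = _
  rw [enumFrom_filter_len', enumFrom_filter_len']
  push_cast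
  rw [← Finset.sum_sub_distrib]
  apply Finset.sum_congr rfl
  intro i _
  simp only [zero_add]
  rcases Nat.even_or_odd i with hi | hi
  · have h2 : i % 2 = 0 := Nat.even_iff.mp hi
    have hb : (L.getD i 0 % 2 == 1 && i % 2 == 0) = (L.getD i 0 % 2 == 1) := by simp [h2]
    have hb2 : (L.getD i 0 % 2 == 1 && i % 2 == 1) = false := by simp [h2]
    rw [hb, hb2]
    simp only [Bool.false_eq_true, if_false, beq_iff_eq, hi.neg_one_pow]
    split_ifs <;> ring
  · have h2 : i % 2 = 1 := Nat.odd_iff.mp hi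
    have hb : (L.getD i 0 % 2 == 1 && i % 2 == 0) = false := by simp [h2]
    have hb2 : (L.getD i 0 % 2 == 1 && i % 2 == 1) = (L.getD i 0 % 2 == 1) := by simp [h2]
    rw [hb, hb2]
    simp only [Bool.false_eq_true, if_false, beq_iff_eq, hi.neg_one_pow]
    split_ifs <;> ring

private lemma chain_le' (L : List ℕ) (h : L.Pairwise (· > ·)) :
    ∀ k i, i + k < L.length → L.getD (i + k) 0 + k ≤ L.getD i 0 := by
  intro k
  induction k with
  | zero => simp
  | succ k ih =>
    intro i hi
    have h1 : i + 1 < L.length := by omega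
    have hadj : L.getD (i + 1) 0 < L.getD i 0 := by
      rw [List.getD_eq_get L 0 ⟨i + 1, h1⟩, List.getD_eq_get L 0 ⟨i, by omega⟩]
      exact List.Pairwise.rel_get_of_lt h (by exact Nat.lt_succ_self i)
    have h2 := ih (i + 1) (by omega)
    have h3 : i + 1 + k = i + (k + 1) := by omega
    rw [h3] at h2
    omega

private lemma getD_pos' (L : List ℕ) (hpos : ∀ x ∈ L, 0 < x) (i : ℕ) (hi : i < L.length) :
    0 < L.getD i 0 := by
  rw [List.getD_eq_get L 0 ⟨i, hi⟩]
  exact hpos _ (L.get_mem ⟨i, hi⟩)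

private lemma getD_ge' (L : List ℕ) (hS : L.Pairwise (· > ·)) (hpos : ∀ x ∈ L, 0 < x)
    (i : ℕ) (hi : i < L.length) : L.length ≤ i + L.getD i 0 := by
  have h1 := chain_le' L hS (L.length - 1 - i) i (by omega)
  have h2 := getD_pos' L hpos (i + (L.length - 1 - i)) (by omega)
  omega

private lemma getD_le_head' (L : List ℕ) (hS : L.Pairwise (· > ·))
    (i : ℕ) (hi : i < L.length) : i + L.getD i 0 ≤ L.headI := by
  have h1 := chain_le' L hS i 0 (by omega)
  have h2 : L.headI = L.getD 0 0 := by
    cases L with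
    | nil => simp at hi
    | cons x t => simp [List.headI]
  simp only [zero_add] at h1
  omega

private lemma shiftedCol_eq' (L : List ℕ) (hS : L.Pairwise (· > ·)) (hpos : ∀ x ∈ L, 0 < x)
    (j : ℕ) (h2 : j ≤ L.length) : shiftedCol L j = j := by
  unfold shiftedCol
  have hset : (Finset.range L.length).filter (fun i => i + 1 ≤ j ∧ j ≤ i + L.getD i 0)
      = Finset.range j := by
    ext i
    simp only [Finset.mem_filter, Finset.mem_range]
    constructor
    · rintro ⟨_, h, _⟩; omega
    · intro hij
      have hin : i < L.length := by omega
      have := getD_ge' L hS hpos i hin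
      exact ⟨hin, by omega, by omega⟩
  rw [hset, Finset.card_range]

private lemma altColSum_headI' (L : List ℕ) (hS : L.Pairwise (· > ·)) (hpos : ∀ x ∈ L, 0 < x) :
    altColSum L L.headI = -(bgRank L) := by
  unfold altColSum shiftedCol
  simp only [Finset.card_filter]
  push_cast
  have step1 : ∀ j ∈ Finset.range L.headI,
      (-1 : ℤ) ^ (j + 1) * (∑ i ∈ Finset.range L.length,
        if i ≤ j ∧ j + 1 ≤ i + L.getD i 0 then (1 : ℤ) else 0)
      = ∑ i ∈ Finset.range L.length,
        (if i ≤ j ∧ j < i + L.getD i 0 then (-1 : ℤ) ^ (j + 1) else 0) := by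
    intro j _
    rw [Finset.mul_sum]
    apply Finset.sum_congr rfl
    intro i _
    have hiff : (i ≤ j ∧ j + 1 ≤ i + L.getD i 0) ↔ (i ≤ j ∧ j < i + L.getD i 0) := by
      omega
    rw [if_congr hiff rfl rfl]
    split_ifs <;> ring
  rw [Finset.sum_congr rfl step1, Finset.sum_comm]
  rw [bgRank_eq_sum', ← Finset.sum_neg_distrib]
  apply Finset.sum_congr rfl
  intro i hi
  rw [Finset.mem_range] at hi
  have hIco : (Finset.range L.headI).filter (fun j => i ≤ j ∧ j < i + L.getD i 0)
      = Finset.Ico i (i + L.getD i 0) := by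
    ext j
    simp only [Finset.mem_filter, Finset.mem_range, Finset.mem_Ico]
    have := getD_le_head' L hS i hi
    omega
  rw [← Finset.sum_filter, hIco, Finset.sum_Ico_eq_sum_range]
  simp only [Nat.add_sub_cancel_left]
  have hsplit : ∀ r, (-1 : ℤ) ^ (i + r + 1) = (-1) ^ (i + 1) * (-1) ^ r := by
    intro r; ring
  rw [Finset.sum_congr rfl (fun r _ => hsplit r), ← Finset.mul_sum, neg_one_geom_sum]
  by_cases hodd : L.getD i 0 % 2 = 1
  · rw [if_neg (by simpa [Nat.even_iff] using hodd), if_pos hodd]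
    ring
  · rw [if_pos (by rw [Nat.even_iff]; omega), if_neg hodd]
    ring

private lemma alt_eval' : ∀ m : ℕ,
    (∑ i ∈ Finset.range (2 * m), (-1 : ℤ) ^ (i + 1) * (i + 1)) = m ∧
    (∑ i ∈ Finset.range (2 * m + 1), (-1 : ℤ) ^ (i + 1) * (i + 1)) = -(m + 1) := by
  intro m
  induction m with
  | zero => norm_num
  | succ m ih =>
    obtain ⟨ih1, ih2⟩ := ih
    have he : (-1 : ℤ) ^ (2 * m + 1 + 1) = 1 := by
      rw [show 2 * m + 1 + 1 = 2 * (m + 1) by ring, pow_mul]; norm_num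
    have ho : (-1 : ℤ) ^ (2 * m + 2 + 1) = -1 := by
      rw [show 2 * m + 2 + 1 = 2 * (m + 1) + 1 by ring, pow_succ, pow_mul]; norm_num
    constructor
    · rw [show 2 * (m + 1) = (2 * m + 1) + 1 by ring, Finset.sum_range_succ, ih2, he]
      push_cast; ring
    · rw [show 2 * (m + 1) + 1 = (2 * m + 2) + 1 by ring, Finset.sum_range_succ,
        show 2 * m + 2 = (2 * m + 1) + 1 by ring, Finset.sum_range_succ, ih2, he, ho]
      push_cast; ring

end SplitIndexAux

/-- for a strict partition with BG-rank `k`, the split index `a` satisfies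
`a = −2k` if `k ≤ 0` and `a = 2k − 1` if `k > 0`. -/
theorem split_index_eq (L : List ℕ) (hL : IsStrictPartitionList L) (a : ℕ)
    (ha : a ≤ L.length ∧ altColSum L a = altColSum L L.headI)
    (k : ℤ) (hk : bgRank L = k) :
    (a : ℤ) = if k ≤ 0 then -2 * k else 2 * k - 1 := by
  obtain ⟨haN, haS⟩ := ha
  obtain ⟨hS, hpos⟩ := hL
  have hsum : altColSum L L.headI = -(bgRank L) := altColSum_headI' L hS hpos
  have hA : altColSum L a = ∑ i ∈ Finset.range a, (-1 : ℤ) ^ (i + 1) * ((i : ℤ) + 1) := by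
    unfold altColSum
    apply Finset.sum_congr rfl
    intro i hi
    rw [Finset.mem_range] at hi
    rw [shiftedCol_eq' L hS hpos (i + 1) (by omega)]
    push_cast; ring
  have hfa : (∑ i ∈ Finset.range a, (-1 : ℤ) ^ (i + 1) * ((i : ℤ) + 1)) = -k := by
    rw [← hA, haS, hsum, hk]
  rcases Nat.even_or_odd a with ⟨m, hm⟩ | ⟨m, hm⟩
  · have ha2 : a = 2 * m := by omega
    subst ha2
    have hval := (alt_eval' m).1
    have hmk : (m : ℤ) = -k := by
      rw [← hval, hfa]
    rw [if_pos (by omega : k ≤ 0)]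
    push_cast
    omega
  · have ha2 : a = 2 * m + 1 := by omega
    subst ha2
    have hval := (alt_eval' m).2
    have hmk : -((m : ℤ) + 1) = -k := by
      rw [← hval, hfa]
    rw [if_neg (by omega : ¬ k ≤ 0)]
    push_cast
    omega
end

section
/- For fixed a ≥ 0 and b ≥ 1, there is a bijection φ_a between the set S_{a,b} of (a,b)-sequences and the set P_{a,b} of partitions λ whose a-Durfee rectangle has size ⌈b/2⌉ × (⌈b/2⌉ + a) and which satisfy λ_{b/2} > a + b/2 if b is even, or λ_{(b+1)/2} = a + (b+1)/2 if b is odd; moreover |Δ| = 2|φ_a(Δ)| for all Δ ∈ S_{a,b}. -/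
open Finset PowerSeries

/-- The size of the `a`-Durfee rectangle of a partition: the largest `i` such that an
`i × (i + a)` rectangle fits inside the Young diagram. -/
def durfee (a : ℕ) (L : List ℕ) : ℕ :=
  Nat.findGreatest (fun i => i ≤ L.length ∧ i + a ≤ L.getD (i - 1) 0) L.length

/-- Membership in `P_{a,b}`: the `a`-Durfee rectangle has `⌈b/2⌉` rows, and
`λ_{b/2} > a + b/2` if `b` is even, `λ_{(b+1)/2} = a + (b+1)/2` if `b` is odd. -/
def InPab (a b : ℕ) (L : List ℕ) : Prop :=
  IsPartitionList L ∧ durfee a L = (b + 1) / 2 ∧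
  (if b % 2 = 0 then a + b / 2 < L.getD (b / 2 - 1) 0
   else L.getD ((b + 1) / 2 - 1) 0 = a + (b + 1) / 2)

namespace FT

def cnt (L : List ℕ) (v : ℕ) : ℕ := L.countP (fun x => v ≤ x)

def conj (L : List ℕ) : List ℕ := (List.range (L.getD 0 0)).map (fun j => cnt L (j+1))

lemma getD_anti {L : List ℕ} (h : L.Pairwise (· ≥ ·)) {i j : ℕ} (hij : i ≤ j)
    (hj : j < L.length) : L.getD j 0 ≤ L.getD i 0 := by
  rcases eq_or_lt_of_le hij with rfl | hlt
  · exact le_refl _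
  · rw [List.getD_eq_getElem _ _ hj, List.getD_eq_getElem _ _ (lt_trans hlt hj)]
    exact (List.pairwise_iff_getElem.mp h) i j _ _ hlt

lemma cnt_lt_iff {L : List ℕ} (h : L.Pairwise (· ≥ ·)) (v i : ℕ) :
    i < cnt L v ↔ i < L.length ∧ v ≤ L.getD i 0 := by
  induction L generalizing i with
  | nil => simp [cnt]
  | cons x xs ih =>
    have hx : ∀ y ∈ xs, y ≤ x := fun y hy => (List.pairwise_cons.mp h).1 y hy
    have hxs : xs.Pairwise (· ≥ ·) := (List.pairwise_cons.mp h).2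
    rw [cnt, List.countP_cons]
    by_cases hvx : v ≤ x
    · simp only [hvx, decide_eq_true_eq, if_pos]
      cases i with
      | zero =>
        simp only [List.length_cons, List.getD_cons_zero]
        exact ⟨fun _ => ⟨by omega, hvx⟩, fun _ => by omega⟩
      | succ i =>
        have := ih hxs i
        rw [cnt] at this
        simp only [List.length_cons, List.getD_cons_succ]
        omega
    · have hz : xs.countP (fun x => decide (v ≤ x)) = 0 := by
        rw [List.countP_eq_zero]
        intro y hy
        simpa using lt_of_le_of_lt (hx y hy) (not_le.mp hvx)
      simp only [decide_eq_true_eq, hvx, if_false, hz, Nat.add_zero]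
      simp only [Nat.not_lt_zero, false_iff, not_and, not_le]
      intro hi
      cases i with
      | zero => simpa using not_le.mp hvx
      | succ i =>
        have hilen : i < xs.length := by simpa using hi
        simp only [List.getD_cons_succ]
        calc xs.getD i 0 ≤ x := by
              have := hx (xs.getD i 0)
                (by rw [List.getD_eq_getElem _ _ hilen]; exact List.getElem_mem _)
              exact this
          _ < v := not_le.mp hvx

lemma cnt_anti (L : List ℕ) {v w : ℕ} (hvw : v ≤ w) : cnt L w ≤ cnt L v := by
  apply List.countP_mono_left
  intro x _ hx
  simp only [decide_eq_true_eq] at *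
  omega

lemma cnt_le_length (L : List ℕ) (v : ℕ) : cnt L v ≤ L.length := List.countP_le_length

lemma length_conj (L : List ℕ) : (conj L).length = L.getD 0 0 := by simp [conj]

lemma conj_getD {L : List ℕ} (h : L.Pairwise (· ≥ ·)) (j : ℕ) :
    (conj L).getD j 0 = cnt L (j+1) := by
  by_cases hj : j < L.getD 0 0
  · rw [conj, List.getD_eq_getElem _ _ (by simpa using hj)]
    simp
  · rw [List.getD_eq_default _ _ (by rw [length_conj]; omega)]
    symm
    by_contra hne
    have hpos : 0 < cnt L (j+1) := Nat.pos_of_ne_zero fun hh => hne hh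
    rw [cnt_lt_iff h] at hpos
    have := getD_anti h (Nat.zero_le 0) hpos.1
    omega

lemma conj_sorted (L : List ℕ) : (conj L).Pairwise (· ≥ ·) := by
  apply List.Pairwise.map
  · intro i j (hij : i < j)
    exact cnt_anti L (by omega)
  · exact List.pairwise_lt_range

lemma conj_pos {L : List ℕ} (h : L.Pairwise (· ≥ ·)) : ∀ x ∈ conj L, 0 < x := by
  intro x hx
  rw [conj, List.mem_map] at hx
  obtain ⟨j, hj, rfl⟩ := hx
  rw [List.mem_range] at hj
  have hlen : 0 < L.length := by
    by_contra hl
    rw [List.getD_eq_default _ _ (by omega)] at hj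
    omega
  have : (0:ℕ) < cnt L (j+1) ↔ _ := cnt_lt_iff h (j+1) 0
  rw [this]
  exact ⟨hlen, by omega⟩

lemma countP_range_lt (c M : ℕ) : (List.range M).countP (fun j => decide (j < c)) = min c M := by
  induction M with
  | zero => simp
  | succ M ih =>
    rw [List.range_succ, List.countP_append, ih, List.countP_singleton]
    by_cases h : M < c <;> simp [h] <;> omega

lemma cnt_conj {L : List ℕ} (h : L.Pairwise (· ≥ ·)) (i : ℕ) :
    cnt (conj L) (i+1) = L.getD i 0 := by
  rw [cnt, conj, List.countP_map]
  have hcongr : ∀ j ∈ List.range (L.getD 0 0),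
      ((fun x => decide (i+1 ≤ x)) ∘ (fun j => cnt L (j+1))) j
        = decide (i < L.length ∧ j+1 ≤ L.getD i 0) := by
    intro j _
    simp only [Function.comp]
    have := cnt_lt_iff h (j+1) i
    exact decide_eq_decide.mpr this
  rw [List.countP_congr (by intro x hx; rw [hcongr x hx])]
  by_cases hi : i < L.length
  · have : ∀ j, (decide (i < L.length ∧ j+1 ≤ L.getD i 0)) = decide (j < L.getD i 0) := by
      intro j; simp [hi]
    simp only [this]
    rw [countP_range_lt]
    exact Nat.min_eq_left (getD_anti h (Nat.zero_le i) hi)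
  · rw [List.getD_eq_default _ _ (by omega)]
    rw [List.countP_eq_zero.mpr (by intro j _; simpa using hi)]

lemma sum_getD (L : List ℕ) : L.sum = ∑ i ∈ Finset.range L.length, L.getD i 0 := by
  induction L with
  | nil => simp
  | cons x xs ih =>
    rw [List.sum_cons, List.length_cons, Finset.sum_range_succ']
    simp [ih, Nat.add_comm]

lemma countP_eq_sum (L : List ℕ) (p : ℕ → Bool) :
    L.countP p = ∑ i ∈ Finset.range L.length, if p (L.getD i 0) then 1 else 0 := by
  induction L with
  | nil => simp
  | cons x xs ih =>
    rw [List.countP_cons, List.length_cons, Finset.sum_range_succ']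
    simp [ih]

lemma length_pos_of_getD {L : List ℕ} {i : ℕ} (h : 0 < L.getD i 0) : i < L.length := by
  by_contra hl
  rw [List.getD_eq_default _ _ (by omega)] at h
  omega

lemma sum_range_ite_lt (c M : ℕ) : (∑ j ∈ Finset.range M, if j + 1 ≤ c then 1 else 0) = min c M := by
  induction M with
  | zero => simp
  | succ M ih =>
    rw [Finset.sum_range_succ, ih]
    by_cases h : M + 1 ≤ c <;> simp [h] <;> omega

lemma sum_conj {L : List ℕ} (h : L.Pairwise (· ≥ ·)) : (conj L).sum = L.sum := by
  rw [sum_getD, length_conj]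
  calc ∑ j ∈ Finset.range (L.getD 0 0), (conj L).getD j 0
      = ∑ j ∈ Finset.range (L.getD 0 0), cnt L (j+1) := by
        exact Finset.sum_congr rfl fun j _ => conj_getD h j
    _ = ∑ j ∈ Finset.range (L.getD 0 0), ∑ i ∈ Finset.range L.length,
          if j+1 ≤ L.getD i 0 then 1 else 0 := by
        refine Finset.sum_congr rfl fun j _ => ?_
        rw [cnt, countP_eq_sum]
        exact Finset.sum_congr rfl fun i _ => by simp
    _ = ∑ i ∈ Finset.range L.length, ∑ j ∈ Finset.range (L.getD 0 0),
          if j + 1 ≤ L.getD i 0 then 1 else 0 := by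
        rw [Finset.sum_comm]
    _ = ∑ i ∈ Finset.range L.length, L.getD i 0 := by
        refine Finset.sum_congr rfl fun i hi => ?_
        rw [sum_range_ite_lt]
        exact Nat.min_eq_left (getD_anti h (Nat.zero_le i) (Finset.mem_range.mp hi))
    _ = L.sum := (sum_getD L).symm

lemma conj_conj {L : List ℕ} (hs : L.Pairwise (· ≥ ·)) (hp : ∀ x ∈ L, 0 < x) :
    conj (conj L) = L := by
  have hlen : (conj (conj L)).length = L.length := by
    rw [length_conj, conj_getD hs 0]
    rw [cnt, List.countP_eq_length]
    intro x hx
    simpa using Nat.one_le_of_lt (hp x hx)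
  apply List.ext_getElem hlen
  intro n h1 h2
  have e1 : (conj (conj L)).getD n 0 = L.getD n 0 := by
    rw [conj_getD (conj_sorted L) n, cnt_conj hs]
  rw [List.getD_eq_getElem _ _ h1, List.getD_eq_getElem _ _ h2] at e1
  exact e1

lemma zeros_suffix {L : List ℕ} (hs : L.Pairwise (· ≥ ·)) :
    L.dropWhile (fun x => x ≠ 0) = List.replicate (L.length - (L.takeWhile (fun x => x ≠ 0)).length) 0 := by
  induction L with
  | nil => simp
  | cons x xs ih =>
    have hx' : ∀ y ∈ xs, y ≤ x := fun y hy => (List.pairwise_cons.mp hs).1 y hy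
    have hxs : xs.Pairwise (· ≥ ·) := (List.pairwise_cons.mp hs).2
    by_cases hx : x = 0
    · subst hx
      rw [List.takeWhile_cons, List.dropWhile_cons]
      simp only [ne_eq, not_true_eq_false, decide_false, Bool.false_eq_true, if_false]
      rw [List.eq_replicate_iff]
      refine ⟨by simp, ?_⟩
      intro b hb
      rcases List.mem_cons.mp hb with rfl | hb'
      · rfl
      · exact Nat.le_zero.mp (hx' b hb')
    · rw [List.takeWhile_cons, List.dropWhile_cons]
      simp only [ne_eq, hx, not_false_eq_true, decide_true, if_true]
      rw [ih hxs]
      congr 1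
      simp

lemma conj_conj_pad {L : List ℕ} (hs : L.Pairwise (· ≥ ·)) :
    conj (conj L) ++ List.replicate (L.length - cnt L 1) 0 = L := by
  have hlen : (conj (conj L)).length = cnt L 1 := by
    rw [length_conj, conj_getD hs 0]
  have hc1 : cnt L 1 ≤ L.length := cnt_le_length L 1
  apply List.ext_getElem
  · simp [hlen]; omega
  · intro n h1 h2
    have h1' : n < L.length := by simpa using h2
    have hg : (conj (conj L) ++ List.replicate (L.length - cnt L 1) 0).getD n 0 = L.getD n 0 := by
      by_cases hn : n < cnt L 1
      · rw [List.getD_append _ _ _ _ (by omega)]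
        rw [conj_getD (conj_sorted L) n, cnt_conj hs]
      · rw [List.getD_append_right _ _ _ _ (by omega)]
        have : ¬ (n < L.length ∧ 1 ≤ L.getD n 0) := fun hh => hn ((cnt_lt_iff hs 1 n).mpr hh)
        have hz : L.getD n 0 = 0 := by omega
        rw [hz]
        rcases Nat.lt_or_ge (n - (conj (conj L)).length) (L.length - cnt L 1) with hlt | hge
        · rw [List.getD_eq_getElem _ _ (by simpa using hlt)]
          simp
        · rw [List.getD_eq_default _ _ (by simpa using hge)]
    rw [List.getD_eq_getElem _ _ h1, List.getD_eq_getElem _ _ h2] at hg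
    exact hg

lemma conj_append_zeros (L : List ℕ) (k : ℕ) :
    conj (L ++ List.replicate k 0) = conj L := by
  have hrep : ∀ v : ℕ, (List.replicate k 0).countP (fun x => decide (v + 1 ≤ x)) = 0 := by
    intro v
    rw [List.countP_eq_zero]
    intro a ha
    simp [List.eq_of_mem_replicate ha]
  have hcnt : ∀ v, cnt (L ++ List.replicate k 0) (v+1) = cnt L (v+1) := by
    intro v
    rw [cnt, cnt, List.countP_append, hrep, Nat.add_zero]
  have hhead : (L ++ List.replicate k 0).getD 0 0 = L.getD 0 0 := by
    rcases L with _ | ⟨x, xs⟩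
    · rcases k with _ | k <;> simp [List.getD]
    · simp
  rw [conj, conj, hhead]
  exact List.map_congr_left fun j _ => hcnt j

/-- alternating sum with + on first entry -/
def altE (L : List ℕ) : ℤ := ∑ i ∈ Finset.range L.length, (-1)^i * (L.getD i 0 : ℤ)

lemma neg_one_sum (n : ℕ) : (∑ i ∈ Finset.range n, (-1 : ℤ)^i) = if n % 2 = 1 then 1 else 0 := by
  induction n with
  | zero => simp
  | succ n ih =>
    rw [Finset.sum_range_succ, ih]
    rcases Nat.even_or_odd n with he | ho
    · have h1 : n % 2 = 0 := Nat.even_iff.mp he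
      have h2 : (n+1) % 2 = 1 := by omega
      simp [h1, h2, Even.neg_one_pow he]
    · have h1 : n % 2 = 1 := Nat.odd_iff.mp ho
      have h2 : (n+1) % 2 = 0 := by omega
      simp [h1, h2, Odd.neg_one_pow ho]

lemma sum_range_ite (c n : ℕ) (h : c ≤ n) (f : ℕ → ℤ) :
    (∑ i ∈ Finset.range n, if i < c then f i else 0) = ∑ i ∈ Finset.range c, f i := by
  rw [← Finset.sum_subset (Finset.range_subset_range.mpr h)
      (fun x _ hnx => if_neg (by simp at hnx ⊢; omega))]
  exact Finset.sum_congr rfl fun i hi => if_pos (Finset.mem_range.mp hi)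

lemma altE_eq_countP_odd {L : List ℕ} (hs : L.Pairwise (· ≥ ·)) :
    altE L = ((conj L).countP (fun x => x % 2 == 1) : ℤ) := by
  have key : ∀ i ∈ Finset.range L.length, ((L.getD i 0 : ℤ)) =
      ∑ j ∈ Finset.range (L.getD 0 0), if j + 1 ≤ L.getD i 0 then (1:ℤ) else 0 := by
    intro i hi
    have h1 := sum_range_ite_lt (L.getD i 0) (L.getD 0 0)
    have h2 : min (L.getD i 0) (L.getD 0 0) = L.getD i 0 :=
      Nat.min_eq_left (getD_anti hs (Nat.zero_le i) (Finset.mem_range.mp hi))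
    rw [h2] at h1
    calc ((L.getD i 0 : ℤ)) = ((∑ j ∈ Finset.range (L.getD 0 0),
          if j + 1 ≤ L.getD i 0 then 1 else 0 : ℕ) : ℤ) := by rw [h1]
      _ = _ := by push_cast; rfl
  rw [altE]
  calc ∑ i ∈ Finset.range L.length, (-1:ℤ)^i * (L.getD i 0 : ℤ)
      = ∑ i ∈ Finset.range L.length, ∑ j ∈ Finset.range (L.getD 0 0),
          ((-1:ℤ)^i * if j + 1 ≤ L.getD i 0 then (1:ℤ) else 0) := by
        refine Finset.sum_congr rfl fun i hi => ?_
        rw [key i hi, Finset.mul_sum]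
    _ = ∑ j ∈ Finset.range (L.getD 0 0), ∑ i ∈ Finset.range L.length,
          ((-1:ℤ)^i * if j + 1 ≤ L.getD i 0 then (1:ℤ) else 0) := Finset.sum_comm
    _ = ∑ j ∈ Finset.range (L.getD 0 0), (if (cnt L (j+1)) % 2 = 1 then (1:ℤ) else 0) := by
        refine Finset.sum_congr rfl fun j _ => ?_
        have step1 : ∀ i ∈ Finset.range L.length,
            ((-1:ℤ)^i * if j + 1 ≤ L.getD i 0 then (1:ℤ) else 0)
              = if i < cnt L (j+1) then (-1:ℤ)^i else 0 := by
          intro i hi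
          have hiff : i < cnt L (j+1) ↔ j + 1 ≤ L.getD i 0 := by
            rw [cnt_lt_iff hs]
            exact ⟨fun hh => hh.2, fun hh => ⟨Finset.mem_range.mp hi, hh⟩⟩
          by_cases hc : j + 1 ≤ L.getD i 0
          · rw [if_pos hc, if_pos (hiff.mpr hc), mul_one]
          · rw [if_neg hc, if_neg (fun hh => hc (hiff.mp hh)), mul_zero]
        rw [Finset.sum_congr rfl step1,
          sum_range_ite _ _ (cnt_le_length L (j+1)) _, neg_one_sum]
    _ = (((conj L).countP (fun x => x % 2 == 1) : ℕ) : ℤ) := by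
        rw [countP_eq_sum, length_conj]
        push_cast
        refine Finset.sum_congr rfl fun j _ => ?_
        rw [conj_getD hs j]
        by_cases hodd : (cnt L (j+1)) % 2 = 1
        · rw [if_pos hodd, if_pos (by simpa using hodd)]
        · rw [if_neg hodd, if_neg (by simpa using hodd)]

lemma sorted_map_mono {L : List ℕ} (h : L.Pairwise (· ≥ ·)) {f : ℕ → ℕ}
    (hf : ∀ x y, y ≤ x → f y ≤ f x) : (L.map f).Pairwise (· ≥ ·) :=
  List.Pairwise.map f (fun a b hab => hf a b hab) h

lemma odd_sum {o : List ℕ} (h : ∀ x ∈ o, x % 2 = 1) :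
    o.sum = 2 * (o.map (· / 2)).sum + o.length := by
  induction o with
  | nil => simp
  | cons x xs ih =>
    have hx := h x (by simp)
    have := ih (fun y hy => h y (by simp [hy]))
    simp only [List.sum_cons, List.map_cons, List.length_cons]
    omega

lemma odd_map_div {o : List ℕ} (h : ∀ x ∈ o, x % 2 = 1) :
    (o.map (· / 2)).map (fun x => 2 * x + 1) = o := by
  rw [List.map_map]
  have : ∀ x ∈ o, ((fun x => 2 * x + 1) ∘ fun x => x / 2) x = id x := by
    intro x hx
    have := h x hx
    simp only [id, Function.comp]
    omega
  rw [List.map_congr_left this, List.map_id]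

lemma even_sum {o : List ℕ} (h : ∀ x ∈ o, x % 2 = 0) :
    o.sum = 2 * (o.map (· / 2)).sum := by
  induction o with
  | nil => simp
  | cons x xs ih =>
    have hx := h x (by simp)
    have := ih (fun y hy => h y (by simp [hy]))
    simp only [List.sum_cons, List.map_cons]
    omega

lemma even_map_div {o : List ℕ} (h : ∀ x ∈ o, x % 2 = 0) :
    (o.map (· / 2)).map (fun x => 2 * x) = o := by
  rw [List.map_map]
  have : ∀ x ∈ o, ((fun x => 2 * x) ∘ fun x => x / 2) x = id x := by
    intro x hx
    have := h x hx
    simp only [id, Function.comp]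
    omega
  rw [List.map_congr_left this, List.map_id]

def oddsOf (f : List ℕ) : List ℕ := f.filter (fun x => x % 2 == 1)
def evensOf (f : List ℕ) : List ℕ := f.filter (fun x => x % 2 == 0)

lemma oddsOf_append_evensOf_perm (f : List ℕ) : (oddsOf f ++ evensOf f).Perm f := by
  have : evensOf f = f.filter (fun x => !(x % 2 == 1)) := by
    apply List.filter_congr
    intro x _
    rcases Nat.even_or_odd x with he | ho
    · have := Nat.even_iff.mp he; simp [this]
    · have := Nat.odd_iff.mp ho; simp [this]
  rw [this]
  exact List.filter_append_perm _ f

lemma mem_oddsOf {f : List ℕ} {x : ℕ} (hx : x ∈ oddsOf f) : x ∈ f ∧ x % 2 = 1 := by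
  have := List.mem_filter.mp hx
  simpa using this

lemma mem_evensOf {f : List ℕ} {x : ℕ} (hx : x ∈ evensOf f) : x ∈ f ∧ x % 2 = 0 := by
  have := List.mem_filter.mp hx
  simpa using this

/-- the head staircase -/
def HL (a b : ℕ) : List ℕ := (List.range b).map (fun i => a + i + 1)

@[simp] lemma length_HL (a b : ℕ) : (HL a b).length = b := by simp [HL]

lemma getD_HL {a b i : ℕ} (hi : i < b) : (HL a b).getD i 0 = a + i + 1 := by
  rw [HL, List.getD_eq_getElem _ _ (by simpa using hi)]
  simp

lemma sum_HL (a b : ℕ) : (HL a b).sum = a * b + b * (b+1) / 2 := by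
  induction b with
  | zero => simp [HL]
  | succ b ih =>
    rw [HL, List.range_succ, List.map_append, List.sum_append]
    rw [HL] at ih
    simp only [List.map_cons, List.map_nil, List.sum_cons, List.sum_nil]
    have h2 : (b+1) * (b+2) / 2 = b * (b+1) / 2 + (b+1) := by
      have : (b+1) * (b+2) = b * (b+1) + 2 * (b+1) := by ring
      omega
    have h3 : a * (b+1) = a * b + a := by ring
    rw [show b + 1 + 1 = b + 2 from rfl]
    omega

def HS (a b : ℕ) : ℤ := ∑ i ∈ Finset.range b, (-1:ℤ)^(i+1) * ((a + i + 1 : ℕ) : ℤ)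

lemma HS_step (a b : ℕ) : HS a (b+1) = HS a b + (-1:ℤ)^(b+1) * ((a + b + 1 : ℕ) : ℤ) := by
  rw [HS, HS, Finset.sum_range_succ]

lemma HS_even (a k : ℕ) : HS a (2*k) = k := by
  induction k with
  | zero => simp [HS]
  | succ k ih =>
    have h1 : 2 * (k+1) = (2*k) + 1 + 1 := by ring
    rw [h1, HS_step, HS_step, ih]
    have h2 : (-1:ℤ)^(2*k+1) = -1 := Odd.neg_one_pow ⟨k, by ring⟩
    have h3 : (-1:ℤ)^(2*k+1+1) = 1 := Even.neg_one_pow ⟨k+1, by ring⟩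
    rw [h2, h3]
    push_cast
    ring

lemma HS_odd (a k : ℕ) : HS a (2*k+1) = -((a + k + 1 : ℕ) : ℤ) := by
  rw [HS_step, HS_even]
  have h2 : (-1:ℤ)^(2*k+1) = -1 := Odd.neg_one_pow ⟨k, by ring⟩
  rw [h2]
  push_cast
  ring

def TS (d : List ℕ) : ℤ := ∑ i ∈ Finset.range d.length, (-1:ℤ)^(i+1) * (d.getD i 0 : ℤ)

lemma TS_append (A B : List ℕ) : TS (A ++ B) = TS A + (-1:ℤ)^A.length * (- altE B) := by
  rw [TS, List.length_append, Finset.sum_range_add]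
  congr 1
  · refine Finset.sum_congr rfl fun i hi => ?_
    rw [List.getD_append _ _ _ _ (Finset.mem_range.mp hi)]
  · rw [altE, ← Finset.sum_neg_distrib, Finset.mul_sum]
    refine Finset.sum_congr rfl fun j _ => ?_
    rw [List.getD_append_right _ _ _ _ (Nat.le_add_right _ _), Nat.add_sub_cancel_left]
    rw [pow_add, pow_add, pow_one]
    ring

lemma isABSeq_iff {a b : ℕ} (hb : 1 ≤ b) (d : List ℕ) :
    IsABSeq a b d ↔ ∃ e : List ℕ, d = HL a b ++ e ∧ e.Pairwise (· ≥ ·) ∧ (∀ x ∈ e, 0 < x) ∧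
      (∀ x ∈ e, x ≤ a + b) ∧ (-1:ℤ)^b * altE e = HS a b := by
  constructor
  · rintro ⟨hb', hlen, hpos, hhead, hmono, hsum⟩
    refine ⟨d.drop b, ?_, ?_, ?_, ?_, ?_⟩
    case _ =>
      conv_lhs => rw [← List.take_append_drop b d]
      congr 1
      apply List.ext_getElem
      · simp [hlen]
      · intro n h1 h2
        have hn : n < b := by simpa [hlen] using h1
        have := hhead n hn
        rw [List.getD_eq_getElem _ _ (by omega : n < d.length)] at this
        rw [List.getElem_take]
        simp only [HL, List.getElem_map, List.getElem_range]
        exact this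
    case _ =>
      refine List.pairwise_iff_getElem.mpr ?_
      intro i j hi hj hij
      have hi' : b + i < d.length := by simp at hi; omega
      have hj' : b + j < d.length := by simp at hj; omega
      have := hmono (b+i) (b+j) (by omega) (by omega) hj'
      rw [List.getD_eq_getElem _ _ hi', List.getD_eq_getElem _ _ hj'] at this
      simpa [List.getElem_drop] using this
    case _ => exact fun x hx => hpos x (List.drop_subset _ _ hx)
    case _ =>
      intro x hx
      obtain ⟨j, hjlen, rfl⟩ := List.mem_iff_getElem.mp hx
      have hj' : b + j < d.length := by simp at hjlen; omega
      have hb1 : b - 1 < d.length := by omega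
      have := hmono (b-1) (b+j) (by omega) (by omega) hj'
      rw [List.getD_eq_getElem _ _ hj'] at this
      have hval : d.getD (b-1) 0 = a + b := by
        have := hhead (b-1) (by omega)
        rw [this]; omega
      rw [hval] at this
      calc (d.drop b)[j] = d[b+j] := by simp [List.getElem_drop]
        _ ≤ a + b := this
    case _ =>
      have hd : d = HL a b ++ d.drop b := by
        conv_lhs => rw [← List.take_append_drop b d]
        congr 1
        apply List.ext_getElem
        · simp [hlen]
        · intro n h1 h2
          have hn : n < b := by simpa [hlen] using h1
          have := hhead n hn
          rw [List.getD_eq_getElem _ _ (by omega : n < d.length)] at this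
          rw [List.getElem_take]
          simp only [HL, List.getElem_map, List.getElem_range]
          exact this
      have hts : TS d = 0 := hsum
      rw [hd, TS_append] at hts
      have hTSH : TS (HL a b) = HS a b := by
        rw [TS, HS, length_HL]
        refine Finset.sum_congr rfl fun i hi => ?_
        rw [getD_HL (Finset.mem_range.mp hi)]
      rw [hTSH, length_HL] at hts
      have hsq : (-1:ℤ)^b * (-1:ℤ)^b = 1 := by
        rw [← pow_add]
        exact Even.neg_one_pow ⟨b, by ring⟩
      nlinarith [hts, hsq]
  · rintro ⟨e, rfl, hes, hep, hele, halt⟩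
    have hsorted_getD := hes
    refine ⟨hb, by simp, ?_, ?_, ?_, ?_⟩
    · intro x hx
      rcases List.mem_append.mp hx with h | h
      · rw [HL, List.mem_map] at h
        obtain ⟨i, _, rfl⟩ := h
        omega
      · exact hep x h
    · intro i hi
      rw [List.getD_append _ _ _ _ (by simpa using hi)]
      exact getD_HL hi
    · intro i j hbi hij hj
      have hlen : (HL a b ++ e).length = b + e.length := by simp
      rcases Nat.lt_or_ge j b with hjb | hjb
      · have : i = j := by omega
        subst this; exact le_refl _
      · have hjval : (HL a b ++ e).getD j 0 = e.getD (j - b) 0 := by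
          rw [List.getD_append_right _ _ _ _ (by simpa using hjb)]
          simp
        rcases Nat.lt_or_ge i b with hib | hib
        · have hieq : i = b - 1 := by omega
          have hival : (HL a b ++ e).getD i 0 = a + b := by
            rw [List.getD_append _ _ _ _ (by simpa using hib), getD_HL hib, hieq]
            omega
          rw [hival, hjval]
          have hjlt : j - b < e.length := by
            rw [hlen] at hj; omega
          rw [List.getD_eq_getElem _ _ hjlt]
          exact hele _ (List.getElem_mem _)
        · have hival : (HL a b ++ e).getD i 0 = e.getD (i - b) 0 := by
            rw [List.getD_append_right _ _ _ _ (by simpa using hib)]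
            simp
          rw [hival, hjval]
          exact getD_anti hes (by omega) (by rw [hlen] at hj; omega)
    · show TS _ = 0
      rw [TS_append]
      have hTSH : TS (HL a b) = HS a b := by
        rw [TS, HS, length_HL]
        refine Finset.sum_congr rfl fun i hi => ?_
        rw [getD_HL (Finset.mem_range.mp hi)]
      rw [hTSH, length_HL, ← halt]
      ring

lemma inPab_even_iff {a m : ℕ} (hm : 1 ≤ m) (L : List ℕ) :
    InPab a (2*m) L ↔ L.Pairwise (· ≥ ·) ∧ (∀ x ∈ L, 0 < x) ∧ m ≤ L.length ∧
      a + m + 1 ≤ L.getD (m-1) 0 ∧ (∀ i, m ≤ i → i < L.length → L.getD i 0 ≤ a + m) := by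
  have e1 : (2*m+1)/2 = m := by omega
  have e2 : (2*m) % 2 = 0 := by omega
  have e3 : (2*m)/2 = m := by omega
  rw [InPab, IsPartitionList, e1, if_pos e2, e3, durfee, Nat.findGreatest_eq_iff]
  constructor
  · rintro ⟨⟨hs, hp⟩, ⟨hmlen, _, hnone⟩, hcond⟩
    refine ⟨hs, hp, hmlen, by omega, ?_⟩
    intro i hmi hilen
    have h1 : ¬ (m+1 ≤ L.length ∧ m + 1 + a ≤ L.getD m 0) :=
      hnone (by omega) (by omega)
    have h2 : m + 1 ≤ L.length := by omega
    have h3 : L.getD m 0 ≤ a + m := by omega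
    exact le_trans (getD_anti hs hmi hilen) h3
  · rintro ⟨hs, hp, hmlen, hval, htail⟩
    refine ⟨⟨hs, hp⟩, ⟨hmlen, fun _ => ⟨hmlen, by omega⟩, ?_⟩, by omega⟩
    intro n hn hnlen hP
    obtain ⟨_, hPv⟩ := hP
    have : L.getD (n-1) 0 ≤ a + m := htail (n-1) (by omega) (by omega)
    omega

lemma inPab_odd_iff {a m : ℕ} (hm : 1 ≤ m) (L : List ℕ) :
    InPab a (2*m-1) L ↔ L.Pairwise (· ≥ ·) ∧ (∀ x ∈ L, 0 < x) ∧ m ≤ L.length ∧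
      L.getD (m-1) 0 = a + m := by
  have e1 : (2*m-1+1)/2 = m := by omega
  have e2 : (2*m-1) % 2 = 1 := by omega
  rw [InPab, IsPartitionList, e1, if_neg (by omega), durfee, Nat.findGreatest_eq_iff]
  constructor
  · rintro ⟨⟨hs, hp⟩, ⟨hmlen, _, _⟩, hcond⟩
    exact ⟨hs, hp, hmlen, hcond⟩
  · rintro ⟨hs, hp, hmlen, hval⟩
    refine ⟨⟨hs, hp⟩, ⟨hmlen, fun _ => ⟨hmlen, by omega⟩, ?_⟩, hval⟩
    intro n hn hnlen hP
    obtain ⟨_, hPv⟩ := hP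
    have : L.getD (n-1) 0 ≤ L.getD (m-1) 0 := getD_anti hs (by omega) (by omega)
    omega

instance : IsAntisymm ℕ (· ≥ ·) := ⟨fun _ _ h1 h2 => le_antisymm h2 h1⟩
instance : IsTotal ℕ (· ≥ ·) := ⟨fun a b => (le_total b a).imp id id⟩
instance : IsTrans ℕ (· ≥ ·) := ⟨fun _ _ _ h1 h2 => le_trans h2 h1⟩

lemma conj_le_length (L : List ℕ) : ∀ x ∈ conj L, x ≤ L.length := by
  intro x hx
  rw [conj, List.mem_map] at hx
  obtain ⟨j, _, rfl⟩ := hx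
  exact cnt_le_length L (j+1)

lemma getD_zero_le {L : List ℕ} {c : ℕ} (h : ∀ x ∈ L, x ≤ c) : L.getD 0 0 ≤ c := by
  rcases L with _ | ⟨x, xs⟩
  · simp
  · exact h x (by simp)

lemma mem_getD {L : List ℕ} {i : ℕ} (hi : i < L.length) : L.getD i 0 ∈ L := by
  rw [List.getD_eq_getElem _ _ hi]
  exact List.getElem_mem _

lemma sum_map_addconst (l : List ℕ) (c : ℕ) :
    (l.map (· + c)).sum = l.sum + l.length * c := by
  induction l with
  | nil => simp
  | cons x xs ih => simp [ih]; ring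

lemma sorted_eq_of_perm {A B : List ℕ} (hAB : A.Perm B) (hA : A.Pairwise (· ≥ ·))
    (hB : B.Pairwise (· ≥ ·)) : A = B := hAB.eq_of_pairwise' hA hB

/-- φ for even b = 2m -/
def phiE (a m : ℕ) (d : List ℕ) : List ℕ :=
  (oddsOf (conj (d.drop (2*m)))).map (fun x => x / 2 + (a+m+1)) ++
    conj ((evensOf (conj (d.drop (2*m)))).map (· / 2))

/-- ψ for even b = 2m -/
def psiE (a m : ℕ) (L : List ℕ) : List ℕ :=
  HL a (2*m) ++ conj (List.insertionSort (· ≥ ·)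
    ((L.take m).map (fun x => 2 * (x - (a+m+1)) + 1) ++ (conj (L.drop m)).map (fun x => 2*x)))

lemma phiE_spec {a m : ℕ} (hm : 1 ≤ m) {d : List ℕ} (hd : IsABSeq a (2*m) d) :
    InPab a (2*m) (phiE a m d) ∧ d.sum = 2 * (phiE a m d).sum ∧ psiE a m (phiE a m d) = d := by
  obtain ⟨e, rfl, hes, hep, hele, halt⟩ := (isABSeq_iff (by omega) d).mp hd
  set f := conj e with hf
  have hfs : f.Pairwise (· ≥ ·) := conj_sorted e
  have hfp : ∀ x ∈ f, 0 < x := conj_pos hes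
  have hflen : f.length ≤ a + 2*m := by
    rw [hf, length_conj]
    exact getD_zero_le hele
  -- odd part count
  have haltv : altE e = (m : ℤ) := by
    have h1 : ((-1:ℤ))^(2*m) = 1 := Even.neg_one_pow ⟨m, by ring⟩
    rw [h1, one_mul] at halt
    rw [halt, HS_even]
  have hcount : f.countP (fun x => x % 2 == 1) = m := by
    have := altE_eq_countP_odd hes
    rw [haltv, ← hf] at this
    exact_mod_cast this.symm
  set o := oddsOf f with ho
  set ev := evensOf f with hev
  have holen : o.length = m := by
    rw [ho, oddsOf, ← List.countP_eq_length_filter]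
    exact hcount
  have hom : ∀ x ∈ o, x % 2 = 1 ∧ 0 < x ∧ x ∈ f := by
    intro x hx
    obtain ⟨h1, h2⟩ := mem_oddsOf hx
    exact ⟨h2, hfp x h1, h1⟩
  have hevm : ∀ x ∈ ev, x % 2 = 0 ∧ 0 < x ∧ x ∈ f := by
    intro x hx
    obtain ⟨h1, h2⟩ := mem_evensOf hx
    exact ⟨h2, hfp x h1, h1⟩
  have hperm : (o ++ ev).Perm f := oddsOf_append_evensOf_perm f
  have hlenadd : o.length + ev.length = f.length := by
    have := hperm.length_eq
    simpa using this
  have hevlen : ev.length ≤ a + m := by omega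
  have hos : o.Pairwise (· ≥ ·) := hfs.filter _
  have hevs : ev.Pairwise (· ≥ ·) := hfs.filter _
  set g := ev.map (· / 2) with hg
  have hgs : g.Pairwise (· ≥ ·) := sorted_map_mono hevs (fun x y hxy => Nat.div_le_div_right hxy)
  have hgp : ∀ x ∈ g, 0 < x := by
    intro x hx
    rw [hg, List.mem_map] at hx
    obtain ⟨y, hy, rfl⟩ := hx
    obtain ⟨h1, h2, _⟩ := hevm y hy
    omega
  set μ := o.map (fun x => x / 2 + (a+m+1)) with hμ
  set ν := conj g with hν
  have hμlen : μ.length = m := by rw [hμ, List.length_map, holen]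
  have hμmem : ∀ x ∈ μ, a + m + 1 ≤ x := by
    intro x hx
    rw [hμ, List.mem_map] at hx
    obtain ⟨y, _, rfl⟩ := hx
    omega
  have hνmem : ∀ x ∈ ν, x ≤ a + m := by
    intro x hx
    have := conj_le_length g x hx
    rw [hg, List.length_map] at this
    omega
  have hμs : μ.Pairwise (· ≥ ·) := sorted_map_mono hos
    (fun x y hxy => by have := Nat.div_le_div_right (c := 2) hxy; omega)
  have hνs : ν.Pairwise (· ≥ ·) := conj_sorted g
  have hLs : (μ ++ ν).Pairwise (· ≥ ·) := by
    rw [List.pairwise_append]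
    exact ⟨hμs, hνs, fun x hx y hy => le_trans (le_trans (hνmem y hy) (by omega)) (hμmem x hx)⟩
  have hLp : ∀ x ∈ μ ++ ν, 0 < x := by
    intro x hx
    rcases List.mem_append.mp hx with h | h
    · have := hμmem x h; omega
    · exact conj_pos hgs x h
  have hphi : phiE a m (HL a (2*m) ++ e) = μ ++ ν := by
    rw [phiE, List.drop_left' (by simp)]
  have hgetDm1 : a + m + 1 ≤ (μ ++ ν).getD (m-1) 0 := by
    have hlt : m - 1 < μ.length := by omega
    rw [List.getD_append _ _ _ _ hlt]
    exact hμmem _ (mem_getD hlt)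
  have hmem : InPab a (2*m) (μ ++ ν) := by
    rw [inPab_even_iff hm]
    refine ⟨hLs, hLp, by simp [hμlen], hgetDm1, ?_⟩
    intro i hmi hilen
    rw [List.getD_append_right _ _ _ _ (by omega)]
    have hlt : i - μ.length < ν.length := by
      simp only [List.length_append] at hilen
      omega
    exact hνmem _ (mem_getD hlt)
  refine ⟨by rw [hphi]; exact hmem, ?_, ?_⟩
  · -- sum
    rw [hphi]
    have h1 : (HL a (2*m) ++ e).sum = (HL a (2*m)).sum + e.sum := List.sum_append
    have h2 : e.sum = f.sum := (sum_conj hes).symm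
    have h3 : f.sum = o.sum + ev.sum := by
      rw [← hperm.sum_eq, List.sum_append]
    have h4 : o.sum = 2 * (o.map (· / 2)).sum + m := by
      rw [← holen]
      exact odd_sum (fun x hx => (hom x hx).1)
    have h5 : ev.sum = 2 * g.sum := even_sum (fun x hx => (hevm x hx).1)
    have h6 : (μ ++ ν).sum = μ.sum + ν.sum := List.sum_append
    have h7 : μ.sum = (o.map (· / 2)).sum + m * (a+m+1) := by
      rw [hμ]
      have : (fun x => x / 2 + (a+m+1)) = (fun x => x + (a+m+1)) ∘ (fun x => x / 2) := rfl
      rw [this, ← List.map_map, sum_map_addconst, List.length_map, holen]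
    have h8 : ν.sum = g.sum := sum_conj hgs
    have h9 : (HL a (2*m)).sum = a * (2*m) + (2*m) * (2*m+1) / 2 := sum_HL a (2*m)
    have h10 : (2*m) * (2*m+1) / 2 = m * (2*m+1) := by
      have : (2*m) * (2*m+1) = 2 * (m * (2*m+1)) := by ring
      omega
    have h11 : m * (2*m+1) = 2*m*m + m := by ring
    have h12 : a * (2*m) = 2*(a*m) := by ring
    have h13 : m*(a+m+1) = a*m + m*m + m := by ring
    have h14 : 2*m*m = 2*(m*m) := by ring
    omega
  · -- left inverse
    rw [hphi, psiE]
    congr 1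
    rw [List.take_left' hμlen, List.drop_left' hμlen]
    have hback_o : μ.map (fun x => 2 * (x - (a+m+1)) + 1) = o := by
      rw [hμ, List.map_map]
      have : ∀ x ∈ o, ((fun x => 2 * (x - (a+m+1)) + 1) ∘ (fun x => x / 2 + (a+m+1))) x = id x := by
        intro x hx
        have h1 := (hom x hx).1
        simp only [Function.comp, id]
        omega
      rw [List.map_congr_left this, List.map_id]
    have hback_ev : (conj ν).map (fun x => 2*x) = ev := by
      rw [hν, conj_conj hgs hgp, hg]
      exact even_map_div (fun x hx => (hevm x hx).1)
    rw [hback_o, hback_ev]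
    have hsorteq : List.insertionSort (· ≥ ·) (o ++ ev) = f := by
      apply sorted_eq_of_perm ((List.perm_insertionSort _ _).trans hperm)
        (List.pairwise_insertionSort _ _) hfs
    rw [hsorteq, hf, conj_conj hes hep]

lemma psiE_spec {a m : ℕ} (hm : 1 ≤ m) {L : List ℕ} (hL : InPab a (2*m) L) :
    IsABSeq a (2*m) (psiE a m L) ∧ phiE a m (psiE a m L) = L := by
  obtain ⟨hs, hp, hmlen, hval, htail⟩ := (inPab_even_iff hm L).mp hL
  set μ := L.take m with hμ
  set ν := L.drop m with hν
  have hμlen : μ.length = m := by rw [hμ, List.length_take]; omega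
  have hμs : μ.Pairwise (· ≥ ·) := List.Pairwise.sublist (List.take_sublist _ _) hs
  have hνs : ν.Pairwise (· ≥ ·) := List.Pairwise.sublist (List.drop_sublist _ _) hs
  have hνp : ∀ x ∈ ν, 0 < x := fun x hx => hp x (List.drop_subset _ _ hx)
  have hμmem : ∀ x ∈ μ, a + m + 1 ≤ x := by
    intro x hx
    obtain ⟨i, hi, rfl⟩ := List.mem_iff_getElem.mp hx
    have him : i < m := by omega
    have hil : i < L.length := by omega
    have hgi : μ[i] = L[i] := by simp [hμ, List.getElem_take]
    have := getD_anti hs (by omega : i ≤ m - 1) (by omega : m - 1 < L.length)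
    rw [List.getD_eq_getElem _ _ hil] at this
    omega
  have hνmem : ∀ x ∈ ν, x ≤ a + m := by
    intro x hx
    obtain ⟨j, hj, rfl⟩ := List.mem_iff_getElem.mp hx
    have hjl : m + j < L.length := by
      rw [hν, List.length_drop] at hj; omega
    have hgj : ν[j] = L[m+j] := by simp [hν, List.getElem_drop]
    have := htail (m+j) (by omega) hjl
    rw [List.getD_eq_getElem _ _ hjl] at this
    omega
  set o := μ.map (fun x => 2 * (x - (a+m+1)) + 1) with ho
  set ev := (conj ν).map (fun x => 2*x) with hev
  have holen : o.length = m := by rw [ho, List.length_map, hμlen]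
  have hoodd : ∀ x ∈ o, x % 2 = 1 := by
    intro x hx
    rw [ho, List.mem_map] at hx
    obtain ⟨y, _, rfl⟩ := hx
    omega
  have hop : ∀ x ∈ o, 0 < x := by
    intro x hx
    rw [ho, List.mem_map] at hx
    obtain ⟨y, _, rfl⟩ := hx
    omega
  have hos : o.Pairwise (· ≥ ·) := sorted_map_mono hμs (fun x y hxy => by omega)
  have heveven : ∀ x ∈ ev, x % 2 = 0 := by
    intro x hx
    rw [hev, List.mem_map] at hx
    obtain ⟨y, _, rfl⟩ := hx
    omega
  have hevp : ∀ x ∈ ev, 0 < x := by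
    intro x hx
    rw [hev, List.mem_map] at hx
    obtain ⟨y, hy, rfl⟩ := hx
    have := conj_pos hνs y hy
    omega
  have hevs : ev.Pairwise (· ≥ ·) := sorted_map_mono (conj_sorted ν) (fun x y hxy => by omega)
  have hevlen : ev.length ≤ a + m := by
    rw [hev, List.length_map, length_conj]
    exact getD_zero_le hνmem
  set F := List.insertionSort (· ≥ ·) (o ++ ev) with hF
  have hFs : F.Pairwise (· ≥ ·) := List.pairwise_insertionSort _ _
  have hFperm : F.Perm (o ++ ev) := List.perm_insertionSort _ _
  have hFp : ∀ x ∈ F, 0 < x := by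
    intro x hx
    rcases List.mem_append.mp (hFperm.subset hx) with h | h
    · exact hop x h
    · exact hevp x h
  have hFlen : F.length ≤ a + 2*m := by
    have := hFperm.length_eq
    rw [List.length_append] at this
    omega
  set e := conj F with he
  have hes : e.Pairwise (· ≥ ·) := conj_sorted F
  have hep : ∀ x ∈ e, 0 < x := conj_pos hFs
  have hele : ∀ x ∈ e, x ≤ a + 2*m := by
    intro x hx
    exact le_trans (conj_le_length F x hx) hFlen
  have hcount : F.countP (fun x => x % 2 == 1) = m := by
    rw [hFperm.countP_eq, List.countP_append]
    have h1 : o.countP (fun x => x % 2 == 1) = o.length :=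
      List.countP_eq_length.mpr (fun x hx => by simp [hoodd x hx])
    have h2 : ev.countP (fun x => x % 2 == 1) = 0 :=
      List.countP_eq_zero.mpr (fun x hx => by simp [heveven x hx])
    rw [h1, h2, holen]
    omega
  have haltE : altE e = (m : ℤ) := by
    rw [altE_eq_countP_odd hes, he, conj_conj hFs hFp, hcount]
  have hmemS : IsABSeq a (2*m) (psiE a m L) := by
    rw [psiE, ← hμ, ← hν, ← ho, ← hev, ← hF, ← he]
    rw [isABSeq_iff (by omega)]
    refine ⟨e, rfl, hes, hep, hele, ?_⟩
    rw [haltE, HS_even, Even.neg_one_pow ⟨m, by ring⟩, one_mul]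
  refine ⟨hmemS, ?_⟩
  rw [psiE, ← hμ, ← hν, ← ho, ← hev, ← hF, ← he, phiE, List.drop_left' (by simp)]
  have hconj_e : conj e = F := by rw [he, conj_conj hFs hFp]
  rw [hconj_e]
  have hoddsF : oddsOf F = o := by
    apply sorted_eq_of_perm _ (hFs.filter _) hos
    calc (oddsOf F).Perm (oddsOf (o ++ ev)) := List.Perm.filter _ hFperm
      _ = o := by
        rw [oddsOf, List.filter_append]
        rw [List.filter_eq_self.mpr (fun x hx => by simp [hoodd x hx]),
          List.filter_eq_nil_iff.mpr (fun x hx => by simp [heveven x hx]), List.append_nil]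
  have hevensF : evensOf F = ev := by
    apply sorted_eq_of_perm _ (hFs.filter _) hevs
    calc (evensOf F).Perm (evensOf (o ++ ev)) := List.Perm.filter _ hFperm
      _ = ev := by
        rw [evensOf, List.filter_append]
        rw [List.filter_eq_nil_iff.mpr (fun x hx => by simp [hoodd x hx]),
          List.filter_eq_self.mpr (fun x hx => by simp [heveven x hx]), List.nil_append]
  rw [hoddsF, hevensF]
  have hback_μ : o.map (fun x => x / 2 + (a+m+1)) = μ := by
    rw [ho, List.map_map]
    have : ∀ x ∈ μ, ((fun x => x / 2 + (a+m+1)) ∘ (fun x => 2 * (x - (a+m+1)) + 1)) x = id x := by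
      intro x hx
      have := hμmem x hx
      simp only [Function.comp, id]
      omega
    rw [List.map_congr_left this, List.map_id]
  have hback_ν : conj (ev.map (· / 2)) = ν := by
    rw [hev, List.map_map]
    have : ∀ x ∈ conj ν, ((fun x => x / 2) ∘ (fun x => 2*x)) x = id x := by
      intro x _
      simp only [Function.comp, id]
      omega
    rw [List.map_congr_left this, List.map_id, conj_conj hνs hνp]
  rw [hback_μ, hback_ν, hμ, hν, List.take_append_drop]

lemma getD_replicate {x n i : ℕ} (hi : i < n) : (List.replicate n x).getD i 0 = x := by
  rw [List.getD_eq_getElem _ _ (by simpa using hi), List.getElem_replicate]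

/-- φ for odd b = 2m-1 -/
def phiO (a m : ℕ) (d : List ℕ) : List ℕ :=
  ((evensOf (conj (d.drop (2*m-1)))).map (fun x => x / 2 + (a+m)) ++
    List.replicate (m - (evensOf (conj (d.drop (2*m-1)))).length) (a+m)) ++
    conj ((oddsOf (conj (d.drop (2*m-1)))).map (· / 2))

/-- ψ for odd b = 2m-1 -/
def psiO (a m : ℕ) (L : List ℕ) : List ℕ :=
  HL a (2*m-1) ++ conj (List.insertionSort (· ≥ ·)
    ((conj (L.drop m) ++ List.replicate (a + m - (conj (L.drop m)).length) 0).map (fun x => 2*x+1)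
      ++ (((L.take (m-1)).map (fun x => x - (a+m))).filter (fun x => x ≠ 0)).map (fun x => 2*x)))

lemma phiO_spec {a m : ℕ} (hm : 1 ≤ m) {d : List ℕ} (hd : IsABSeq a (2*m-1) d) :
    InPab a (2*m-1) (phiO a m d) ∧ d.sum = 2 * (phiO a m d).sum ∧ psiO a m (phiO a m d) = d := by
  obtain ⟨e, rfl, hes, hep, hele, halt⟩ := (isABSeq_iff (by omega) d).mp hd
  set f := conj e with hf
  have hfs : f.Pairwise (· ≥ ·) := conj_sorted e
  have hfp : ∀ x ∈ f, 0 < x := conj_pos hes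
  have hflen : f.length ≤ a + (2*m-1) := by
    rw [hf, length_conj]
    exact getD_zero_le hele
  have haltv : altE e = ((a + m : ℕ) : ℤ) := by
    have hodd : (2*m-1) = 2*(m-1)+1 := by omega
    have h1 : ((-1:ℤ))^(2*m-1) = -1 := by
      rw [hodd]; exact Odd.neg_one_pow ⟨m-1, by ring⟩
    rw [h1] at halt
    rw [hodd, HS_odd] at halt
    have h2 : (a + (m-1) + 1) = a + m := by omega
    rw [h2] at halt
    linarith [halt]
  have hcount : f.countP (fun x => x % 2 == 1) = a + m := by
    have := altE_eq_countP_odd hes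
    rw [haltv, ← hf] at this
    exact_mod_cast this.symm
  set o := oddsOf f with ho
  set ev := evensOf f with hev
  have holen : o.length = a + m := by
    rw [ho, oddsOf, ← List.countP_eq_length_filter]
    exact hcount
  have hom : ∀ x ∈ o, x % 2 = 1 ∧ 0 < x ∧ x ∈ f := by
    intro x hx
    obtain ⟨h1, h2⟩ := mem_oddsOf hx
    exact ⟨h2, hfp x h1, h1⟩
  have hevm : ∀ x ∈ ev, x % 2 = 0 ∧ 0 < x ∧ x ∈ f := by
    intro x hx
    obtain ⟨h1, h2⟩ := mem_evensOf hx
    exact ⟨h2, hfp x h1, h1⟩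
  have hperm : (o ++ ev).Perm f := oddsOf_append_evensOf_perm f
  have hlenadd : o.length + ev.length = f.length := by
    have := hperm.length_eq
    simpa using this
  have hevlen : ev.length ≤ m - 1 := by omega
  have hos : o.Pairwise (· ≥ ·) := hfs.filter _
  have hevs : ev.Pairwise (· ≥ ·) := hfs.filter _
  set g := ev.map (· / 2) with hg
  set h := o.map (· / 2) with hh
  have hgs : g.Pairwise (· ≥ ·) := sorted_map_mono hevs (fun x y hxy => Nat.div_le_div_right hxy)
  have hhs : h.Pairwise (· ≥ ·) := sorted_map_mono hos (fun x y hxy => Nat.div_le_div_right hxy)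
  have hhlen : h.length = a + m := by rw [hh, List.length_map, holen]
  have hgp : ∀ x ∈ g, 0 < x := by
    intro x hx
    rw [hg, List.mem_map] at hx
    obtain ⟨y, hy, rfl⟩ := hx
    obtain ⟨h1, h2, _⟩ := hevm y hy
    omega
  set k := ev.length with hk
  set μ1 := g.map (fun x => x + (a+m)) with hμ1
  set R := List.replicate (m - k) (a+m) with hR
  set ν := conj h with hν
  set W := μ1 ++ R with hW
  have hμ1len : μ1.length = k := by rw [hμ1, hg]; simp [hk]
  have hWlen : W.length = m := by
    rw [hW, List.length_append, hμ1len, hR, List.length_replicate]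
    omega
  have hμ1mem : ∀ x ∈ μ1, a + m + 1 ≤ x := by
    intro x hx
    rw [hμ1, List.mem_map] at hx
    obtain ⟨y, hy, rfl⟩ := hx
    have := hgp y hy
    omega
  have hWmem : ∀ x ∈ W, a + m ≤ x := by
    intro x hx
    rcases List.mem_append.mp hx with hxx | hxx
    · have := hμ1mem x hxx; omega
    · rw [hR] at hxx; rw [List.eq_of_mem_replicate hxx]
  have hνmem : ∀ x ∈ ν, x ≤ a + m := by
    intro x hx
    have := conj_le_length h x hx
    omega
  have hWs : W.Pairwise (· ≥ ·) := by
    rw [hW, List.pairwise_append]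
    refine ⟨sorted_map_mono hgs (fun x y hxy => by omega), ?_, ?_⟩
    · rw [hR]
      exact List.pairwise_replicate.mpr (Or.inr (le_refl _))
    · intro x hx y hy
      rw [hR] at hy
      rw [List.eq_of_mem_replicate hy]
      have := hμ1mem x hx
      omega
  have hLs : (W ++ ν).Pairwise (· ≥ ·) := by
    rw [List.pairwise_append]
    exact ⟨hWs, conj_sorted h, fun x hx y hy => le_trans (hνmem y hy) (hWmem x hx)⟩
  have hLp : ∀ x ∈ W ++ ν, 0 < x := by
    intro x hx
    rcases List.mem_append.mp hx with hxx | hxx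
    · have := hWmem x hxx; omega
    · exact conj_pos hhs x hxx
  have hphi : phiO a m (HL a (2*m-1) ++ e) = W ++ ν := by
    rw [phiO, List.drop_left' (by simp)]
    simp only [hW, hμ1, hg, hν, hh, ho, hev, hf, hR, hk, List.map_map]
    rfl
  have hgetD : (W ++ ν).getD (m-1) 0 = a + m := by
    rw [List.getD_append _ _ _ _ (by omega)]
    rw [hW, List.getD_append_right _ _ _ _ (by omega), hR]
    exact getD_replicate (by omega)
  have hmem : InPab a (2*m-1) (W ++ ν) := by
    rw [inPab_odd_iff hm]
    exact ⟨hLs, hLp, by simp [hWlen], hgetD⟩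
  refine ⟨by rw [hphi]; exact hmem, ?_, ?_⟩
  · -- sum
    rw [hphi]
    have h1 : (HL a (2*m-1) ++ e).sum = (HL a (2*m-1)).sum + e.sum := List.sum_append
    have h2 : e.sum = f.sum := (sum_conj hes).symm
    have h3 : f.sum = o.sum + ev.sum := by
      rw [← hperm.sum_eq, List.sum_append]
    have h4 : o.sum = 2 * h.sum + (a + m) := by
      rw [← holen, hh]
      exact odd_sum (fun x hx => (hom x hx).1)
    have h5 : ev.sum = 2 * g.sum := even_sum (fun x hx => (hevm x hx).1)
    have h6 : (W ++ ν).sum = μ1.sum + R.sum + ν.sum := by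
      rw [List.sum_append, hW, List.sum_append]
    have h7 : μ1.sum = g.sum + k * (a+m) := by
      rw [hμ1, sum_map_addconst]
      congr 1
      rw [hg]; simp [hk]
    have h8 : ν.sum = h.sum := sum_conj hhs
    have h9 : R.sum = (m - k) * (a+m) := by
      rw [hR, List.sum_replicate, smul_eq_mul]
    have h10 : (HL a (2*m-1)).sum = a * (2*m-1) + (2*m-1) * (2*m-1+1) / 2 := sum_HL a (2*m-1)
    have h11 : (2*m-1) * (2*m-1+1) / 2 = (2*m-1) * m := by
      have e1 : 2*m-1+1 = 2*m := by omega
      rw [e1]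
      have e2 : (2*m-1) * (2*m) = 2 * ((2*m-1) * m) := by ring
      omega
    have h12 : k * (a+m) + (m-k) * (a+m) = m * (a+m) := by
      have : k + (m-k) = m := by omega
      calc k * (a+m) + (m-k) * (a+m) = (k + (m-k)) * (a+m) := by ring
        _ = m * (a+m) := by rw [this]
    have h13 : a * (2*m-1) + (2*m-1) * m = (2*m-1) * (a + m) := by
      have e3 : (2*m-1) * (a+m) = (2*m-1)*a + (2*m-1)*m := by ring
      have e4 : a * (2*m-1) = (2*m-1) * a := by ring
      omega
    have h14 : 2 * (m * (a+m)) = 2*m*(a+m) := by ring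
    have h15 : 2*m*(a+m) = (2*m-1)*(a+m) + (a+m) := by
      have e5 := Nat.sub_mul (2*m) 1 (a+m)
      have e6 : (a+m) ≤ 2*m*(a+m) := Nat.le_mul_of_pos_left _ (by omega)
      omega
    omega
  · -- left inverse
    rw [hphi, psiO]
    congr 1
    have hdrop : (W ++ ν).drop m = ν := List.drop_left' hWlen
    have htake : (W ++ ν).take (m-1) = μ1 ++ List.replicate (m-1-k) (a+m) := by
      have e1 : m - 1 = W.length + 0 - 1 := by omega
      have e2 : (W ++ ν).take (m-1) = W.take (m-1) := by
        rw [List.take_append]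
        have : m - 1 - W.length = 0 := by omega
        rw [this, List.take_zero, List.append_nil]
      rw [e2, hW, List.take_append, hμ1len]
      congr 1
      · rw [List.take_of_length_le (by omega)]
      · rw [hR, List.take_replicate]
        congr 1
        omega
    rw [hdrop, htake]
    -- reconstruct o
    have hconjνlen : (conj ν).length = cnt h 1 := by
      rw [hν, length_conj, conj_getD hhs 0]
    have hback_o : (conj ν ++ List.replicate (a + m - (conj ν).length) 0).map (fun x => 2*x+1)
        = o := by
      rw [hconjνlen, show a + m - cnt h 1 = h.length - cnt h 1 from by rw [hhlen], hν,
        conj_conj_pad hhs, hh]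
      exact odd_map_div (fun x hx => (hom x hx).1)
    -- reconstruct ev
    have hback_ev : (((μ1 ++ List.replicate (m-1-k) (a+m)).map (fun x => x - (a+m))).filter
        (fun x => x ≠ 0)).map (fun x => 2*x) = ev := by
      rw [List.map_append, hμ1, List.map_map]
      have e1 : ((fun x => x - (a+m)) ∘ (fun x => x + (a+m))) = id := by
        funext x; simp
      rw [e1, List.map_id]
      have e2 : (List.replicate (m-1-k) (a+m)).map (fun x => x - (a+m))
          = List.replicate (m-1-k) 0 := by
        rw [List.map_replicate]
        congr 1
        omega
      rw [e2, List.filter_append]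
      rw [List.filter_eq_self.mpr (fun x hx => by simp; have := hgp x hx; omega)]
      rw [List.filter_eq_nil_iff.mpr (fun x hx => by simp [List.eq_of_mem_replicate hx])]
      rw [List.append_nil, hg]
      exact even_map_div (fun x hx => (hevm x hx).1)
    rw [hback_o, hback_ev]
    have hsorteq : List.insertionSort (· ≥ ·) (o ++ ev) = f := by
      apply sorted_eq_of_perm ((List.perm_insertionSort _ _).trans hperm)
        (List.pairwise_insertionSort _ _) hfs
    rw [hsorteq, hf, conj_conj hes hep]

lemma psiO_spec {a m : ℕ} (hm : 1 ≤ m) {L : List ℕ} (hL : InPab a (2*m-1) L) :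
    IsABSeq a (2*m-1) (psiO a m L) ∧ phiO a m (psiO a m L) = L := by
  obtain ⟨hs, hp, hmlen, hval⟩ := (inPab_odd_iff hm L).mp hL
  set μ := L.take (m-1) with hμ
  set ν := L.drop m with hν
  have hμlen : μ.length = m - 1 := by rw [hμ, List.length_take]; omega
  have hμs : μ.Pairwise (· ≥ ·) := List.Pairwise.sublist (List.take_sublist _ _) hs
  have hνs : ν.Pairwise (· ≥ ·) := List.Pairwise.sublist (List.drop_sublist _ _) hs
  have hνp : ∀ x ∈ ν, 0 < x := fun x hx => hp x (List.drop_subset _ _ hx)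
  have hμmem : ∀ x ∈ μ, a + m ≤ x := by
    intro x hx
    obtain ⟨i, hi, rfl⟩ := List.mem_iff_getElem.mp hx
    have him : i < m - 1 := by omega
    have hil : i < L.length := by omega
    have hgi : μ[i] = L[i] := by simp [hμ, List.getElem_take]
    have := getD_anti hs (by omega : i ≤ m - 1) (by omega : m - 1 < L.length)
    rw [List.getD_eq_getElem _ _ hil] at this
    omega
  have hνmem : ∀ x ∈ ν, x ≤ a + m := by
    intro x hx
    obtain ⟨j, hj, rfl⟩ := List.mem_iff_getElem.mp hx
    have hjl : m + j < L.length := by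
      rw [hν, List.length_drop] at hj; omega
    have hgj : ν[j] = L[m+j] := by simp [hν, List.getElem_drop]
    have := getD_anti hs (by omega : m - 1 ≤ m + j) hjl
    rw [List.getD_eq_getElem _ _ hjl] at this
    omega
  set h' := conj ν with hh'
  have hh's : h'.Pairwise (· ≥ ·) := conj_sorted ν
  have hh'p : ∀ x ∈ h', 0 < x := conj_pos hνs
  have hh'len : h'.length ≤ a + m := by
    rw [hh', length_conj]
    exact getD_zero_le hνmem
  set o := (h' ++ List.replicate (a + m - h'.length) 0).map (fun x => 2*x+1) with ho
  have holen : o.length = a + m := by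
    rw [ho, List.length_map, List.length_append, List.length_replicate]
    omega
  have hoodd : ∀ x ∈ o, x % 2 = 1 := by
    intro x hx
    rw [ho, List.mem_map] at hx
    obtain ⟨y, _, rfl⟩ := hx
    omega
  have hpadS : (h' ++ List.replicate (a + m - h'.length) 0).Pairwise (· ≥ ·) := by
    rw [List.pairwise_append]
    refine ⟨hh's, List.pairwise_replicate.mpr (Or.inr (le_refl _)), ?_⟩
    intro x hx y hy
    rw [List.eq_of_mem_replicate hy]
    omega
  have hos : o.Pairwise (· ≥ ·) := sorted_map_mono hpadS (fun x y hxy => by omega)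
  set w := μ.map (fun x => x - (a+m)) with hw
  have hws : w.Pairwise (· ≥ ·) := sorted_map_mono hμs (fun x y hxy => by omega)
  set g := w.filter (fun x => x ≠ 0) with hg
  have hgs : g.Pairwise (· ≥ ·) := hws.filter _
  have hgp : ∀ x ∈ g, 0 < x := by
    intro x hx
    have := List.of_mem_filter hx
    simp at this
    omega
  have hglen : g.length ≤ m - 1 := by
    calc g.length ≤ w.length := List.length_filter_le _ _
      _ = m - 1 := by rw [hw, List.length_map, hμlen]
  set ev := g.map (fun x => 2*x) with hev
  have heveven : ∀ x ∈ ev, x % 2 = 0 := by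
    intro x hx
    rw [hev, List.mem_map] at hx
    obtain ⟨y, _, rfl⟩ := hx
    omega
  have hevp : ∀ x ∈ ev, 0 < x := by
    intro x hx
    rw [hev, List.mem_map] at hx
    obtain ⟨y, hy, rfl⟩ := hx
    have := hgp y hy
    omega
  have hevs : ev.Pairwise (· ≥ ·) := sorted_map_mono hgs (fun x y hxy => by omega)
  have hevlen : ev.length ≤ m - 1 := by
    rw [hev, List.length_map]; exact hglen
  set F := List.insertionSort (· ≥ ·) (o ++ ev) with hF
  have hFs : F.Pairwise (· ≥ ·) := List.pairwise_insertionSort _ _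
  have hFperm : F.Perm (o ++ ev) := List.perm_insertionSort _ _
  have hFp : ∀ x ∈ F, 0 < x := by
    intro x hx
    rcases List.mem_append.mp (hFperm.subset hx) with hxx | hxx
    · rw [ho, List.mem_map] at hxx
      obtain ⟨y, _, rfl⟩ := hxx
      omega
    · exact hevp x hxx
  have hFlen : F.length ≤ a + (2*m-1) := by
    have := hFperm.length_eq
    rw [List.length_append, holen] at this
    omega
  set e := conj F with he
  have hes : e.Pairwise (· ≥ ·) := conj_sorted F
  have hep : ∀ x ∈ e, 0 < x := conj_pos hFs
  have hele : ∀ x ∈ e, x ≤ a + (2*m-1) := by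
    intro x hx
    exact le_trans (conj_le_length F x hx) hFlen
  have hcount : F.countP (fun x => x % 2 == 1) = a + m := by
    rw [hFperm.countP_eq, List.countP_append]
    have h1 : o.countP (fun x => x % 2 == 1) = o.length :=
      List.countP_eq_length.mpr (fun x hx => by simp [hoodd x hx])
    have h2 : ev.countP (fun x => x % 2 == 1) = 0 :=
      List.countP_eq_zero.mpr (fun x hx => by simp [heveven x hx])
    rw [h1, h2, holen]
    omega
  have haltE : altE e = ((a+m : ℕ) : ℤ) := by
    rw [altE_eq_countP_odd hes, he, conj_conj hFs hFp, hcount]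
  have hpsi : psiO a m L = HL a (2*m-1) ++ e := by
    rw [psiO, ← hν, ← hh', ← hμ, ← hw, ← hg, ← hev]
  have hmemS : IsABSeq a (2*m-1) (psiO a m L) := by
    rw [hpsi, isABSeq_iff (by omega)]
    refine ⟨e, rfl, hes, hep, hele, ?_⟩
    rw [haltE]
    have hodd : (2*m-1) = 2*(m-1)+1 := by omega
    rw [hodd, HS_odd, Odd.neg_one_pow ⟨m-1, by ring⟩]
    have : a + (m-1) + 1 = a + m := by omega
    rw [this]
    ring
  refine ⟨hmemS, ?_⟩
  rw [hpsi, phiO, List.drop_left' (by simp)]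
  have hconj_e : conj e = F := by rw [he, conj_conj hFs hFp]
  rw [hconj_e]
  have hoddsF : oddsOf F = o := by
    apply sorted_eq_of_perm _ (hFs.filter _) hos
    calc (oddsOf F).Perm (oddsOf (o ++ ev)) := List.Perm.filter _ hFperm
      _ = o := by
        rw [oddsOf, List.filter_append]
        rw [List.filter_eq_self.mpr (fun x hx => by simp [hoodd x hx]),
          List.filter_eq_nil_iff.mpr (fun x hx => by simp [heveven x hx]), List.append_nil]
  have hevensF : evensOf F = ev := by
    apply sorted_eq_of_perm _ (hFs.filter _) hevs
    calc (evensOf F).Perm (evensOf (o ++ ev)) := List.Perm.filter _ hFperm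
      _ = ev := by
        rw [evensOf, List.filter_append]
        rw [List.filter_eq_nil_iff.mpr (fun x hx => by simp [hoodd x hx]),
          List.filter_eq_self.mpr (fun x hx => by simp [heveven x hx]), List.nil_append]
  rw [hoddsF, hevensF]
  -- reconstruct ν part
  have hν_rec : conj (o.map (· / 2)) = ν := by
    have e1 : o.map (· / 2) = h' ++ List.replicate (a + m - h'.length) 0 := by
      rw [ho, List.map_map]
      have : ∀ x ∈ h' ++ List.replicate (a + m - h'.length) 0,
          ((fun x => x / 2) ∘ (fun x => 2*x+1)) x = id x := by
        intro x _
        simp only [Function.comp, id]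
        omega
      rw [List.map_congr_left this, List.map_id]
    rw [e1, conj_append_zeros, hh', conj_conj hνs hνp]
  -- reconstruct the W part
  have hW_rec : ev.map (fun x => x / 2 + (a+m)) ++ List.replicate (m - ev.length) (a+m)
      = L.take m := by
    have e1 : ev.map (fun x => x / 2 + (a+m)) = g.map (fun x => x + (a+m)) := by
      rw [hev, List.map_map]
      refine List.map_congr_left fun x _ => ?_
      simp only [Function.comp]
      omega
    -- μ = w.map (+(a+m))
    have e2 : μ = w.map (fun x => x + (a+m)) := by
      rw [hw, List.map_map]
      have : ∀ x ∈ μ, ((fun x => x + (a+m)) ∘ (fun x => x - (a+m))) x = id x := by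
        intro x hx
        have := hμmem x hx
        simp only [Function.comp, id]
        omega
      rw [List.map_congr_left this, List.map_id]
    -- w = g ++ zeros
    have e3 : g = w.takeWhile (fun x => x ≠ 0) := by
      conv_lhs => rw [hg, ← List.takeWhile_append_dropWhile (p := fun x => decide (x ≠ 0)) (l := w)]
      rw [List.filter_append]
      rw [List.filter_eq_self.mpr (fun x hx => List.mem_takeWhile_imp (l := w) hx)]
      rw [zeros_suffix hws,
        List.filter_eq_nil_iff.mpr (fun x hx => by simp [List.eq_of_mem_replicate hx]),
        List.append_nil]
    have e4 : w = g ++ List.replicate (w.length - g.length) 0 := by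
      conv_lhs => rw [← List.takeWhile_append_dropWhile (p := fun x => decide (x ≠ 0)) (l := w)]
      rw [zeros_suffix hws, ← e3]
    have e5 : L.take m = μ ++ [a + m] := by
      have t2 : m - 1 < L.length := by omega
      have t5 : L[m-1] = a + m := by
        rw [List.getD_eq_getElem _ _ t2] at hval
        exact hval
      conv_lhs => rw [show m = (m-1)+1 from by omega, List.take_succ]
      rw [List.getElem?_eq_getElem t2]
      simp only [Option.toList_some]
      rw [t5, hμ]
    rw [e1, e5, e2, e4]
    rw [List.map_append, List.map_replicate]
    simp only [Nat.zero_add]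
    rw [List.append_assoc]
    congr 1
    have t3 : w.length = m - 1 := by rw [hw, List.length_map, hμlen]
    have t4 : ev.length = g.length := by rw [hev, List.length_map]
    rw [t4, t3, ← List.replicate_succ']
    congr 1
    omega
  rw [hν_rec, hW_rec, hν, List.take_append_drop]

end FT

open FT in
/-- Fu–Tang: there is a bijection `φ_a : S_{a,b} → P_{a,b}` with
`|Δ| = 2 |φ_a(Δ)|`. -/
theorem fu_tang_bijection (a b : ℕ) (ha : 0 ≤ a) (hb : 1 ≤ b) :
    ∃ φ : {d : List ℕ // IsABSeq a b d} → {L : List ℕ // InPab a b L},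
      Function.Bijective φ ∧ ∀ Δ : {d : List ℕ // IsABSeq a b d}, Δ.1.sum = 2 * (φ Δ).1.sum := by
  rcases Nat.even_or_odd b with hpar | hpar
  · obtain ⟨m, rfl⟩ : ∃ m, b = 2*m := by
      obtain ⟨k, hk⟩ := hpar
      exact ⟨k, by omega⟩
    have hm : 1 ≤ m := by omega
    refine ⟨fun Δ => ⟨phiE a m Δ.1, (phiE_spec hm Δ.2).1⟩, ?_,
      fun Δ => (phiE_spec hm Δ.2).2.1⟩
    rw [Function.bijective_iff_has_inverse]
    refine ⟨fun L => ⟨psiE a m L.1, (psiE_spec hm L.2).1⟩, ?_, ?_⟩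
    · intro Δ
      exact Subtype.ext (phiE_spec hm Δ.2).2.2
    · intro L
      exact Subtype.ext (psiE_spec hm L.2).2
  · obtain ⟨m, rfl⟩ : ∃ m, b = 2*m-1 := by
      obtain ⟨k, hk⟩ := hpar
      exact ⟨k+1, by omega⟩
    have hm : 1 ≤ m := by omega
    refine ⟨fun Δ => ⟨phiO a m Δ.1, (phiO_spec hm Δ.2).1⟩, ?_,
      fun Δ => (phiO_spec hm Δ.2).2.1⟩
    rw [Function.bijective_iff_has_inverse]
    refine ⟨fun L => ⟨psiO a m L.1, (psiO_spec hm L.2).1⟩, ?_, ?_⟩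
    · intro Δ
      exact Subtype.ext (phiO_spec hm Δ.2).2.2
    · intro L
      exact Subtype.ext (psiO_spec hm L.2).2
end
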